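/- arXiv:1603.05527 — 6 statements merged into one kernel-verified Lean document; each statement's English description precedes it below -/
import Mathlib

section
/- If 0 → T₁ → T₂ → T₃ → 0 is an exact sequence of rational tori (exact as a sequence of abelian groups, with the maps being homomorphisms of rational tori), then the dual sequence 0 → T̂₃ → T̂₂ → T̂₁ → 0 is also exact. -/
open Function

/-- In a `ℚ`-vector space, an element all of whose rational multiples lie in a
finitely generated `ℤ`-submodule must be zero. -/
theorem div_elt_zero {V : Type*} [AddCommGroup V] [Module ℚ V] (M : Submodule ℤ V)
    (hM : M.FG) (v : V) (h : ∀ q : ℚ, q • v ∈ M) : v = 0 := by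
  by_contra hv
  set φ : ℚ →ₗ[ℤ] V := (LinearMap.toSpanSingleton ℚ V v).restrictScalars ℤ with hφ
  set N : Submodule ℤ V := LinearMap.range φ with hN
  have hNM : N ≤ M := by
    rintro _ ⟨q, rfl⟩
    exact h q
  have hNfg : N.FG := by
    haveI := isNoetherian_of_fg_of_noetherian M hM
    have h1 : (N.comap M.subtype).FG := IsNoetherian.noetherian _
    have h2 := h1.map M.subtype
    rwa [Submodule.map_comap_subtype, inf_eq_right.mpr hNM] at h2
  haveI : Module.Finite ℤ ↥N := Module.Finite.iff_fg.mpr hNfg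
  haveI : Module.Free ℤ ↥N := by
    haveI := IsAddTorsionFree.of_module_rat (M := V); exact Module.free_of_finite_type_torsion_free'
  have hvN : v ∈ N := ⟨1, one_smul _ _⟩
  haveI : Nontrivial ↥N := ⟨⟨⟨v, hvN⟩, 0, fun he => hv (by simpa using congrArg Subtype.val he)⟩⟩
  let b := Module.Free.chooseBasis ℤ ↥N
  obtain ⟨i₀⟩ := b.index_nonempty
  obtain ⟨q, hq⟩ : ∃ q : ℚ, φ q = (b i₀ : V) := (b i₀).2
  set n : ↥N := ⟨(q / 2) • v, ⟨q / 2, rfl⟩⟩ with hn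
  have h2 : (2 : ℤ) • n = b i₀ := by
    apply Subtype.ext
    show (2 : ℤ) • ((q / 2) • v) = (b i₀ : V)
    rw [← hq]
    show (2 : ℤ) • ((q / 2) • v) = q • v
    rw [← Int.cast_smul_eq_zsmul ℚ, smul_smul]
    congr 1; ring
  have := congrArg (fun x => b.repr x i₀) h2
  simp only [map_smul, Finsupp.smul_apply, Module.Basis.repr_self, Finsupp.single_eq_same,
    smul_eq_mul] at this
  omega

/-- The dual lattice `Λ̂ = {α ∈ V̂ : α(Λ) ⊆ ℤ}` of a lattice `Λ` in a ℚ-vector space. -/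
def latticeDual' {V : Type} [AddCommGroup V] [Module ℚ V] (Λ : Submodule ℤ V) :
    Submodule ℤ (Module.Dual ℚ V) where
  carrier := {α | ∀ x ∈ Λ, ∃ n : ℤ, α x = (n : ℚ)}
  add_mem' := by
    intro a b ha hb x hx
    obtain ⟨m, hm⟩ := ha x hx
    obtain ⟨n, hn⟩ := hb x hx
    exact ⟨m + n, by simp [hm, hn]⟩
  zero_mem' := by
    intro x hx
    exact ⟨0, by simp⟩
  smul_mem' := by
    intro c a ha x hx
    obtain ⟨n, hn⟩ := ha x hx
    refine ⟨c * n, ?_⟩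
    simp only [LinearMap.smul_apply, hn, zsmul_eq_mul]
    push_cast
    ring

/-- The homomorphism of rational tori `V₁/Λ₁ → V₂/Λ₂` induced by a ℚ-linear map
carrying `Λ₁` into `Λ₂`. -/
def ratTorusMap {V₁ V₂ : Type} [AddCommGroup V₁] [Module ℚ V₁] [AddCommGroup V₂] [Module ℚ V₂]
    (Λ₁ : Submodule ℤ V₁) (Λ₂ : Submodule ℤ V₂) (f : V₁ →ₗ[ℚ] V₂)
    (hf : ∀ x ∈ Λ₁, f x ∈ Λ₂) :
    (V₁ ⧸ Λ₁) →ₗ[ℤ] (V₂ ⧸ Λ₂) :=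
  Submodule.mapQ Λ₁ Λ₂ (f.restrictScalars ℤ) fun x hx => hf x hx

theorem ratTorusMap_apply {V₁ V₂ : Type} [AddCommGroup V₁] [Module ℚ V₁] [AddCommGroup V₂]
    [Module ℚ V₂] (Λ₁ : Submodule ℤ V₁) (Λ₂ : Submodule ℤ V₂) (f : V₁ →ₗ[ℚ] V₂)
    (hf : ∀ x ∈ Λ₁, f x ∈ Λ₂) (x : V₁) :
    ratTorusMap Λ₁ Λ₂ f hf (Submodule.Quotient.mk x) = Submodule.Quotient.mk (f x) := rfl

/-- If `0 → T₁ → T₂ → T₃ → 0` is an exact sequence of rational tori, then the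
dual sequence `0 → T̂₃ → T̂₂ → T̂₁ → 0` is also exact. -/
theorem stmt_1
    (V₁ V₂ V₃ : Type)
    [AddCommGroup V₁] [Module ℚ V₁] [FiniteDimensional ℚ V₁]
    [AddCommGroup V₂] [Module ℚ V₂] [FiniteDimensional ℚ V₂]
    [AddCommGroup V₃] [Module ℚ V₃] [FiniteDimensional ℚ V₃]
    (Λ₁ : Submodule ℤ V₁) (Λ₂ : Submodule ℤ V₂) (Λ₃ : Submodule ℤ V₃)
    (hL₁ : Λ₁.FG ∧ Submodule.span ℚ (Λ₁ : Set V₁) = ⊤)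
    (hL₂ : Λ₂.FG ∧ Submodule.span ℚ (Λ₂ : Set V₂) = ⊤)
    (hL₃ : Λ₃.FG ∧ Submodule.span ℚ (Λ₃ : Set V₃) = ⊤)
    (f : V₁ →ₗ[ℚ] V₂) (g : V₂ →ₗ[ℚ] V₃)
    (hf : ∀ x ∈ Λ₁, f x ∈ Λ₂) (hg : ∀ x ∈ Λ₂, g x ∈ Λ₃)
    (hinj : Injective ⇑(ratTorusMap Λ₁ Λ₂ f hf))
    (hexact : Exact ⇑(ratTorusMap Λ₁ Λ₂ f hf) ⇑(ratTorusMap Λ₂ Λ₃ g hg))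
    (hsurj : Surjective ⇑(ratTorusMap Λ₂ Λ₃ g hg))
    (hgd : ∀ α ∈ latticeDual' Λ₃, g.dualMap α ∈ latticeDual' Λ₂)
    (hfd : ∀ α ∈ latticeDual' Λ₂, f.dualMap α ∈ latticeDual' Λ₁) :
    Injective ⇑(ratTorusMap (latticeDual' Λ₃) (latticeDual' Λ₂) g.dualMap hgd) ∧
    Exact ⇑(ratTorusMap (latticeDual' Λ₃) (latticeDual' Λ₂) g.dualMap hgd)
      ⇑(ratTorusMap (latticeDual' Λ₂) (latticeDual' Λ₁) f.dualMap hfd) ∧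
    Surjective ⇑(ratTorusMap (latticeDual' Λ₂) (latticeDual' Λ₁) f.dualMap hfd) := by

  classical
  obtain ⟨hfg₁, hsp₁⟩ := hL₁
  obtain ⟨hfg₂, hsp₂⟩ := hL₂
  obtain ⟨hfg₃, hsp₃⟩ := hL₃
  -- basic translations
  have happ : ∀ (x : V₁), ratTorusMap Λ₁ Λ₂ f hf (Submodule.Quotient.mk x) =
      Submodule.Quotient.mk (f x) := ratTorusMap_apply _ _ _ _
  have happ' : ∀ (x : V₂), ratTorusMap Λ₂ Λ₃ g hg (Submodule.Quotient.mk x) =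
      Submodule.Quotient.mk (g x) := ratTorusMap_apply _ _ _ _
  have tinj : ∀ x : V₁, f x ∈ Λ₂ → x ∈ Λ₁ := by
    intro x hx
    have h0 : ratTorusMap Λ₁ Λ₂ f hf (Submodule.Quotient.mk x) = 0 := by
      rw [happ]
      exact (Submodule.Quotient.mk_eq_zero _).mpr hx
    have := hinj (h0.trans (map_zero _).symm)
    exact (Submodule.Quotient.mk_eq_zero _).mp this
  -- f is injective
  have fker : ∀ v : V₁, f v = 0 → v = 0 := by
    intro v hv
    refine div_elt_zero Λ₁ hfg₁ v fun q => tinj _ ?_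
    rw [map_smul, hv, smul_zero]
    exact Λ₂.zero_mem
  have finj : Injective f := by
    intro a b hab
    have := fker (a - b) (by rw [map_sub, hab, sub_self])
    exact sub_eq_zero.mp this
  -- g ∘ f = 0
  have hgf : ∀ x : V₁, g (f x) = 0 := by
    intro x
    refine div_elt_zero Λ₃ hfg₃ _ fun q => ?_
    have h0 : ratTorusMap Λ₂ Λ₃ g hg (ratTorusMap Λ₁ Λ₂ f hf (Submodule.Quotient.mk (q • x)))
        = 0 := (hexact _).mpr ⟨_, rfl⟩
    rw [happ, happ'] at h0
    have := (Submodule.Quotient.mk_eq_zero _).mp h0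
    rwa [map_smul, map_smul] at this
  -- kernel of g is the range of f
  have kerg : ∀ v : V₂, g v = 0 → v ∈ LinearMap.range f := by
    intro v hv
    set W : Submodule ℚ V₂ := LinearMap.range f with hW
    have hz : W.mkQ v = 0 := by
      refine div_elt_zero (Λ₂.map (W.mkQ.restrictScalars ℤ)) (hfg₂.map _) _ fun q => ?_
      have h0 : ratTorusMap Λ₂ Λ₃ g hg (Submodule.Quotient.mk (q • v)) = 0 := by
        rw [happ']
        refine (Submodule.Quotient.mk_eq_zero _).mpr ?_
        rw [map_smul, hv, smul_zero]
        exact Λ₃.zero_mem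
      obtain ⟨u, hu⟩ := (hexact _).mp h0
      obtain ⟨x, rfl⟩ := Submodule.Quotient.mk_surjective _ u
      rw [happ] at hu
      have hmem : f x - q • v ∈ Λ₂ := (Submodule.Quotient.eq _).mp hu
      have : W.mkQ (f x - q • v) ∈ Λ₂.map (W.mkQ.restrictScalars ℤ) :=
        ⟨f x - q • v, hmem, rfl⟩
      have hfx : W.mkQ (f x) = 0 := (Submodule.Quotient.mk_eq_zero _).mpr ⟨x, rfl⟩
      rw [map_sub, hfx, zero_sub, map_smul] at this
      simpa using (Λ₂.map (W.mkQ.restrictScalars ℤ)).neg_mem this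
    exact (Submodule.Quotient.mk_eq_zero W).mp hz
  -- g is surjective
  have gsurj : Surjective g := by
    intro v₃
    set W : Submodule ℚ V₃ := LinearMap.range g with hW
    have hz : W.mkQ v₃ = 0 := by
      refine div_elt_zero (Λ₃.map (W.mkQ.restrictScalars ℤ)) (hfg₃.map _) _ fun q => ?_
      obtain ⟨u, hu⟩ := hsurj (Submodule.Quotient.mk (q • v₃))
      obtain ⟨v₂, rfl⟩ := Submodule.Quotient.mk_surjective _ u
      rw [happ'] at hu
      have hmem : g v₂ - q • v₃ ∈ Λ₃ := (Submodule.Quotient.eq _).mp hu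
      have : W.mkQ (g v₂ - q • v₃) ∈ Λ₃.map (W.mkQ.restrictScalars ℤ) :=
        ⟨g v₂ - q • v₃, hmem, rfl⟩
      have hgv : W.mkQ (g v₂) = 0 := (Submodule.Quotient.mk_eq_zero _).mpr ⟨v₂, rfl⟩
      rw [map_sub, hgv, zero_sub, map_smul] at this
      simpa using (Λ₃.map (W.mkQ.restrictScalars ℤ)).neg_mem this
    exact (Submodule.Quotient.mk_eq_zero W).mp hz
  -- every element of Λ₃ lifts to Λ₂
  have lat3 : ∀ x ∈ Λ₃, ∃ y ∈ Λ₂, g y = x := by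
    intro x hx
    obtain ⟨v₂, hv₂⟩ := gsurj x
    have h0 : ratTorusMap Λ₂ Λ₃ g hg (Submodule.Quotient.mk v₂) = 0 := by
      rw [happ', hv₂]
      exact (Submodule.Quotient.mk_eq_zero _).mpr hx
    obtain ⟨u, hu⟩ := (hexact _).mp h0
    obtain ⟨x₁, rfl⟩ := Submodule.Quotient.mk_surjective _ u
    rw [happ] at hu
    have hmem : f x₁ - v₂ ∈ Λ₂ := (Submodule.Quotient.eq _).mp hu
    refine ⟨v₂ - f x₁, by simpa using Λ₂.neg_mem hmem, ?_⟩
    rw [map_sub, hgf, sub_zero, hv₂]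
  refine ⟨?_, ?_, ?_⟩
  · -- injectivity of the dual of g
    have key : ∀ a, ratTorusMap (latticeDual' Λ₃) (latticeDual' Λ₂) g.dualMap hgd a = 0
        → a = 0 := by
      intro a ha
      obtain ⟨α₃, rfl⟩ := Submodule.Quotient.mk_surjective _ a
      rw [ratTorusMap_apply] at ha
      have hmem := (Submodule.Quotient.mk_eq_zero _).mp ha
      refine (Submodule.Quotient.mk_eq_zero _).mpr ?_
      intro x hx
      obtain ⟨y, hy, rfl⟩ := lat3 x hx
      obtain ⟨n, hn⟩ := hmem y hy
      exact ⟨n, hn⟩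
    intro a b hab
    have := key (a - b) (by rw [map_sub, hab, sub_self])
    exact sub_eq_zero.mp this
  · -- exactness in the middle
    intro y
    constructor
    · -- kernel ⊆ range : the hard direction
      intro hy
      obtain ⟨α₂, rfl⟩ := Submodule.Quotient.mk_surjective _ y
      rw [ratTorusMap_apply] at hy
      have hφ : f.dualMap α₂ ∈ latticeDual' Λ₁ := (Submodule.Quotient.mk_eq_zero _).mp hy
      -- instances on the lattices
      haveI h2fin : Module.Finite ℤ ↥Λ₂ := Module.Finite.iff_fg.mpr hfg₂
      haveI h3fin : Module.Finite ℤ ↥Λ₃ := Module.Finite.iff_fg.mpr hfg₃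
      haveI : Module.Free ℤ ↥Λ₂ := by
        haveI := IsAddTorsionFree.of_module_rat (M := V₂); exact Module.free_of_finite_type_torsion_free'
      haveI : Module.Free ℤ ↥Λ₃ := by
        haveI := IsAddTorsionFree.of_module_rat (M := V₃); exact Module.free_of_finite_type_torsion_free'
      -- the restriction of g to the lattices, and a splitting of it
      set G₀ : ↥Λ₂ →ₗ[ℤ] ↥Λ₃ :=
        LinearMap.codRestrict Λ₃ ((g.restrictScalars ℤ).domRestrict Λ₂)
          (fun x => hg x x.2) with hG₀def
      have hG₀ : ∀ w : ↥Λ₂, (G₀ w : V₃) = g (w : V₂) := fun _ => rfl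
      have G₀surj : Surjective G₀ := by
        intro z
        obtain ⟨y, hy, hgy⟩ := lat3 (z : V₃) z.2
        exact ⟨⟨y, hy⟩, Subtype.ext (by simpa [hG₀] using hgy)⟩
      obtain ⟨s, hs⟩ := Module.projective_lifting_property G₀ LinearMap.id G₀surj
      have hsG : ∀ z : ↥Λ₃, G₀ (s z) = z := fun z => LinearMap.congr_fun hs z
      -- a ℤ-basis of Λ₂ which is also a ℚ-basis of V₂
      let b := Module.Free.chooseBasis ℤ ↥Λ₂
      have libz : LinearIndependent ℤ (fun i => ((b i : V₂))) :=
        b.linearIndependent.map' Λ₂.subtype Λ₂.ker_subtype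
      have libq : LinearIndependent ℚ (fun i => ((b i : V₂))) :=
        (LinearIndependent.iff_fractionRing ℤ ℚ).mp libz
      have hspanc : ⊤ ≤ Submodule.span ℚ (Set.range (fun i => ((b i : V₂)))) := by
        rw [← hsp₂]
        refine Submodule.span_le.mpr fun x hx => ?_
        have hx' : (⟨x, hx⟩ : ↥Λ₂) ∈ (⊤ : Submodule ℤ ↥Λ₂) := trivial
        rw [← b.span_eq] at hx'
        have hmap := Submodule.mem_map_of_mem (f := Λ₂.subtype) hx'
        rw [Submodule.map_span] at hmap
        have hmem2 : x ∈ Submodule.span ℤ (Set.range (fun i => ((b i : V₂)))) := by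
          convert hmap using 2
          rw [← Set.range_comp]
          rfl
          rfl
        exact Submodule.span_subset_span ℤ ℚ _ hmem2
      let B : Module.Basis (Module.Free.ChooseBasisIndex ℤ ↥Λ₂) ℚ V₂ := Module.Basis.mk libq hspanc
      -- the correcting functional β
      set β : Module.Dual ℚ V₂ :=
        B.constr ℚ (fun i => α₂ ((b i : V₂) - ((s (G₀ (b i)) : ↥Λ₂) : V₂))) with hβdef
      have hβ : ∀ w : ↥Λ₂, β (w : V₂) = α₂ ((w : V₂) - ((s (G₀ w) : ↥Λ₂) : V₂)) := by
        have key : ∀ i, β ((b i : V₂)) = α₂ ((b i : V₂) - ((s (G₀ (b i)) : ↥Λ₂) : V₂)) := by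
          intro i
          have hBi : ((b i : V₂)) = B i := (Module.Basis.mk_apply libq hspanc i).symm
          conv_lhs => rw [hBi]
          exact B.constr_basis ℚ _ i
        have hLL : (β.restrictScalars ℤ) ∘ₗ Λ₂.subtype =
            (α₂.restrictScalars ℤ) ∘ₗ (Λ₂.subtype - Λ₂.subtype ∘ₗ (s ∘ₗ G₀)) :=
          b.ext fun i => by simpa using key i
        intro w
        simpa using LinearMap.congr_fun hLL w
      -- β agrees with α₂ on the range of f
      have hβf : ∀ x : V₁, β (f x) = α₂ (f x) := by
        have hagree : ∀ lam ∈ Λ₁, (β ∘ₗ f - α₂ ∘ₗ f) lam = 0 := by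
          intro lam hlam
          have hw := hβ ⟨f lam, hf lam hlam⟩
          have hz : G₀ ⟨f lam, hf lam hlam⟩ = 0 := Subtype.ext (by simpa [hG₀] using hgf lam)
          rw [hz, map_zero] at hw
          simp only [ZeroMemClass.coe_zero, sub_zero] at hw
          simp [LinearMap.sub_apply, hw]
        have hker : Submodule.span ℚ (Λ₁ : Set V₁) ≤ LinearMap.ker (β ∘ₗ f - α₂ ∘ₗ f) :=
          Submodule.span_le.mpr fun x hx => hagree x hx
        rw [hsp₁] at hker
        intro x
        have hx0 := hker (Submodule.mem_top : x ∈ (⊤ : Submodule ℚ V₁))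
        rw [LinearMap.mem_ker, LinearMap.sub_apply, LinearMap.comp_apply, LinearMap.comp_apply,
          sub_eq_zero] at hx0
        exact hx0
      -- β is integral on Λ₂
      have hβΛ : β ∈ latticeDual' Λ₂ := by
        intro x hx
        have hw : β x = α₂ (x - ((s (G₀ ⟨x, hx⟩) : ↥Λ₂) : V₂)) := hβ ⟨x, hx⟩
        have h1 : g ((s (G₀ ⟨x, hx⟩) : ↥Λ₂) : V₂) = ((G₀ ⟨x, hx⟩ : ↥Λ₃) : V₃) := by
          rw [← hG₀ (s (G₀ ⟨x, hx⟩)), hsG]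
        have hgw : g (x - ((s (G₀ ⟨x, hx⟩) : ↥Λ₂) : V₂)) = 0 := by
          rw [map_sub, h1]
          exact sub_self _
        obtain ⟨x₀, hx₀⟩ := kerg _ hgw
        have hw'Λ : x - ((s (G₀ ⟨x, hx⟩) : ↥Λ₂) : V₂) ∈ Λ₂ :=
          sub_mem hx (s (G₀ ⟨x, hx⟩)).2
        have hx₀Λ : x₀ ∈ Λ₁ := tinj x₀ (by rw [hx₀]; exact hw'Λ)
        obtain ⟨n, hn⟩ := hφ x₀ hx₀Λ
        refine ⟨n, ?_⟩
        rw [LinearMap.dualMap_apply] at hn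
        rw [hw, ← hx₀, hn]
      -- construct α₃ with g.dualMap α₃ = α₂ - β
      obtain ⟨t, ht⟩ := g.exists_rightInverse_of_surjective (LinearMap.range_eq_top.mpr gsurj)
      set α₃ : Module.Dual ℚ V₃ := (α₂ - β) ∘ₗ t with hα₃def
      have hga : g.dualMap α₃ = α₂ - β := by
        ext v
        have hgu : g (t (g v) - v) = 0 := by
          have h1 := LinearMap.congr_fun ht (g v)
          rw [LinearMap.comp_apply, LinearMap.id_apply] at h1
          rw [map_sub, h1, sub_self]
        obtain ⟨x, hx⟩ := kerg _ hgu
        have htv : t (g v) = v + f x := by rw [hx]; abel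
        rw [LinearMap.dualMap_apply, hα₃def, LinearMap.comp_apply, htv, map_add]
        have hz : (α₂ - β) (f x) = 0 := by
          rw [LinearMap.sub_apply, hβf x, sub_self]
        rw [hz, add_zero]
      refine ⟨Submodule.Quotient.mk α₃, ?_⟩
      rw [ratTorusMap_apply, Submodule.Quotient.eq, hga]
      have hnb : α₂ - β - α₂ = -β := by abel
      rw [hnb]
      exact (latticeDual' Λ₂).neg_mem hβΛ

    · rintro ⟨u, rfl⟩
      obtain ⟨α₃, rfl⟩ := Submodule.Quotient.mk_surjective _ u
      rw [ratTorusMap_apply, ratTorusMap_apply]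
      refine (Submodule.Quotient.mk_eq_zero _).mpr ?_
      have : f.dualMap (g.dualMap α₃) = 0 := by
        ext v
        simp [LinearMap.dualMap_apply, hgf v]
      rw [this]
      exact (latticeDual' Λ₁).zero_mem
  · -- surjectivity of the dual of f
    intro y
    obtain ⟨α₁, rfl⟩ := Submodule.Quotient.mk_surjective _ y
    obtain ⟨l, hl⟩ := f.exists_leftInverse_of_injective (LinearMap.ker_eq_bot.mpr finj)
    refine ⟨Submodule.Quotient.mk (α₁.comp l), ?_⟩
    rw [ratTorusMap_apply]
    congr 1
    ext v
    simp only [LinearMap.dualMap_apply, LinearMap.comp_apply]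
    rw [show l (f v) = v from LinearMap.congr_fun hl v]
end

section
/- Let Λ̄ be a free ℤ-module of rank n, let Λ ≤ Λ̄ be a submodule of the same rank n, and let d₁ | d₂ | ⋯ | d_n be the elementary divisors of Λ in Λ̄. Suppose λ̄₁,…,λ̄_n ∈ Λ̄ are such that Λ̄/Λ is the internal direct sum of the cyclic subgroups generated by the classes [λ̄₁],…,[λ̄_n], with [λ̄_i] of order d_i. Then there exists a ℤ-basis (λ₁,…,λ_n) of Λ such that for every i ∈ {1,…,n} one can choose a representative λ̄′_i ∈ λ̄_i + Λ with d_i·λ̄′_i = a_i·λ_i for some natural number a_i satisfying a_i ≤ d_i and gcd(a_i,d_i) = 1. -/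
set_option maxHeartbeats 1000000 in
theorem stmt_aux : ∀ (n : ℕ) (M : Type) [AddCommGroup M]
    (bbar : Module.Basis (Fin n) ℤ M) (Λ : Submodule ℤ M)
    (d : Fin n → ℕ), (∀ i, 0 < d i) → (∀ i j : Fin n, i ≤ j → d i ∣ d j) →
    ∀ (lam : Fin n → M),
    (∀ x : M, ∃ c : Fin n → ℤ, x - ∑ i, c i • lam i ∈ Λ) →
    (∀ c : Fin n → ℤ, ((∑ i, c i • lam i) ∈ Λ ↔ ∀ i, (d i : ℤ) ∣ c i)) →
    ∃ lamB : Module.Basis (Fin n) ℤ ↥Λ, ∀ i, ∃ y : M, y - lam i ∈ Λ ∧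
      ∃ a : ℕ, a ≤ d i ∧ Nat.gcd a (d i) = 1 ∧ (d i : ℤ) • y = (a : ℤ) • (lamB i : M) := by
  intro n
  induction n with
  | zero =>
    intro M _ bbar Λ d hdpos hdvd lam hspan hrel
    haveI : Subsingleton M := ⟨fun x y => bbar.repr.injective (Subsingleton.elim _ _)⟩
    exact ⟨Module.Basis.empty ↥Λ, fun i => i.elim0⟩
  | succ n ih =>
    intro M _ bbar Λ d hdpos hdvd lam hspan hrel
    set lst := Fin.last n with hlst
    by_cases he1 : d lst = 1
    · -- all d i = 1, Λ = ⊤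
      have hd1 : ∀ i, d i = 1 := fun i => Nat.dvd_one.mp (he1 ▸ hdvd i lst (Fin.le_last i))
      have htop : Λ = ⊤ := by
        rw [eq_top_iff]
        intro x _
        obtain ⟨c, hc⟩ := hspan x
        have h2 : (∑ i, c i • lam i) ∈ Λ := (hrel c).mpr (fun i => by rw [hd1 i]; exact one_dvd _)
        have := Submodule.add_mem Λ hc h2
        simpa using this
      have eqv : M ≃ₗ[ℤ] ↥Λ := Submodule.topEquiv.symm.trans (LinearEquiv.ofEq ⊤ Λ htop.symm)
      refine ⟨bbar.map eqv, fun i => ⟨((bbar.map eqv) i : M), ?_, 1, hdpos i, Nat.gcd_one_left _, ?_⟩⟩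
      · exact Submodule.eq_top_iff'.mp htop _
      · rw [hd1 i]
    · -- main case
      have he2 : 2 ≤ d lst := by have := hdpos lst; omega
      have hcj : ∀ j, ∃ c : Fin (n+1) → ℤ, bbar j - ∑ i, c i • lam i ∈ Λ := fun j => hspan (bbar j)
      choose cj hcjm using hcj
      set eZ : ℤ := (d lst : ℤ) with heZ
      set φ : M →ₗ[ℤ] ℤ := bbar.constr ℤ (fun j => cj j lst) with hφ
      have hφb : ∀ j, φ (bbar j) = cj j lst := fun j => bbar.constr_basis ℤ _ j
      -- key congruence
      have hφx : ∀ (x : M) (c : Fin (n+1) → ℤ), x - ∑ i, c i • lam i ∈ Λ →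
          eZ ∣ (φ x - c lst) := by
        intro x c hx
        set cs : Fin (n+1) → ℤ := fun i => ∑ j, bbar.repr x j * cj j i with hcs
        have hxs : x - ∑ i, cs i • lam i ∈ Λ := by
          have h1 : ∀ j : Fin (n+1), bbar.repr x j • (bbar j - ∑ i, cj j i • lam i)
              = bbar.repr x j • bbar j - ∑ i, (bbar.repr x j * cj j i) • lam i := by
            intro j
            rw [smul_sub, Finset.smul_sum]
            simp_rw [smul_smul]
          have hsum : x - ∑ i, cs i • lam i
              = ∑ j, bbar.repr x j • (bbar j - ∑ i, cj j i • lam i) := by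
            simp_rw [h1]
            rw [Finset.sum_sub_distrib, bbar.sum_repr, Finset.sum_comm]
            congr 1
            refine Finset.sum_congr rfl (fun i _ => ?_)
            rw [← Finset.sum_smul]
          rw [hsum]
          exact Submodule.sum_mem Λ (fun j _ => Submodule.smul_mem Λ _ (hcjm j))
        have hmem : (∑ i, (cs i - c i) • lam i) ∈ Λ := by
          have h2 : ∑ i, (cs i - c i) • lam i
              = (x - ∑ i, c i • lam i) - (x - ∑ i, cs i • lam i) := by
            simp_rw [sub_smul]
            rw [Finset.sum_sub_distrib]
            abel
          rw [h2]
          exact Submodule.sub_mem Λ hx hxs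
        have hdvd2 := (hrel _).mp hmem lst
        have hφxval : φ x = cs lst := by
          conv_lhs => rw [← bbar.sum_repr x]
          rw [map_sum]
          simp only [map_smul, hφb, smul_eq_mul]
          rfl
        rw [hφxval]
        exact hdvd2
      -- single sums
      have hsingle : ∀ (i₀ : Fin (n+1)) (t : ℤ), (∑ i, (Pi.single i₀ t : Fin (n+1) → ℤ) i • lam i) = t • lam i₀ := by
        intro i₀ t
        rw [Finset.sum_eq_single i₀]
        · rw [Pi.single_eq_same]
        · intro b _ hb
          rw [Pi.single_eq_of_ne hb, zero_smul]
        · intro h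
          exact absurd (Finset.mem_univ i₀) h
      have hφΛ : ∀ x ∈ Λ, eZ ∣ φ x := by
        intro x hx
        have h0 := hφx x 0 (by simpa using hx)
        simpa using h0
      set m : ℤ := φ (lam lst) with hm
      have hm1 : eZ ∣ m - 1 := by
        have := hφx (lam lst) (Pi.single lst 1) (by rw [hsingle, one_smul, sub_self]; exact Submodule.zero_mem Λ)
        simpa using this
      have hφlamC : ∀ j : Fin n, eZ ∣ φ (lam j.castSucc) := by
        intro j
        have := hφx (lam j.castSucc) (Pi.single j.castSucc 1)
          (by rw [hsingle, one_smul, sub_self]; exact Submodule.zero_mem Λ)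
        have hne : lst ≠ j.castSucc := (Fin.castSucc_lt_last j).ne'
        rw [Pi.single_eq_of_ne hne, sub_zero] at this
        exact this
      have heZ2 : (2:ℤ) ≤ eZ := by rw [heZ]; exact_mod_cast he2
      have hmne : m ≠ 0 := by
        intro h0
        rw [h0, zero_sub] at hm1
        have h1 : eZ ∣ 1 := dvd_neg.mp hm1
        have := Int.le_of_dvd one_pos h1
        omega
      -- generator of range of φ
      obtain ⟨g, hgpos, hgdvd, u, hu⟩ : ∃ g : ℤ, 0 < g ∧ (∀ x : M, g ∣ φ x) ∧ ∃ u : M, φ u = g := by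
        set R := LinearMap.range φ with hR
        have hprin : Submodule.IsPrincipal R := inferInstance
        set g₀ := Submodule.IsPrincipal.generator R with hg₀
        have hgen : Submodule.span ℤ {g₀} = R := Submodule.IsPrincipal.span_singleton_generator R
        have hdvd0 : ∀ x : M, g₀ ∣ φ x := by
          intro x
          have hx : φ x ∈ R := LinearMap.mem_range_self φ x
          rw [← hgen] at hx
          obtain ⟨c, hc⟩ := Submodule.mem_span_singleton.mp hx
          exact Dvd.intro_left c (by rw [← hc]; rfl)
        have hmem : g₀ ∈ R := Submodule.IsPrincipal.generator_mem R
        obtain ⟨u₀, hu₀⟩ := hmem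
        have hg₀ne : g₀ ≠ 0 := by
          intro h0
          exact hmne (by simpa [h0] using hdvd0 (lam lst))
        rcases lt_or_gt_of_ne hg₀ne with h | h
        · exact ⟨-g₀, by omega, fun x => (neg_dvd).mpr (hdvd0 x), -u₀, by rw [map_neg, hu₀]⟩
        · exact ⟨g₀, h, hdvd0, u₀, hu₀⟩
      have hgm : g ∣ m := hgdvd (lam lst)
      have hcop_eg : IsCoprime eZ g := by
        rw [Int.isCoprime_iff_gcd_eq_one]
        have h1 : (↑(Int.gcd eZ g) : ℤ) ∣ m - 1 := dvd_trans (Int.gcd_dvd_left _ _) hm1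
        have h2 : (↑(Int.gcd eZ g) : ℤ) ∣ m := dvd_trans (Int.gcd_dvd_right _ _) hgm
        have h3 : (↑(Int.gcd eZ g) : ℤ) ∣ 1 := by
          have := dvd_sub h2 h1
          simpa using this
        have h4 : Int.gcd eZ g ∣ 1 := by exact_mod_cast h3
        exact Nat.dvd_one.mp h4
      have hegdvd : ∀ x ∈ Λ, (eZ * g) ∣ φ x := fun x hx => hcop_eg.mul_dvd (hφΛ x hx) (hgdvd x)
      have hegpos : 0 < eZ * g := by positivity
      have hLe : ∀ x : M, eZ • x ∈ Λ := by
        intro x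
        obtain ⟨c, hc⟩ := hspan x
        have h1 : (∑ i, (eZ * c i) • lam i) ∈ Λ := by
          refine (hrel _).mpr (fun i => ?_)
          have : (d i : ℤ) ∣ eZ := by rw [heZ]; exact_mod_cast hdvd i lst (Fin.le_last i)
          exact Dvd.dvd.mul_right this (c i)
        have h2 : eZ • x = (∑ i, (eZ * c i) • lam i) + eZ • (x - ∑ i, c i • lam i) := by
          rw [smul_sub]
          simp_rw [mul_smul, ← Finset.smul_sum]
          abel
        rw [h2]
        exact Submodule.add_mem Λ h1 (Submodule.smul_mem Λ _ hc)
      set w : M := eZ • u with hw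
      have hwΛ : w ∈ Λ := hLe u
      have hφw : φ w = eZ * g := by rw [hw, map_smul, hu, smul_eq_mul]
      set m₀ : ℤ := m % (eZ * g) with hm₀
      set q : ℤ := m / (eZ * g) with hqdef
      have hq : m₀ = m - eZ * g * q := Int.emod_def m (eZ * g)
      have hm₀nonneg : 0 ≤ m₀ := Int.emod_nonneg m (ne_of_gt hegpos)
      have hm₀lt : m₀ < eZ * g := Int.emod_lt_of_pos m hegpos
      have hm₀1 : eZ ∣ m₀ - 1 := by
        have h1 : m₀ - 1 = (m - 1) - eZ * (g * q) := by rw [hq]; ring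
        rw [h1]
        exact dvd_sub hm1 (Dvd.intro _ rfl)
      have hgm₀ : g ∣ m₀ := by
        rw [hq]
        exact dvd_sub hgm ⟨eZ * q, by ring⟩
      set a : ℤ := m₀ / g with hadef
      have hag : g * a = m₀ := Int.mul_ediv_cancel' hgm₀
      have ha0 : 0 ≤ a := Int.ediv_nonneg hm₀nonneg (le_of_lt hgpos)
      have halt : a < eZ := by nlinarith [hag, hm₀lt, hgpos]
      have hcopaE : Int.gcd a eZ = 1 := by
        have h1 : (↑(Int.gcd a eZ) : ℤ) ∣ m₀ := by
          rw [← hag]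
          exact Dvd.dvd.mul_left (Int.gcd_dvd_left _ _) g
        have h2 : (↑(Int.gcd a eZ) : ℤ) ∣ m₀ - 1 := dvd_trans (Int.gcd_dvd_right _ _) hm₀1
        have h3 : (↑(Int.gcd a eZ) : ℤ) ∣ 1 := by
          have := dvd_sub h1 h2
          simpa using this
        have h4 : Int.gcd a eZ ∣ 1 := by exact_mod_cast h3
        exact Nat.dvd_one.mp h4
      -- the corrected last lam
      set lamst : M := lam lst - q • w with hlamst
      have hφlamst : φ lamst = m₀ := by
        rw [hlamst, map_sub, map_smul, hφw, smul_eq_mul, hq]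
        ring
      have hlamstd : lamst - lam lst ∈ Λ := by
        rw [hlamst]
        have : lam lst - q • w - lam lst = -(q • w) := by abel
        rw [this]
        exact Submodule.neg_mem Λ (Submodule.smul_mem Λ _ hwΛ)
      have helamlst : eZ • lam lst ∈ Λ := by
        have := (hrel (Pi.single lst eZ)).mpr (fun i => by
          rcases eq_or_ne i lst with h | h
          · rw [h, Pi.single_eq_same]
          · rw [Pi.single_eq_of_ne h]; exact dvd_zero _)
        rwa [hsingle] at this
      have helamst : eZ • lamst ∈ Λ := by
        rw [hlamst, smul_sub]
        exact Submodule.sub_mem Λ helamlst (by rw [smul_comm]; exact Submodule.smul_mem Λ _ (hLe w))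
      -- the kernel K of φ and the decomposition M ≃ K × ℤ
      have hψdvd : ∀ x : M, g ∣ φ x := hgdvd
      set ψ : M →ₗ[ℤ] ℤ :=
        { toFun := fun x => φ x / g
          map_add' := fun x y => by
            show φ (x + y) / g = φ x / g + φ y / g
            rw [map_add, Int.add_ediv_of_dvd_left (hgdvd x)]
          map_smul' := fun c x => by
            show φ (c • x) / g = c • (φ x / g)
            rw [map_smul, smul_eq_mul, smul_eq_mul, Int.mul_ediv_assoc c (hgdvd x)] } with hψ
      have hψu : ψ u = 1 := by
        show φ u / g = 1
        rw [hu, Int.ediv_self (ne_of_gt hgpos)]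
      have hψgφ : ∀ x : M, g * ψ x = φ x := fun x => Int.mul_ediv_cancel' (hgdvd x)
      set σ : M →ₗ[ℤ] M := LinearMap.id - (LinearMap.toSpanSingleton ℤ M u).comp ψ with hσ
      have hσmem : ∀ x : M, σ x ∈ LinearMap.ker φ := by
        intro x
        rw [LinearMap.mem_ker]
        show φ (x - ψ x • u) = 0
        rw [map_sub, map_smul, hu, smul_eq_mul, ← hψgφ x, mul_comm]
        ring
      set π : M →ₗ[ℤ] ↥(LinearMap.ker φ) := LinearMap.codRestrict (LinearMap.ker φ) σ hσmem with hπ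
      set EM : M ≃ₗ[ℤ] ↥(LinearMap.ker φ) × ℤ := LinearEquiv.ofLinear (LinearMap.prod π ψ)
        (LinearMap.coprod (LinearMap.ker φ).subtype (LinearMap.toSpanSingleton ℤ M u))
        (by
          apply LinearMap.ext
          rintro ⟨k, s⟩
          have hk : φ (k : M) = 0 := k.2
          have h1 : ψ ((k : M) + s • u) = s := by
            show φ ((k:M) + s • u) / g = s
            rw [map_add, map_smul, hk, hu, zero_add, smul_eq_mul, Int.mul_ediv_cancel _ (ne_of_gt hgpos)]
          apply Prod.ext
          · apply Subtype.ext
            show ((k : M) + s • u) - ψ ((k:M) + s • u) • u = (k : M)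
            rw [h1]
            abel
          · exact h1)
        (by
          apply LinearMap.ext
          intro x
          show ((x - ψ x • u) + ψ x • u) = x
          abel) with hEM
      obtain ⟨nK, bK0⟩ := Submodule.basisOfPid bbar (LinearMap.ker φ)
      have hf1 : Module.finrank ℤ M = n + 1 := by
        rw [Module.finrank_eq_card_basis bbar, Fintype.card_fin]
      haveI : Module.Free ℤ ↥(LinearMap.ker φ) := Module.Free.of_basis bK0
      haveI : Module.Finite ℤ ↥(LinearMap.ker φ) := Module.Finite.of_basis bK0
      have hf2 : Module.finrank ℤ (↥(LinearMap.ker φ) × ℤ) = Module.finrank ℤ ↥(LinearMap.ker φ) + 1 := by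
        rw [Module.finrank_prod, Module.finrank_self]
      have hf3 : Module.finrank ℤ M = Module.finrank ℤ (↥(LinearMap.ker φ) × ℤ) := EM.finrank_eq
      have hfK : Module.finrank ℤ ↥(LinearMap.ker φ) = nK := by
        rw [Module.finrank_eq_card_basis bK0, Fintype.card_fin]
      have hnK : nK = n := by omega
      set bK : Module.Basis (Fin n) ℤ ↥(LinearMap.ker φ) := bK0.reindex (finCongr hnK) with hbK
      -- corrected lams inside K
      have hegdvdlam : ∀ j : Fin n, (eZ * g) ∣ φ (lam j.castSucc) :=
        fun j => hcop_eg.mul_dvd (hφlamC j) (hgdvd _)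
      set lamK : Fin n → ↥(LinearMap.ker φ) := fun j =>
        ⟨lam j.castSucc - (φ (lam j.castSucc) / (eZ * g)) • w, by
          rw [LinearMap.mem_ker, map_sub, map_smul, hφw, smul_eq_mul,
            Int.ediv_mul_cancel (hegdvdlam j), sub_self]⟩ with hlamK
      have hlamKd : ∀ j : Fin n, (lamK j : M) - lam j.castSucc ∈ Λ := by
        intro j
        have : (lamK j : M) - lam j.castSucc = -((φ (lam j.castSucc) / (eZ * g)) • w) := by
          rw [hlamK]; exact sub_sub_cancel_left _ _
        rw [this]
        exact Submodule.neg_mem Λ (Submodule.smul_mem Λ _ hwΛ)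
      set ΛK : Submodule ℤ ↥(LinearMap.ker φ) := Λ.comap (LinearMap.ker φ).subtype with hΛK
      have hmemΛK : ∀ (x : ↥(LinearMap.ker φ)), x ∈ ΛK ↔ (x : M) ∈ Λ := fun x => Iff.rfl
      have hφlamKzero : ∀ j : Fin n, φ ((lamK j : M)) = 0 := fun j => (lamK j).2
      have hIsCopaE : IsCoprime a eZ := Int.isCoprime_iff_gcd_eq_one.mpr hcopaE
      clear hf3 hf2
      clear_value EM
      clear hEM EM
      clear_value π
      clear π hπ
      clear_value bK lamK ΛK lamst a q m₀ w σ ψ φ m eZ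
      clear hσ hψ hφ hq hm hqdef hm₀ hadef hw hlamK hbK
      -- key divisibility transfer: if an element of Λ is built from lamK's and lamst
      have hlast_dvd : ∀ (t : ℤ), (eZ * g) ∣ t * m₀ → eZ ∣ t := by
        intro t ht
        rw [← hag] at ht
        have h1 : g * eZ ∣ g * (t * a) := by
          calc g * eZ = eZ * g := mul_comm _ _
          _ ∣ t * (g * a) := ht
          _ = g * (t * a) := by ring
        have h2 : eZ ∣ t * a := (mul_dvd_mul_iff_left (ne_of_gt hgpos)).mp h1
        exact (hIsCopaE.symm).dvd_of_dvd_mul_right h2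
      -- hspan for K
      have hspanK : ∀ x : ↥(LinearMap.ker φ), ∃ c : Fin n → ℤ,
          x - ∑ j, c j • lamK j ∈ ΛK := by
        intro x
        obtain ⟨c, hc⟩ := hspan (x : M)
        refine ⟨fun j => c j.castSucc, ?_⟩
        rw [hmemΛK]
        have hcoe : ((x - ∑ j, (fun j => c j.castSucc) j • lamK j : ↥(LinearMap.ker φ)) : M)
            = (x : M) - ∑ j : Fin n, c j.castSucc • (lamK j : M) := by
          simp only [AddSubgroupClass.coe_sub, AddSubmonoidClass.coe_finset_sum, SetLike.val_smul]
        rw [hcoe]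
        -- difference between original sum and modified sum is in Λ
        have hdiff : (∑ i, c i • lam i) - (∑ j : Fin n, c j.castSucc • (lamK j : M) + c lst • lamst) ∈ Λ := by
          rw [Fin.sum_univ_castSucc (f := fun i => c i • lam i)]
          have heq : (∑ j : Fin n, c j.castSucc • lam j.castSucc + c lst • lam lst)
              - (∑ j : Fin n, c j.castSucc • (lamK j : M) + c lst • lamst)
              = ∑ j : Fin n, c j.castSucc • (lam j.castSucc - (lamK j : M)) + c lst • (lam lst - lamst) := by
            simp_rw [smul_sub]
            rw [Finset.sum_sub_distrib]
            abel
          rw [heq]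
          refine Submodule.add_mem Λ (Submodule.sum_mem Λ (fun j _ => Submodule.smul_mem Λ _ ?_)) (Submodule.smul_mem Λ _ ?_)
          · have h5 := Submodule.neg_mem Λ (hlamKd j)
            simpa using h5
          · have h5 := Submodule.neg_mem Λ hlamstd
            simpa using h5
        have hmem2 : (x : M) - (∑ j : Fin n, c j.castSucc • (lamK j : M) + c lst • lamst) ∈ Λ := by
          have heq2 : (x : M) - (∑ j : Fin n, c j.castSucc • (lamK j : M) + c lst • lamst)
              = ((x : M) - ∑ i, c i • lam i) + ((∑ i, c i • lam i) - (∑ j : Fin n, c j.castSucc • (lamK j : M) + c lst • lamst)) := by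
            abel
          rw [heq2]
          exact Submodule.add_mem Λ hc hdiff
        -- φ of that element is -(c lst * m₀)
        have hφmem2 : φ ((x : M) - (∑ j : Fin n, c j.castSucc • (lamK j : M) + c lst • lamst))
            = -(c lst * m₀) := by
          rw [map_sub, map_add, map_sum, map_smul]
          have hx0 : φ (x : M) = 0 := x.2
          simp only [map_smul, hφlamKzero, smul_eq_mul, mul_zero, Finset.sum_const_zero, hφlamst]
          rw [hx0]
          ring
        have hdvd5 : (eZ * g) ∣ c lst * m₀ := by
          have h6 := hegdvd _ hmem2
          rw [hφmem2, dvd_neg] at h6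
          exact h6
        have hdvd6 : eZ ∣ c lst := hlast_dvd _ hdvd5
        obtain ⟨k, hk⟩ := hdvd6
        have hlstmem : c lst • lamst ∈ Λ := by
          rw [hk, mul_comm, mul_smul]
          exact Submodule.smul_mem Λ _ helamst
        have heq3 : (x : M) - ∑ j : Fin n, c j.castSucc • (lamK j : M)
            = ((x : M) - (∑ j : Fin n, c j.castSucc • (lamK j : M) + c lst • lamst)) + c lst • lamst := by
          abel
        rw [heq3]
        exact Submodule.add_mem Λ hmem2 hlstmem
      -- hrel for K
      have hsumKcoe : ∀ (c : Fin n → ℤ), ((∑ j, c j • lamK j : ↥(LinearMap.ker φ)) : M)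
          = ∑ j : Fin n, c j • (lamK j : M) := by
        intro c
        simp only [AddSubmonoidClass.coe_finset_sum, SetLike.val_smul]
      have hsumdiff : ∀ (c : Fin n → ℤ), (∑ j : Fin n, c j • (lamK j : M)) - (∑ j : Fin n, c j • lam j.castSucc) ∈ Λ := by
        intro c
        have heq : (∑ j : Fin n, c j • (lamK j : M)) - (∑ j : Fin n, c j • lam j.castSucc)
            = ∑ j : Fin n, c j • ((lamK j : M) - lam j.castSucc) := by
          simp_rw [smul_sub]
          rw [Finset.sum_sub_distrib]
        rw [heq]
        exact Submodule.sum_mem Λ (fun j _ => Submodule.smul_mem Λ _ (hlamKd j))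
      have hsnocsum : ∀ (c : Fin n → ℤ), (∑ i, (Fin.snoc c 0 : Fin (n+1) → ℤ) i • lam i)
          = ∑ j : Fin n, c j • lam j.castSucc := by
        intro c
        rw [Fin.sum_univ_castSucc (f := fun i => (Fin.snoc c 0 : Fin (n+1) → ℤ) i • lam i)]
        simp [Fin.snoc_castSucc, Fin.snoc_last]
      have hrelK : ∀ c : Fin n → ℤ, (∑ j, c j • lamK j) ∈ ΛK ↔ ∀ j, ((d j.castSucc : ℤ)) ∣ c j := by
        intro c
        constructor
        · intro h
          have h1 : (∑ j : Fin n, c j • (lamK j : M)) ∈ Λ := by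
            have := (hmemΛK _).mp h
            rwa [hsumKcoe] at this
          have h2 : (∑ i, (Fin.snoc c 0 : Fin (n+1) → ℤ) i • lam i) ∈ Λ := by
            rw [hsnocsum]
            have heq : (∑ j : Fin n, c j • lam j.castSucc)
                = (∑ j : Fin n, c j • (lamK j : M)) - ((∑ j : Fin n, c j • (lamK j : M)) - (∑ j : Fin n, c j • lam j.castSucc)) := by
              abel
            rw [heq]
            exact Submodule.sub_mem Λ h1 (hsumdiff c)
          have h3 := (hrel _).mp h2
          intro j
          have := h3 j.castSucc
          rwa [Fin.snoc_castSucc] at this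
        · intro h
          rw [hmemΛK, hsumKcoe]
          have h2 : (∑ i, (Fin.snoc c 0 : Fin (n+1) → ℤ) i • lam i) ∈ Λ := by
            refine (hrel _).mpr (fun i => ?_)
            refine Fin.lastCases ?_ ?_ i
            · rw [Fin.snoc_last]
              exact dvd_zero _
            · intro j
              rw [Fin.snoc_castSucc]
              exact h j
          rw [hsnocsum] at h2
          have heq : (∑ j : Fin n, c j • (lamK j : M))
              = (∑ j : Fin n, c j • lam j.castSucc) + ((∑ j : Fin n, c j • (lamK j : M)) - (∑ j : Fin n, c j • lam j.castSucc)) := by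
            abel
          rw [heq]
          exact Submodule.add_mem Λ h2 (hsumdiff c)
      -- apply the induction hypothesis
      obtain ⟨lamB', hB'⟩ := ih (↥(LinearMap.ker φ)) bK ΛK (fun j => d j.castSucc)
        (fun j => hdpos _) (fun i j hij => hdvd _ _ (Fin.castSucc_le_castSucc_iff.mpr hij))
        lamK hspanK hrelK
      -- last basis vector construction
      set k₀M : M := eZ • lamst - a • w with hk₀M
      have hφk₀ : φ k₀M = 0 := by
        rw [hk₀M, map_sub, map_smul, map_smul, hφlamst, hφw, smul_eq_mul, smul_eq_mul, ← hag]
        ring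
      have hk₀Λ : k₀M ∈ Λ := Submodule.sub_mem Λ helamst (Submodule.smul_mem Λ _ hwΛ)
      set A : ℤ := Int.gcdA a eZ with hA
      set B : ℤ := Int.gcdB a eZ with hB
      have hbez : 1 = a * A + eZ * B := by
        have := Int.gcd_eq_gcd_ab a eZ
        rw [hcopaE] at this
        exact_mod_cast this
      set w'M : M := w + A • k₀M with hw'M
      have hφw' : φ w'M = eZ * g := by
        rw [hw'M, map_add, map_smul, hφk₀, hφw, smul_eq_mul]
        ring
      have hw'Λ : w'M ∈ Λ := Submodule.add_mem Λ hwΛ (Submodule.smul_mem Λ _ hk₀Λ)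
      set ylst : M := lamst + (-B) • k₀M with hylst
      have hkey : eZ • ylst = a • w'M := by
        have h1 : eZ • lamst = k₀M + a • w := by rw [hk₀M]; abel
        have h2 : eZ * (-B) = a * A - 1 := by linarith [hbez]
        rw [hylst, hw'M, smul_add, h1, smul_smul, h2, smul_add, smul_smul, sub_smul, one_smul]
        abel
      have hylstmem : ylst - lam lst ∈ Λ := by
        have heq : ylst - lam lst = (lamst - lam lst) + (-B) • k₀M := by rw [hylst]; abel
        rw [heq]
        exact Submodule.add_mem Λ hlamstd (Submodule.smul_mem Λ _ hk₀Λ)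
      clear_value k₀M A B w'M ylst
      clear hk₀M hA hB hw'M hylst
      -- the equivalence Λ ≃ ΛK × ℤ
      have hegne : eZ * g ≠ 0 := ne_of_gt hegpos
      set ψΛ : ↥Λ →ₗ[ℤ] ℤ :=
        { toFun := fun x => φ (x : M) / (eZ * g)
          map_add' := fun x y => by
            show φ ((x : M) + (y : M)) / (eZ * g) = _
            rw [map_add, Int.add_ediv_of_dvd_left (hegdvd _ x.2)]
          map_smul' := fun c x => by
            show φ (c • (x : M)) / (eZ * g) = c • (φ (x : M) / (eZ * g))
            rw [map_smul, smul_eq_mul, smul_eq_mul, Int.mul_ediv_assoc c (hegdvd _ x.2)] } with hψΛ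
      have hψΛval : ∀ x : ↥Λ, ψΛ x = φ (x : M) / (eZ * g) := fun _ => rfl
      set sM : ↥Λ →ₗ[ℤ] M := Λ.subtype - (LinearMap.toSpanSingleton ℤ M w'M).comp ψΛ with hsM
      have hsMval : ∀ x : ↥Λ, sM x = (x : M) - ψΛ x • w'M := fun _ => rfl
      have hsMK : ∀ x : ↥Λ, sM x ∈ LinearMap.ker φ := by
        intro x
        rw [LinearMap.mem_ker, hsMval, map_sub, map_smul, hφw', hψΛval, smul_eq_mul,
          Int.ediv_mul_cancel (hegdvd _ x.2), sub_self]
      set sK : ↥Λ →ₗ[ℤ] ↥(LinearMap.ker φ) := LinearMap.codRestrict _ sM hsMK with hsK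
      have hsKΛK : ∀ x : ↥Λ, sK x ∈ ΛK := by
        intro x
        rw [hmemΛK]
        show sM x ∈ Λ
        rw [hsMval]
        exact Submodule.sub_mem Λ x.2 (Submodule.smul_mem Λ _ hw'Λ)
      set πΛ : ↥Λ →ₗ[ℤ] ↥ΛK := LinearMap.codRestrict _ sK hsKΛK with hπΛ
      set inclK : ↥ΛK →ₗ[ℤ] ↥Λ := LinearMap.codRestrict Λ
        ((LinearMap.ker φ).subtype.comp ΛK.subtype) (fun k => (hmemΛK _).mp k.2) with hinclK
      set w'Λ : ↥Λ := ⟨w'M, hw'Λ⟩ with hw'Λdef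
      set EΛ : ↥Λ ≃ₗ[ℤ] ↥ΛK × ℤ := LinearEquiv.ofLinear (LinearMap.prod πΛ ψΛ)
        (LinearMap.coprod inclK (LinearMap.toSpanSingleton ℤ ↥Λ w'Λ))
        (by
          apply LinearMap.ext
          rintro ⟨k, s⟩
          have hkK : φ ((k : ↥(LinearMap.ker φ)) : M) = 0 := (k : ↥(LinearMap.ker φ)).2
          have hcoe : ((LinearMap.coprod inclK (LinearMap.toSpanSingleton ℤ ↥Λ w'Λ)) (k, s) : M)
              = ((k : ↥(LinearMap.ker φ)) : M) + s • w'M := rfl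
          have hψval : ψΛ ((LinearMap.coprod inclK (LinearMap.toSpanSingleton ℤ ↥Λ w'Λ)) (k, s)) = s := by
            rw [hψΛval, hcoe, map_add, map_smul, hkK, hφw', zero_add, smul_eq_mul,
              Int.mul_ediv_cancel _ hegne]
          apply Prod.ext
          · apply Subtype.ext
            apply Subtype.ext
            show sM _ = ((k : ↥(LinearMap.ker φ)) : M)
            rw [hsMval, hψval, hcoe]
            abel
          · exact hψval)
        (by
          apply LinearMap.ext
          intro x
          apply Subtype.ext
          show sM x + ψΛ x • w'M = (x : M)
          rw [hsMval]
          abel) with hEΛ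
      -- assemble the final basis
      set eqv : (Fin n ⊕ Unit) ≃ Fin (n+1) :=
        { toFun := Sum.elim Fin.castSucc (fun _ => lst)
          invFun := Fin.lastCases (Sum.inr ()) (fun j => Sum.inl j)
          left_inv := by
            rintro (j | u)
            · simp [Fin.lastCases_castSucc]
            · simp [hlst, Fin.lastCases_last]
          right_inv := by
            intro i
            refine Fin.lastCases ?_ ?_ i
            · simp [hlst, Fin.lastCases_last]
            · intro j
              simp [Fin.lastCases_castSucc] } with heqv
      set lamB : Module.Basis (Fin (n+1)) ℤ ↥Λ :=
        ((lamB'.prod (Module.Basis.singleton Unit ℤ)).map EΛ.symm).reindex eqv with hlamB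
      have heqvsymm1 : ∀ j : Fin n, eqv.symm j.castSucc = Sum.inl j := by
        intro j
        show Fin.lastCases (Sum.inr ()) (fun j => Sum.inl j) j.castSucc = Sum.inl j
        rw [Fin.lastCases_castSucc]
      have heqvsymm2 : eqv.symm lst = Sum.inr () := by
        show Fin.lastCases (Sum.inr ()) (fun j => Sum.inl j) lst = Sum.inr ()
        rw [hlst]
        rw [Fin.lastCases_last]
      have hEΛsymm : ∀ p : ↥ΛK × ℤ, EΛ.symm p
          = (LinearMap.coprod inclK (LinearMap.toSpanSingleton ℤ ↥Λ w'Λ)) p := by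
        intro p
        rw [hEΛ]
        rfl
      have hlamBc : ∀ j : Fin n, (lamB j.castSucc : M) = ((lamB' j : ↥(LinearMap.ker φ)) : M) := by
        intro j
        rw [hlamB, Module.Basis.reindex_apply, heqvsymm1, Module.Basis.map_apply, Module.Basis.prod_apply]
        simp only [Sum.elim_inl, Function.comp_apply, LinearMap.coe_inl]
        rw [hEΛsymm]
        show ((inclK (lamB' j) + (0:ℤ) • w'Λ : ↥Λ) : M) = _
        rw [zero_smul, add_zero]
        rfl
      have hlamBlast : (lamB lst : M) = w'M := by
        rw [hlamB, Module.Basis.reindex_apply, heqvsymm2, Module.Basis.map_apply, Module.Basis.prod_apply]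
        simp only [Sum.elim_inr, Function.comp_apply, LinearMap.coe_inr]
        rw [hEΛsymm, Module.Basis.singleton_apply]
        show ((inclK 0 + (1:ℤ) • w'Λ : ↥Λ) : M) = w'M
        rw [one_smul, map_zero, zero_add]
      -- conclude
      refine ⟨lamB, fun i => ?_⟩
      refine Fin.lastCases ?_ ?_ i
      · -- the last index
        show ∃ y : M, y - lam lst ∈ Λ ∧ ∃ a1 : ℕ, a1 ≤ d lst ∧ Nat.gcd a1 (d lst) = 1 ∧
          (d lst : ℤ) • y = (a1 : ℤ) • ((lamB lst : M))
        refine ⟨ylst, hylstmem, a.natAbs, ?_, ?_, ?_⟩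
        · have h1 : (a.natAbs : ℤ) = a := Int.natAbs_of_nonneg ha0
          have h2 : a ≤ (d lst : ℤ) := by rw [← heZ]; exact le_of_lt halt
          rw [← h1] at h2
          exact_mod_cast h2
        · have h3 : Int.gcd a eZ = Nat.gcd a.natAbs (d lst) := by
            rw [Int.gcd, heZ, Int.natAbs_natCast]
          rw [← h3]
          exact hcopaE
        · rw [hlamBlast, ← heZ, Int.natAbs_of_nonneg ha0]
          exact hkey
      · -- earlier indices
        intro j
        obtain ⟨y', hy'mem, a', ha'1, ha'2, ha'3⟩ := hB' j
        refine ⟨(y' : M), ?_, a', ha'1, ha'2, ?_⟩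
        · have h1 : ((y' - lamK j : ↥(LinearMap.ker φ)) : M) ∈ Λ := (hmemΛK _).mp hy'mem
          rw [AddSubgroupClass.coe_sub] at h1
          have heq : (y' : M) - lam j.castSucc
              = ((y' : M) - (lamK j : M)) + ((lamK j : M) - lam j.castSucc) := by abel
          rw [heq]
          exact Submodule.add_mem Λ h1 (hlamKd j)
        · have h2 := congrArg (fun z : ↥(LinearMap.ker φ) => (z : M)) ha'3
          simp only [SetLike.val_smul] at h2
          rw [hlamBc j]
          exact h2


/-- Let `Λ` be a full-rank submodule of a free ℤ-module `Λ̄` of rank `n` with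
elementary divisors `d₁ | ⋯ | d_n`, and let `λ̄₁,…,λ̄_n ∈ Λ̄` be such that `Λ̄/Λ` is the
internal direct sum of the cyclic groups generated by the `[λ̄ᵢ]`, with `[λ̄ᵢ]` of order
`dᵢ`.  Then there is a ℤ-basis `(λ₁,…,λ_n)` of `Λ` such that each class `λ̄ᵢ + Λ` has a
representative `λ̄ᵢ'` with `dᵢ·λ̄ᵢ' = aᵢ·λᵢ` for some `aᵢ ≤ dᵢ` with `gcd(aᵢ, dᵢ) = 1`. -/
theorem stmt_5 (n : ℕ) (M : Type) [AddCommGroup M] [Module ℤ M]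
    (bbar : Module.Basis (Fin n) ℤ M) (Λ : Submodule ℤ M)
    (d : Fin n → ℕ) (hdpos : ∀ i, 0 < d i) (hdvd : ∀ i j : Fin n, i ≤ j → d i ∣ d j)
    (lam : Fin n → M)
    (hspan : ∀ x : M, ∃ c : Fin n → ℤ, x - ∑ i, c i • lam i ∈ Λ)
    (hrel : ∀ c : Fin n → ℤ, (∑ i, c i • lam i) ∈ Λ ↔ ∀ i, (d i : ℤ) ∣ c i) :
    ∃ lamB : Module.Basis (Fin n) ℤ ↥Λ, ∀ i, ∃ y : M, y - lam i ∈ Λ ∧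
      ∃ a : ℕ, a ≤ d i ∧ Nat.gcd a (d i) = 1 ∧ (d i : ℤ) • y = (a : ℤ) • (lamB i : M) := by
  haveI : Subsingleton (Module ℤ M) := (AddCommGroup.uniqueIntModule).instSubsingleton
  obtain rfl : ‹Module ℤ M› = AddCommGroup.toIntModule M := Subsingleton.elim _ _
  exact stmt_aux n M bbar Λ d hdpos hdvd lam hspan hrel
end

section
/- Let O_D be the quadratic order of non-square discriminant D, let n, a, b ∈ ℤ with n, b > 0, set ω = a + b·γ_D and 𝔞 = ℤ·n + ℤ·ω. Then: (1) 𝔞 is an ideal of O_D if and only if b | a, b | n and n | N(ω)/b; (2) if 𝔞 is an ideal of O_D, then 𝔑(𝔞) = n·b; (3) if 𝔞 is an ideal of O_D, then 𝔞 is primitive (i.e. (1/m)·𝔞 ⊆ O_D for an integer m implies m ∈ {−1,1}) if and only if b = 1; (4) a primitive ideal 𝔞 = ℤ·n + ℤ·(a+γ_D) is invertible if and only if gcd(n, N(a+γ_D)/n, tr(a+γ_D)) = 1, and in that case 𝔞^{-1} = (1/n)·σ(𝔞); more generally, an ideal 𝔟 = ℤ·α + ℤ·β of O_D is invertible if and only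 if gcd(N(α), N(β), tr(σ(α)·β)) = 𝔑(𝔟), and in that case 𝔟^{-1} = (1/𝔑(𝔟))·σ(𝔟). -/
/-- `A` is an ideal of the order `O` (both regarded as ℤ-submodules of `K`). -/
def IsIdealOfOrd {K : Type} [Field K] (O A : Submodule ℤ K) : Prop :=
  A ≤ O ∧ ∀ x ∈ O, ∀ y ∈ A, x * y ∈ A

/-- The norm `𝔑(A) = [O : A]` of an ideal `A` of the order `O`. -/
noncomputable def idealNorm {K : Type} [Field K] (O A : Submodule ℤ K) : ℕ :=
  Nat.card (↥O ⧸ Submodule.comap O.subtype A)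

set_option linter.unusedSectionVars false

namespace Q6

variable {K : Type} [Field K] [CharZero K]

lemma mem_span_pair' (p q x : K) :
    x ∈ Submodule.span ℤ {p, q} ↔ ∃ s t : ℤ, x = (s : K) * p + (t : K) * q := by
  rw [Submodule.mem_span_pair]
  constructor
  · rintro ⟨s, t, rfl⟩; exact ⟨s, t, by simp [zsmul_eq_mul]⟩
  · rintro ⟨s, t, rfl⟩; exact ⟨s, t, by simp [zsmul_eq_mul]⟩

lemma span_pair_mul_span_pair (p q r s : K) :
    (Submodule.span ℤ {p, q}) * (Submodule.span ℤ {r, s}) =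
      Submodule.span ℤ {p * r, p * s, q * r, q * s} := by
  rw [Submodule.span_mul_span]
  congr 1
  ext x
  simp only [Set.mem_mul, Set.mem_insert_iff, Set.mem_singleton_iff]
  constructor
  · rintro ⟨u, (rfl | rfl), v, (rfl | rfl), rfl⟩ <;> tauto
  · rintro (rfl | rfl | rfl | rfl) <;> [exact ⟨p, by tauto, r, by tauto, rfl⟩;
      exact ⟨p, by tauto, s, by tauto, rfl⟩; exact ⟨q, by tauto, r, by tauto, rfl⟩;
      exact ⟨q, by tauto, s, by tauto, rfl⟩]

variable (D : ℕ) (hDns : ¬ IsSquare D) (sqrtD : K) (hsq : sqrtD ^ 2 = (D : K))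

include hDns hsq in
lemma sqrt_coords {u v : ℚ} (h : (u : K) + (v : K) * sqrtD = 0) : u = 0 ∧ v = 0 := by
  by_cases hv : v = 0
  · subst hv; simp at h; exact ⟨by exact_mod_cast h, rfl⟩
  · exfalso
    have hv' : (v : K) ≠ 0 := by exact_mod_cast hv
    have hs : sqrtD = ((-u / v : ℚ) : K) := by
      push_cast
      field_simp
      linear_combination h
    apply hDns
    have h2 : ((-u / v : ℚ)) ^ 2 = (D : ℚ) := by
      have : (((-u / v : ℚ) : K)) ^ 2 = ((D : ℚ) : K) := by
        rw [← hs, hsq]; norm_cast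
      exact_mod_cast this
    have : IsSquare ((D : ℚ)) := ⟨-u / v, by rw [← h2]; ring⟩
    rwa [Rat.isSquare_natCast_iff] at this

variable (γ : K) (hγ : γ = ((D : K) + sqrtD) / 2)

include hDns hsq hγ in
lemma coords {u v u' v' : ℚ} (h : (u : K) + (v : K) * γ = (u' : K) + (v' : K) * γ) :
    u = u' ∧ v = v' := by
  subst hγ
  have key : ((u - u' + (v - v') * D / 2 : ℚ) : K) + (((v - v') / 2 : ℚ) : K) * sqrtD = 0 := by
    push_cast
    ring_nf
    ring_nf at h
    linear_combination h
  obtain ⟨h1, h2⟩ := sqrt_coords D hDns sqrtD hsq key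
  have hvv : v = v' := by
    have : v - v' = 0 := by
      field_simp at h2; linarith
    linarith
  refine ⟨?_, hvv⟩
  rw [hvv] at h1
  field_simp at h1
  linarith

include hDns hsq hγ in
lemma coordsZ {m l m' l' : ℤ} (h : (m : K) + (l : K) * γ = (m' : K) + (l' : K) * γ) :
    m = m' ∧ l = l' := by
  have h' : ((m : ℚ) : K) + ((l : ℚ) : K) * γ = ((m' : ℚ) : K) + ((l' : ℚ) : K) * γ := by
    push_cast; push_cast at h; exact h
  obtain ⟨h1, h2⟩ := coords D hDns sqrtD hsq γ hγ h'
  exact ⟨by exact_mod_cast h1, by exact_mod_cast h2⟩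

variable (e : ℤ) (he : (D : ℤ) * (D : ℤ) - (D : ℤ) = 4 * e)

include hsq hγ he in
lemma gam_sq : γ * γ = (D : K) * γ - (e : K) := by
  have he' : ((D : K)) * (D : K) - (D : K) = 4 * (e : K) := by exact_mod_cast congrArg (Int.cast : ℤ → K) he
  subst hγ
  linear_combination (2⁻¹ * (D:K) + 2⁻¹ * sqrtD + 4⁻¹) * 0 + (4⁻¹ : K) * hsq - (4⁻¹ : K) * he'

variable (σ : K →+* K) (hσ : σ sqrtD = -sqrtD)

include hσ hγ in
lemma sigma_gam : σ γ = (D : K) - γ := by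
  subst hγ
  rw [map_div₀, map_add, map_natCast, hσ, map_ofNat]
  ring


include hσ hγ in
lemma sigma_coord (u v : ℤ) :
    σ ((u : K) + (v : K) * γ) = ((u + v * D : ℤ) : K) + ((-v : ℤ) : K) * γ := by
  rw [map_add, map_mul, map_intCast, map_intCast, sigma_gam D sqrtD γ hγ σ hσ]
  push_cast
  ring

include hsq hσ hγ he in
lemma mul_sig (u v : ℤ) :
    ((u : K) + (v : K) * γ) * σ ((u : K) + (v : K) * γ)
      = ((u * u + u * v * D + v * v * e : ℤ) : K) := by
  rw [sigma_coord D sqrtD γ hγ σ hσ]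
  have hg := gam_sq D sqrtD hsq γ hγ e he
  push_cast
  linear_combination (-(v : K) * v) * hg

include hsq hσ hγ he in
lemma bilin (u v u' v' : ℤ) :
    σ ((u : K) + (v : K) * γ) * ((u' : K) + (v' : K) * γ)
      + ((u : K) + (v : K) * γ) * σ ((u' : K) + (v' : K) * γ)
      = ((2 * u * u' + (u * v' + u' * v) * D + 2 * v * v' * e : ℤ) : K) := by
  rw [sigma_coord D sqrtD γ hγ σ hσ, sigma_coord D sqrtD γ hγ σ hσ]
  have hg := gam_sq D sqrtD hsq γ hγ e he
  push_cast
  linear_combination (-2 * (v : K) * v') * hg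

include hσ hγ in
lemma trace_coord (u v : ℤ) :
    ((u : K) + (v : K) * γ) + σ ((u : K) + (v : K) * γ) = ((2 * u + v * D : ℤ) : K) := by
  rw [sigma_coord D sqrtD γ hγ σ hσ]
  push_cast
  ring

variable (OD : Submodule ℤ K)
  (hOD : ∀ x : K, x ∈ OD ↔ ∃ m l : ℤ, x = (m : K) + (l : K) * (((D : K) + sqrtD) / 2))

include hOD hγ in
lemma odMem (m l : ℤ) : (m : K) + (l : K) * γ ∈ OD := by
  rw [hOD]; exact ⟨m, l, by rw [hγ]⟩

include hOD hγ in
lemma odMemInt (m : ℤ) : (m : K) ∈ OD := by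
  have := odMem D sqrtD γ hγ OD hOD m 0
  simpa using this

include hOD hγ in
lemma odMemOne : (1 : K) ∈ OD := by
  have := odMemInt D sqrtD γ hγ OD hOD 1
  simpa using this

include hOD hγ in
lemma odMemGam : γ ∈ OD := by
  have := odMem D sqrtD γ hγ OD hOD 0 1
  simpa using this

include hOD hγ in
lemma odMemIff (x : K) : x ∈ OD ↔ ∃ m l : ℤ, x = (m : K) + (l : K) * γ := by
  rw [hOD, hγ]

lemma mem_of_mulstable (OD' Q : Submodule ℤ K) (x : K) (hone : (1 : K) ∈ OD')
    (hst : ∀ y ∈ Q, x * y ∈ Q) (hJ : ∃ J, Q * J = OD') : x ∈ OD' := by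
  obtain ⟨J, hQJ⟩ := hJ
  have h1 : Submodule.span ℤ {x} * Q ≤ Q := by
    rw [Submodule.mul_le]
    intro u hu v hv
    rw [Submodule.mem_span_singleton] at hu
    obtain ⟨z, rfl⟩ := hu
    rw [smul_mul_assoc]
    exact Q.smul_mem z (hst v hv)
  have h2 : Submodule.span ℤ {x} * OD' ≤ OD' := by
    conv_lhs => rw [← hQJ]
    rw [← mul_assoc]
    calc Submodule.span ℤ {x} * Q * J ≤ Q * J := Submodule.mul_le.mpr fun u hu v hv => Submodule.mul_mem_mul (h1 hu) hv
    _ = OD' := hQJ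
  have : x * 1 ∈ Submodule.span ℤ {x} * OD' :=
    Submodule.mul_mem_mul (Submodule.mem_span_singleton_self x) hone
  rw [mul_one] at this
  exact h2 this

def mulSig (c : K) (σ' : K →+* K) : K →ₗ[ℤ] K where
  toFun x := c * σ' x
  map_add' x y := by simp [mul_add]
  map_smul' z x := by simp [zsmul_eq_mul]; ring

lemma span_image (c : K) (σ' : K →+* K) (p q : K) :
    Submodule.span ℤ ((fun x => c * σ' x) '' ↑(Submodule.span ℤ {p, q})) =
      Submodule.span ℤ {c * σ' p, c * σ' q} := by
  have h1 : (fun x => c * σ' x) = ⇑(mulSig c σ') := rfl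
  rw [h1, ← Submodule.map_coe, Submodule.span_eq, Submodule.map_span,
    Set.image_pair]
  rfl


include hDns hsq hσ hγ he hOD in
lemma part1 (n a b : ℤ) (hn : 0 < n) (hb : 0 < b) :
    IsIdealOfOrd OD (Submodule.span ℤ {(n : K), (a : K) + (b : K) * γ}) ↔
      b ∣ a ∧ b ∣ n ∧ n * b ∣ a * a + a * b * (D : ℤ) + b * b * e := by
  have hg := gam_sq D sqrtD hsq γ hγ e he
  set ω : K := (a : K) + (b : K) * γ with hωdef
  set A := Submodule.span ℤ {(n : K), ω} with hA
  have hbK : (b : K) ≠ 0 := by exact_mod_cast hb.ne'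
  constructor
  · rintro ⟨hle, hmul⟩
    have hγOD : γ ∈ OD := odMemGam D sqrtD γ hγ OD hOD
    have h1 : γ * (n : K) ∈ A := hmul γ hγOD _ (Submodule.subset_span (by simp))
    have h2 : γ * ω ∈ A := hmul γ hγOD ω (Submodule.subset_span (by simp))
    rw [mem_span_pair'] at h1 h2
    obtain ⟨s, t, hst⟩ := h1
    have h1' : ((0 : ℤ) : K) + ((n : ℤ) : K) * γ = ((s * n + t * a : ℤ) : K) + ((t * b : ℤ) : K) * γ := by
      push_cast
      push_cast at hst
      linear_combination hst
    obtain ⟨e1, e2⟩ := coordsZ D hDns sqrtD hsq γ hγ h1'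
    have hbn : b ∣ n := ⟨t, by linarith⟩
    obtain ⟨s', t', hst'⟩ := h2
    have h2' : ((-(b*e) : ℤ) : K) + ((a + b * D : ℤ) : K) * γ
        = ((s' * n + t' * a : ℤ) : K) + ((t' * b : ℤ) : K) * γ := by
      push_cast
      push_cast at hst'
      linear_combination hst' - (b : K) * hg
    obtain ⟨f1, f2⟩ := coordsZ D hDns sqrtD hsq γ hγ h2'
    have hba : b ∣ a := ⟨t' - D, by linarith⟩
    refine ⟨hba, hbn, ⟨-s', by linear_combination (-b : ℤ) * f1 + (a : ℤ) * f2⟩⟩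
  · rintro ⟨⟨a₀, ha₀⟩, ⟨n₀, hn₀⟩, ⟨M, hM⟩⟩
    have hb2 : (b * b : ℤ) ≠ 0 := by positivity
    have hM' : a₀ * a₀ + a₀ * (D : ℤ) + e = n₀ * M := by
      have h := hM
      rw [ha₀, hn₀] at h
      apply mul_left_cancel₀ hb2
      linear_combination h
    constructor
    · rw [hA, Submodule.span_le]
      rintro x hx
      rcases hx with rfl | rfl
      · exact odMemInt D sqrtD γ hγ OD hOD n
      · exact odMem D sqrtD γ hγ OD hOD a b
    · intro x hx y hy
      rw [odMemIff D sqrtD γ hγ OD hOD] at hx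
      obtain ⟨m, l, rfl⟩ := hx
      rw [hA, mem_span_pair'] at hy
      obtain ⟨u, v, rfl⟩ := hy
      rw [hA, mem_span_pair']
      refine ⟨m * u - l * u * a₀ - l * v * M, m * v + l * u * n₀ + l * v * (a₀ + (D : ℤ)), ?_⟩
      have haK : (a : K) = (b : K) * (a₀ : K) := by exact_mod_cast congrArg (Int.cast : ℤ → K) ha₀
      have hnK : (n : K) = (b : K) * (n₀ : K) := by exact_mod_cast congrArg (Int.cast : ℤ → K) hn₀
      have hMK : (a₀ : K) * (a₀ : K) + (a₀ : K) * (D : K) + (e : K) = (n₀ : K) * (M : K) := by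
        exact_mod_cast congrArg (Int.cast : ℤ → K) hM'
      rw [hωdef, haK, hnK]
      push_cast
      linear_combination ((l : K) * v * (b : K)) * hg - ((l : K) * v * (b : K)) * hMK


lemma comb_mem (S : Submodule ℤ K) {x y : K} (z w : ℤ) (hx : x ∈ S) (hy : y ∈ S) :
    (z : K) * x + (w : K) * y ∈ S := by
  have := S.add_mem (S.smul_mem z hx) (S.smul_mem w hy)
  simpa [zsmul_eq_mul] using this

include hDns hsq hσ hγ he hOD in
lemma core1 (n₀ a₀ m b' : ℤ) (hn₀ : 0 < n₀) (hb' : 0 < b')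
    (hN : a₀ * a₀ + a₀ * (D : ℤ) + e = n₀ * m)
    (Q : Submodule ℤ K)
    (hQ : Q = Submodule.span ℤ {((b' * n₀ : ℤ) : K), (b' : K) * ((a₀ : K) + γ)})
    (hJ : ∃ J, Q * J = OD) :
    Int.gcd n₀ (Int.gcd m (2 * a₀ + (D : ℤ)) : ℤ) = 1 := by
  have hg := gam_sq D sqrtD hsq γ hγ e he
  set t₀ : ℤ := 2 * a₀ + (D : ℤ) with ht₀def
  set g : ℕ := Int.gcd n₀ (Int.gcd m t₀ : ℤ) with hgdef
  have hgn : (g : ℤ) ∣ n₀ := Int.gcd_dvd_left _ _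
  have hgG : (g : ℤ) ∣ (Int.gcd m t₀ : ℤ) := Int.gcd_dvd_right _ _
  have hgm : (g : ℤ) ∣ m := dvd_trans hgG (Int.gcd_dvd_left _ _)
  have hgt : (g : ℤ) ∣ t₀ := dvd_trans hgG (Int.gcd_dvd_right _ _)
  have hgne : g ≠ 0 := by
    intro h0
    rw [h0] at hgn
    norm_num at hgn
    omega
  have hgK : ((g : ℕ) : K) ≠ 0 := by exact_mod_cast hgne
  obtain ⟨n₁, hn₁⟩ := hgn
  obtain ⟨m₁, hm₁⟩ := hgm
  obtain ⟨t₁, ht₁⟩ := hgt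
  set w₁ : K := ((b' * n₀ : ℤ) : K) with hw₁
  set w₂ : K := (b' : K) * ((a₀ : K) + γ) with hw₂
  set x : K := ((a₀ : K) + γ) * ((g : ℕ) : K)⁻¹ with hx
  have hn₁K : (n₀ : K) = ((g : ℕ) : K) * (n₁ : K) := by exact_mod_cast congrArg (Int.cast : ℤ → K) hn₁
  have hm₁K : (m : K) = ((g : ℕ) : K) * (m₁ : K) := by exact_mod_cast congrArg (Int.cast : ℤ → K) hm₁
  have ht₁K : ((2 * a₀ + (D : ℤ) : ℤ) : K) = ((g : ℕ) : K) * (t₁ : K) := by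
    exact_mod_cast congrArg (Int.cast : ℤ → K) ht₁
  have hNK : (a₀ : K) * (a₀ : K) + (a₀ : K) * (D : K) + (e : K) = (n₀ : K) * (m : K) := by
    exact_mod_cast congrArg (Int.cast : ℤ → K) hN
  have ht₁K' : 2 * (a₀ : K) + (D : K) = ((g : ℕ) : K) * (t₁ : K) := by push_cast at ht₁K; exact ht₁K
  have hx1 : x * w₁ = (n₁ : K) * w₂ := by
    rw [hx, hw₁, hw₂]
    push_cast
    field_simp
    linear_combination (((b' : K)) * ((a₀ : K) + γ)) * hn₁K
  have hx2 : x * w₂ = (t₁ : K) * w₂ - (m₁ : K) * w₁ := by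
    rw [hx, hw₁, hw₂]
    push_cast
    field_simp
    linear_combination ((b' : K)) * hg + (-(b' : K)) * hNK + ((b' : K) * γ + (b' : K) * (a₀ : K)) * ht₁K'
      + (-(b' : K) * ((g : ℕ) : K)) * hm₁K + ((b' : K) * (m₁ : K) * ((g : ℕ) : K)) * hn₁K
      + (((b' : K)) * ((g : ℕ) : K) - ((b' : K)) * ((g : ℕ) : K) * (n₁ : K)) * hm₁K
      - ((b' : K) * (m : K)) * hn₁K
  have hst : ∀ y ∈ Q, x * y ∈ Q := by
    intro y hy
    rw [hQ, mem_span_pair'] at hy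
    obtain ⟨s, t, rfl⟩ := hy
    rw [hQ, mem_span_pair']
    refine ⟨-(t * m₁), s * n₁ + t * t₁, ?_⟩
    push_cast
    linear_combination (s : K) * hx1 + (t : K) * hx2
  have hxOD := mem_of_mulstable OD Q x (odMemOne D sqrtD γ hγ OD hOD) hst hJ
  rw [odMemIff D sqrtD γ hγ OD hOD] at hxOD
  obtain ⟨m', l', hml⟩ := hxOD
  have hgQ : ((g : ℕ) : ℚ) ≠ 0 := by exact_mod_cast hgne
  have hxco : (((a₀ : ℚ) / (g : ℚ) : ℚ) : K) + (((1 : ℚ) / (g : ℚ) : ℚ) : K) * γ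
      = ((m' : ℚ) : K) + ((l' : ℚ) : K) * γ := by
    push_cast
    rw [hx] at hml
    field_simp
    field_simp at hml
    linear_combination hml
  obtain ⟨h1, h2⟩ := coords D hDns sqrtD hsq γ hγ hxco
  rw [div_eq_iff hgQ] at h2
  have hgl : (l' : ℤ) * (g : ℤ) = 1 := by exact_mod_cast h2.symm
  have hdvd : (g : ℤ) ∣ 1 := Dvd.intro_left l' hgl
  have hg1 : g ∣ 1 := by exact_mod_cast hdvd
  exact Nat.dvd_one.mp hg1


include hsq hσ hγ he hOD in
lemma core2 (n₀ a₀ m b' : ℤ) (hn₀ : 0 < n₀) (hb' : 0 < b')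
    (hN : a₀ * a₀ + a₀ * (D : ℤ) + e = n₀ * m)
    (hg1 : Int.gcd n₀ (Int.gcd m (2 * a₀ + (D : ℤ)) : ℤ) = 1)
    (c : K) (hc : c = (((b' * b' * n₀ : ℤ) : K))⁻¹) :
    Submodule.span ℤ {((b' * n₀ : ℤ) : K), (b' : K) * ((a₀ : K) + γ)} *
      Submodule.span ℤ {c * σ ((b' * n₀ : ℤ) : K), c * σ ((b' : K) * ((a₀ : K) + γ))} = OD := by
  have hg := gam_sq D sqrtD hsq γ hγ e he
  have hb'K : (b' : K) ≠ 0 := by exact_mod_cast hb'.ne'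
  have hn₀K : (n₀ : K) ≠ 0 := by exact_mod_cast hn₀.ne'
  have hNK : (a₀ : K) * (a₀ : K) + (a₀ : K) * (D : K) + (e : K) = (n₀ : K) * (m : K) := by
    exact_mod_cast congrArg (Int.cast : ℤ → K) hN
  have hσn : σ ((b' * n₀ : ℤ) : K) = ((b' * n₀ : ℤ) : K) := map_intCast σ _
  have hσb : σ ((b' : K)) = (b' : K) := map_intCast σ _
  have hσω : σ ((b' : K) * ((a₀ : K) + γ)) = (b' : K) * (((a₀ : K) + (D : K)) - γ) := by
    rw [map_mul, hσb, map_add, map_intCast, sigma_gam D sqrtD γ hγ σ hσ]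
    ring
  rw [span_pair_mul_span_pair]
  have e1 : ((b' * n₀ : ℤ) : K) * (c * σ ((b' * n₀ : ℤ) : K)) = (n₀ : K) := by
    rw [hσn, hc]; push_cast; field_simp
  have e2 : ((b' * n₀ : ℤ) : K) * (c * σ ((b' : K) * ((a₀ : K) + γ))) = ((a₀ : K) + (D : K)) - γ := by
    rw [hσω, hc]; push_cast; field_simp
  have e3 : ((b' : K) * ((a₀ : K) + γ)) * (c * σ ((b' * n₀ : ℤ) : K)) = (a₀ : K) + γ := by
    rw [hσn, hc]; push_cast; field_simp
  have e4 : ((b' : K) * ((a₀ : K) + γ)) * (c * σ ((b' : K) * ((a₀ : K) + γ))) = (m : K) := by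
    rw [hσω, hc]; push_cast; field_simp
    linear_combination hNK - hg
  rw [e1, e2, e3, e4]
  set S := Submodule.span ℤ {(n₀ : K), ((a₀ : K) + (D : K)) - γ, (a₀ : K) + γ, (m : K)} with hS
  have hmem1 : (n₀ : K) ∈ S := Submodule.subset_span (by simp)
  have hmem2 : ((a₀ : K) + (D : K)) - γ ∈ S := Submodule.subset_span (by simp)
  have hmem3 : (a₀ : K) + γ ∈ S := Submodule.subset_span (by simp)
  have hmem4 : (m : K) ∈ S := Submodule.subset_span (by simp)
  -- Bezout
  set t₀ : ℤ := 2 * a₀ + (D : ℤ) with ht₀def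
  have b1 := Int.gcd_eq_gcd_ab m t₀
  have b2 := Int.gcd_eq_gcd_ab n₀ ((Int.gcd m t₀ : ℕ) : ℤ)
  rw [hg1] at b2
  set u : ℤ := Int.gcdA n₀ ((Int.gcd m t₀ : ℕ) : ℤ) with hu
  set v : ℤ := Int.gcdA m t₀ * Int.gcdB n₀ ((Int.gcd m t₀ : ℕ) : ℤ) with hv
  set w : ℤ := Int.gcdB m t₀ * Int.gcdB n₀ ((Int.gcd m t₀ : ℕ) : ℤ) with hw
  have bez : (1 : ℤ) = n₀ * u + m * v + t₀ * w := by
    push_cast at b2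
    rw [hu, hv, hw]
    linear_combination b2 + (Int.gcdB n₀ ((Int.gcd m t₀ : ℕ) : ℤ)) * b1
  have hone : (1 : K) ∈ S := by
    have heq : (1 : K) = ((u : K) * (n₀ : K) + (v : K) * (m : K))
        + ((w : K) * ((a₀ : K) + γ) + (w : K) * (((a₀ : K) + (D : K)) - γ)) := by
      have := congrArg (Int.cast : ℤ → K) bez
      rw [ht₀def] at this
      push_cast at this
      push_cast
      linear_combination this
    rw [heq]
    exact S.add_mem (comb_mem S u v hmem1 hmem4) (comb_mem S w w hmem3 hmem2)
  have hγS : γ ∈ S := by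
    have heq : γ = (1 : K) * ((a₀ : K) + γ) + (-a₀ : ℤ) * (1 : K) := by push_cast; ring
    rw [heq]
    exact S.add_mem (by simpa using S.smul_mem 1 hmem3) (by simpa [zsmul_eq_mul] using S.smul_mem (-a₀) hone)
  apply le_antisymm
  · rw [hS, Submodule.span_le]
    rintro x hx
    simp only [Set.mem_insert_iff, Set.mem_singleton_iff] at hx
    rcases hx with rfl | rfl | rfl | rfl
    · exact odMemInt D sqrtD γ hγ OD hOD n₀
    · rw [SetLike.mem_coe]
      have := odMem D sqrtD γ hγ OD hOD (a₀ + D) (-1)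
      convert this using 1
      push_cast
      ring
    · rw [SetLike.mem_coe]
      have := odMem D sqrtD γ hγ OD hOD a₀ 1
      convert this using 1
      push_cast
      ring
    · exact odMemInt D sqrtD γ hγ OD hOD m
  · intro x hx
    rw [odMemIff D sqrtD γ hγ OD hOD] at hx
    obtain ⟨m', l', rfl⟩ := hx
    have : (m' : K) + (l' : K) * γ = (m' : K) * 1 + (l' : K) * γ := by ring
    rw [this]
    exact comb_mem S m' l' hone hγS


include hDns hsq hγ hOD in
lemma part2 (n a b : ℤ) (hn : 0 < n) (hb : 0 < b) :
    idealNorm OD (Submodule.span ℤ {(n : K), (a : K) + (b : K) * γ}) = (n * b).toNat := by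
  set ω : K := (a : K) + (b : K) * γ with hω
  set A := Submodule.span ℤ {(n : K), ω} with hA
  set f : (ℤ × ℤ) →ₗ[ℤ] ↥OD :=
    { toFun := fun p => ⟨(p.1 : K) + (p.2 : K) * γ, odMem D sqrtD γ hγ OD hOD p.1 p.2⟩
      map_add' := by
        intro p q
        apply Subtype.ext
        simp only [Prod.fst_add, Prod.snd_add, Submodule.coe_add]
        push_cast
        ring
      map_smul' := by
        intro z p
        apply Subtype.ext
        simp only [Prod.smul_fst, Prod.smul_snd, smul_eq_mul, RingHom.id_apply,
          SetLike.val_smul]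
        simp only [zsmul_eq_mul]
        push_cast
        ring } with hf
  have hfinj : Function.Injective f := by
    intro p q hpq
    have h := congrArg (Subtype.val) hpq
    simp only [hf, LinearMap.coe_mk, AddHom.coe_mk] at h
    obtain ⟨h1, h2⟩ := coordsZ D hDns sqrtD hsq γ hγ h
    exact Prod.ext h1 h2
  have hfsurj : Function.Surjective f := by
    intro x
    obtain ⟨m, l, hml⟩ := (odMemIff D sqrtD γ hγ OD hOD x).1 x.2
    exact ⟨(m, l), Subtype.ext hml.symm⟩
  set e2 : (ℤ × ℤ) ≃ₗ[ℤ] ↥OD := LinearEquiv.ofBijective f ⟨hfinj, hfsurj⟩ with he2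
  set L : Submodule ℤ (ℤ × ℤ) := Submodule.span ℤ {((n, 0) : ℤ × ℤ), (a, b)} with hL
  have he2app : ∀ p : ℤ × ℤ, ((e2 p : ↥OD) : K) = (p.1 : K) + (p.2 : K) * γ := by
    intro p; rfl
  have hmap : L.map (e2 : (ℤ × ℤ) →ₗ[ℤ] ↥OD) = Submodule.comap OD.subtype A := by
    rw [hL, Submodule.map_span, Set.image_pair]
    apply le_antisymm
    · rw [Submodule.span_le]
      rintro x hx
      simp only [Set.mem_insert_iff, Set.mem_singleton_iff] at hx
      rcases hx with rfl | rfl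
      · rw [SetLike.mem_coe, Submodule.mem_comap]
        show ((e2 ((n : ℤ), (0 : ℤ)) : ↥OD) : K) ∈ A
        rw [he2app]
        simp only [Int.cast_zero, zero_mul, add_zero]
        exact Submodule.subset_span (by simp)
      · rw [SetLike.mem_coe, Submodule.mem_comap]
        show ((e2 ((a : ℤ), (b : ℤ)) : ↥OD) : K) ∈ A
        rw [he2app]
        exact Submodule.subset_span (by simp [hω])
    · rintro x hx
      rw [Submodule.mem_comap] at hx
      have hx' : (x : K) ∈ A := hx
      rw [hA, mem_span_pair'] at hx'
      obtain ⟨s, t, hst⟩ := hx'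
      rw [Submodule.mem_span_pair]
      refine ⟨s, t, ?_⟩
      apply Subtype.ext
      simp only [Submodule.coe_add, SetLike.val_smul, zsmul_eq_mul, LinearEquiv.coe_coe]
      rw [he2app, he2app, hst, hω]
      push_cast
      ring
  have equiv1 := Submodule.Quotient.equiv L (Submodule.comap OD.subtype A) e2 hmap
  have hcard1 : idealNorm OD A = Nat.card ((ℤ × ℤ) ⧸ L) := by
    unfold idealNorm
    exact (Nat.card_congr equiv1.toEquiv).symm
  rw [hcard1]
  -- now compute the card of the lattice quotient
  set N := n.toNat with hNdef
  set B := b.toNat with hBdef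
  have hN : ((N : ℕ) : ℤ) = n := Int.toNat_of_nonneg hn.le
  have hB : ((B : ℕ) : ℤ) = b := Int.toNat_of_nonneg hb.le
  have hmemL : ∀ x : ℤ × ℤ, x ∈ L ↔ ∃ s t : ℤ, x.1 = s * n + t * a ∧ x.2 = t * b := by
    intro x
    rw [hL, Submodule.mem_span_pair]
    constructor
    · rintro ⟨s, t, rfl⟩
      exact ⟨s, t, by simp [Prod.ext_iff, smul_eq_mul, mul_comm], by simp [smul_eq_mul, mul_comm]⟩
    · rintro ⟨s, t, h1, h2⟩
      refine ⟨s, t, ?_⟩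
      have : x = (x.1, x.2) := rfl
      rw [this, h1, h2]
      simp [Prod.ext_iff, smul_eq_mul, mul_comm]
  have hnz : ((n : ℤ) : ZMod N) = 0 := by
    rw [← hN]
    exact_mod_cast ZMod.natCast_self N
  have hbz : ((b : ℤ) : ZMod B) = 0 := by
    rw [← hB]
    exact_mod_cast ZMod.natCast_self B
  set f2 : ℤ × ℤ → ZMod N × ZMod B :=
    fun x => (((x.1 - a * (x.2 / b) : ℤ) : ZMod N), ((x.2 : ℤ) : ZMod B)) with hf2
  have hwd : ∀ x y : ℤ × ℤ, x - y ∈ L → f2 x = f2 y := by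
    intro x y hxy
    obtain ⟨s, t, h1, h2⟩ := (hmemL _).1 hxy
    simp only [Prod.fst_sub, Prod.snd_sub] at h1 h2
    have hx2 : x.2 = y.2 + t * b := by linarith
    have hx1 : x.1 = y.1 + (s * n + t * a) := by linarith
    have hdiv : x.2 / b = y.2 / b + t := by
      rw [hx2, Int.add_mul_ediv_right _ _ hb.ne']
    have hco1 : x.1 - a * (x.2 / b) = y.1 - a * (y.2 / b) + s * n := by
      rw [hx1, hdiv]; ring
    rw [hf2, Prod.ext_iff]
    constructor
    · show ((x.1 - a * (x.2 / b) : ℤ) : ZMod N) = ((y.1 - a * (y.2 / b) : ℤ) : ZMod N)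
      rw [hco1]
      push_cast
      rw [hnz]
      ring
    · show ((x.2 : ℤ) : ZMod B) = ((y.2 : ℤ) : ZMod B)
      rw [hx2]
      push_cast
      rw [hbz]
      ring
  have hinj : ∀ x y : ℤ × ℤ, f2 x = f2 y → x - y ∈ L := by
    intro x y h
    rw [hf2, Prod.ext_iff] at h
    obtain ⟨h1, h2⟩ := h
    have hd2 : (b : ℤ) ∣ x.2 - y.2 := by
      rw [ZMod.intCast_eq_intCast_iff] at h2
      have := h2.symm.dvd
      rwa [hB] at this
    obtain ⟨t, ht⟩ := hd2
    have hx2 : x.2 = y.2 + t * b := by linarith [ht]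
    have hdiv : x.2 / b = y.2 / b + t := by
      rw [hx2, Int.add_mul_ediv_right _ _ hb.ne']
    have hd1 : (n : ℤ) ∣ (x.1 - a * (x.2 / b)) - (y.1 - a * (y.2 / b)) := by
      rw [ZMod.intCast_eq_intCast_iff] at h1
      have := h1.symm.dvd
      rwa [hN] at this
    obtain ⟨s, hs⟩ := hd1
    rw [hmemL]
    refine ⟨s, t, ?_, ?_⟩
    · simp only [Prod.fst_sub]
      linear_combination hs + (a : ℤ) * hdiv
    · simp only [Prod.snd_sub]
      linarith [ht]
  have hsurj2 : Function.Surjective f2 := by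
    rintro ⟨u, v⟩
    obtain ⟨p, hp⟩ := ZMod.intCast_surjective (n := N) u
    obtain ⟨q, hq⟩ := ZMod.intCast_surjective (n := B) v
    refine ⟨(p + a * (q / b), q), ?_⟩
    rw [hf2, Prod.ext_iff]
    constructor
    · show ((p + a * (q / b) - a * (q / b) : ℤ) : ZMod N) = u
      rw [add_sub_cancel_right]
      exact hp
    · exact hq
  set F : ((ℤ × ℤ) ⧸ L) → ZMod N × ZMod B := fun q => f2 q.out with hF
  have hFmk : ∀ x : ℤ × ℤ, F (Submodule.Quotient.mk x) = f2 x := by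
    intro x
    apply hwd
    rw [← Submodule.Quotient.eq L]
    rw [← Submodule.Quotient.mk''_eq_mk]
    exact Quotient.out_eq' _
  have hFbij : Function.Bijective F := by
    constructor
    · intro q1 q2 hq
      obtain ⟨x, rfl⟩ := Submodule.Quotient.mk_surjective L q1
      obtain ⟨y, rfl⟩ := Submodule.Quotient.mk_surjective L q2
      rw [hFmk, hFmk] at hq
      rw [Submodule.Quotient.eq L]
      exact hinj x y hq
    · intro z
      obtain ⟨x, hx⟩ := hsurj2 z
      exact ⟨Submodule.Quotient.mk x, by rw [hFmk, hx]⟩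
  rw [Nat.card_congr (Equiv.ofBijective F hFbij), Nat.card_prod, Nat.card_zmod, Nat.card_zmod]
  have : ((N * B : ℕ) : ℤ) = ((n * b).toNat : ℤ) := by
    rw [Int.toNat_of_nonneg (by positivity)]
    push_cast [hN, hB]
    ring
  exact_mod_cast this


include hDns hsq hσ hγ he hOD in
lemma normal_form (𝔅 : Submodule ℤ K) (hid : IsIdealOfOrd OD 𝔅) (hne : 𝔅 ≠ ⊥) :
    ∃ n' a' b' : ℤ, 0 < n' ∧ 0 < b' ∧
      𝔅 = Submodule.span ℤ {((n' : ℤ) : K), (a' : K) + (b' : K) * γ} := by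
  obtain ⟨hle, hmul⟩ := hid
  rw [Submodule.ne_bot_iff] at hne
  obtain ⟨x₀, hx₀, hx₀ne⟩ := hne
  -- the ideal T of γ-coefficients
  set T : Ideal ℤ :=
    { carrier := {l : ℤ | ∃ m : ℤ, (m : K) + (l : K) * γ ∈ 𝔅}
      add_mem' := by
        rintro l l' ⟨m, hm⟩ ⟨m', hm'⟩
        refine ⟨m + m', ?_⟩
        have := 𝔅.add_mem hm hm'
        convert this using 1
        push_cast
        ring
      zero_mem' := ⟨0, by simpa using 𝔅.zero_mem⟩
      smul_mem' := by
        rintro z l ⟨m, hm⟩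
        refine ⟨z * m, ?_⟩
        have := 𝔅.smul_mem z hm
        rw [zsmul_eq_mul] at this
        convert this using 1
        push_cast
        simp [smul_eq_mul]
        ring } with hT
  have hTmemiff : ∀ l : ℤ, l ∈ T ↔ ∃ m : ℤ, (m : K) + (l : K) * γ ∈ 𝔅 := fun l => Iff.rfl
  -- the ideal S of rational elements
  set S : Ideal ℤ :=
    { carrier := {m : ℤ | (m : K) ∈ 𝔅}
      add_mem' := by
        rintro m m' hm hm'
        have := 𝔅.add_mem hm hm'
        show ((m + m' : ℤ) : K) ∈ 𝔅
        push_cast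
        exact this
      zero_mem' := by show ((0 : ℤ) : K) ∈ 𝔅; simpa using 𝔅.zero_mem
      smul_mem' := by
        rintro z m hm
        have := 𝔅.smul_mem z hm
        rw [zsmul_eq_mul] at this
        show ((z • m : ℤ) : K) ∈ 𝔅
        push_cast [smul_eq_mul]
        exact this } with hS
  have hSmemiff : ∀ m : ℤ, m ∈ S ↔ (m : K) ∈ 𝔅 := fun m => Iff.rfl
  -- coordinates of x₀
  obtain ⟨m₀, l₀, hx₀eq⟩ := (odMemIff D sqrtD γ hγ OD hOD x₀).1 (hle hx₀)
  -- T contains a nonzero element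
  have hTne : ∃ l : ℤ, l ≠ 0 ∧ l ∈ T := by
    by_cases hl₀ : l₀ = 0
    · have hm₀ : m₀ ≠ 0 := by
        intro h
        apply hx₀ne
        rw [hx₀eq, hl₀, h]
        simp
      refine ⟨m₀, hm₀, 0, ?_⟩
      have hγx₀ : γ * x₀ ∈ 𝔅 := hmul γ (odMemGam D sqrtD γ hγ OD hOD) x₀ hx₀
      rw [hx₀eq, hl₀] at hγx₀
      convert hγx₀ using 1
      push_cast
      ring
    · exact ⟨l₀, hl₀, m₀, by rw [← hx₀eq]; exact hx₀⟩
  -- S contains a nonzero element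
  have hSne : ∃ m : ℤ, m ≠ 0 ∧ m ∈ S := by
    have hσx₀OD : σ x₀ ∈ OD := by
      rw [hx₀eq, sigma_coord D sqrtD γ hγ σ hσ]
      exact odMem D sqrtD γ hγ OD hOD _ _
    have hprod : σ x₀ * x₀ ∈ 𝔅 := hmul (σ x₀) hσx₀OD x₀ hx₀
    have hval : x₀ * σ x₀ = ((m₀ * m₀ + m₀ * l₀ * (D : ℤ) + l₀ * l₀ * e : ℤ) : K) := by
      rw [hx₀eq]
      exact mul_sig D sqrtD hsq γ hγ e he σ hσ m₀ l₀
    refine ⟨m₀ * m₀ + m₀ * l₀ * (D : ℤ) + l₀ * l₀ * e, ?_, ?_⟩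
    · intro h
      have : x₀ * σ x₀ ≠ 0 :=
        mul_ne_zero hx₀ne (fun hσ0 => hx₀ne (σ.injective (by rw [hσ0, map_zero])))
      rw [hval, h] at this
      simp at this
    · rw [hSmemiff, ← hval, mul_comm]
      exact hprod
  obtain ⟨bT, hbT⟩ := (Submodule.IsPrincipal.principal T)
  obtain ⟨nS, hnS⟩ := (Submodule.IsPrincipal.principal S)
  have hTdvd : ∀ l : ℤ, l ∈ T ↔ bT ∣ l := by
    intro l; rw [hbT]; exact Ideal.mem_span_singleton
  have hSdvd : ∀ m : ℤ, m ∈ S ↔ nS ∣ m := by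
    intro m; rw [hnS]; exact Ideal.mem_span_singleton
  have hbTne : bT ≠ 0 := by
    rintro rfl
    obtain ⟨l, hlne, hl⟩ := hTne
    rw [hTdvd, zero_dvd_iff] at hl
    exact hlne hl
  have hnSne : nS ≠ 0 := by
    rintro rfl
    obtain ⟨m, hmne, hm⟩ := hSne
    rw [hSdvd, zero_dvd_iff] at hm
    exact hmne hm
  set b' : ℤ := (bT.natAbs : ℤ) with hb'def
  set n' : ℤ := (nS.natAbs : ℤ) with hn'def
  have hb' : 0 < b' := by
    rw [hb'def]
    exact_mod_cast Int.natAbs_pos.mpr hbTne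
  have hn' : 0 < n' := by
    rw [hn'def]
    exact_mod_cast Int.natAbs_pos.mpr hnSne
  have hTdvd' : ∀ l : ℤ, l ∈ T ↔ b' ∣ l := by
    intro l; rw [hTdvd, hb'def, Int.natAbs_dvd]
  have hSdvd' : ∀ m : ℤ, m ∈ S ↔ n' ∣ m := by
    intro m; rw [hSdvd, hn'def, Int.natAbs_dvd]
  have hb'T : b' ∈ T := by rw [hTdvd']
  obtain ⟨a', ha'⟩ := (hTmemiff b').1 hb'T
  have hn'S : n' ∈ S := by rw [hSdvd']
  have hn'B : ((n' : ℤ) : K) ∈ 𝔅 := (hSmemiff n').1 hn'S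
  refine ⟨n', a', b', hn', hb', ?_⟩
  apply le_antisymm
  · intro x hx
    obtain ⟨m, l, rfl⟩ := (odMemIff D sqrtD γ hγ OD hOD x).1 (hle hx)
    have hlT : l ∈ T := ⟨m, hx⟩
    obtain ⟨t, ht⟩ := (hTdvd' l).1 hlT
    have hsub : ((m : K) + (l : K) * γ) - t • ((a' : K) + (b' : K) * γ) ∈ 𝔅 :=
      𝔅.sub_mem hx (𝔅.smul_mem t ha')
    have heq : ((m : K) + (l : K) * γ) - t • ((a' : K) + (b' : K) * γ) = ((m - t * a' : ℤ) : K) := by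
      rw [zsmul_eq_mul, ht]
      push_cast
      ring
    rw [heq] at hsub
    obtain ⟨s, hs⟩ := (hSdvd' _).1 ((hSmemiff _).2 hsub)
    rw [mem_span_pair']
    refine ⟨s, t, ?_⟩
    have hsK : (m : K) - (t : K) * (a' : K) = (n' : K) * (s : K) := by
      exact_mod_cast congrArg (Int.cast : ℤ → K) hs
    rw [ht]
    push_cast
    linear_combination hsK
  · rw [Submodule.span_le]
    rintro x hx
    simp only [Set.mem_insert_iff, Set.mem_singleton_iff] at hx
    rcases hx with rfl | rfl
    · exact hn'B
    · exact ha'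

end Q6

open Q6 in
/-- Lemma on normal forms of ideals of the quadratic order `O_D`. -/
theorem stmt_6 (D : ℕ) (hD0 : 0 < D) (hDns : ¬ IsSquare D)
    (hDmod : D % 4 = 0 ∨ D % 4 = 1)
    (K : Type) [Field K] [CharZero K]
    (sqrtD : K) (hsq : sqrtD ^ 2 = (D : K))
    (hgen : ∀ x : K, ∃ a b : ℚ, x = (a : K) + (b : K) * sqrtD)
    (σ : K →+* K) (hσ : σ sqrtD = -sqrtD)
    (OD : Submodule ℤ K)
    (hOD : ∀ x : K, x ∈ OD ↔ ∃ m l : ℤ, x = (m : K) + (l : K) * (((D : K) + sqrtD) / 2))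
    (n a b : ℤ) (hn : 0 < n) (hb : 0 < b)
    (ω : K) (hω : ω = (a : K) + (b : K) * (((D : K) + sqrtD) / 2))
    (𝔄 : Submodule ℤ K) (h𝔄 : 𝔄 = Submodule.span ℤ {(n : K), ω}) :
    -- (1) ideal criterion
    (IsIdealOfOrd OD 𝔄 ↔ b ∣ a ∧ b ∣ n ∧ ∃ m : ℤ, ω * σ ω = ((n * b * m : ℤ) : K)) ∧
    -- (2) the norm is n·b
    (IsIdealOfOrd OD 𝔄 → idealNorm OD 𝔄 = (n * b).toNat) ∧
    -- (3) primitivity criterion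
    (IsIdealOfOrd OD 𝔄 →
      ((∀ m : ℤ, (∀ x ∈ 𝔄, ∃ y ∈ OD, x = (m : K) * y) → m = 1 ∨ m = -1) ↔ b = 1)) ∧
    -- (4a) invertibility of a primitive ideal, and its inverse
    (b = 1 → IsIdealOfOrd OD 𝔄 →
      ∀ Nn t : ℤ, ω * σ ω = ((n * Nn : ℤ) : K) → ω + σ ω = ((t : ℤ) : K) →
        (((∃ J : Submodule ℤ K, 𝔄 * J = OD) ↔ Int.gcd n (Int.gcd Nn t : ℤ) = 1) ∧
          ((∃ J : Submodule ℤ K, 𝔄 * J = OD) →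
            𝔄 * Submodule.span ℤ ((fun x => ((n : K))⁻¹ * σ x) '' (𝔄 : Set K)) = OD))) ∧
    -- (4b) invertibility of a general ideal, and its inverse
    (∀ α β : K, ∀ 𝔅 : Submodule ℤ K, 𝔅 = Submodule.span ℤ {α, β} → IsIdealOfOrd OD 𝔅 →
      𝔅 ≠ ⊥ →
      ∀ Na Nb t : ℤ, α * σ α = (Na : K) → β * σ β = (Nb : K) →
        σ α * β + α * σ β = (t : K) →
        ((∃ J : Submodule ℤ K, 𝔅 * J = OD) ↔
            Int.gcd Na (Int.gcd Nb t : ℤ) = idealNorm OD 𝔅) ∧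
        ((∃ J : Submodule ℤ K, 𝔅 * J = OD) →
          𝔅 * Submodule.span ℤ
              ((fun x => ((idealNorm OD 𝔅 : ℕ) : K)⁻¹ * σ x) '' (𝔅 : Set K)) = OD)) := by
  set γ : K := ((D : K) + sqrtD) / 2 with hγ'
  have hγ : γ = ((D : K) + sqrtD) / 2 := hγ'
  obtain ⟨e, he⟩ : ∃ e : ℤ, (D : ℤ) * (D : ℤ) - (D : ℤ) = 4 * e := by
    rcases hDmod with h | h
    · have h4 : (4 : ℤ) ∣ (D : ℤ) := by exact_mod_cast Nat.dvd_of_mod_eq_zero h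
      obtain ⟨k, hk⟩ := h4
      exact ⟨4 * k * k - k, by rw [hk]; ring⟩
    · have h4 : (4 : ℤ) ∣ (D : ℤ) - 1 := by omega
      obtain ⟨k, hk⟩ := h4
      exact ⟨(D : ℤ) * k, by linear_combination ((D : ℤ)) * hk⟩
  have hNω : ω * σ ω = ((a * a + a * b * (D : ℤ) + b * b * e : ℤ) : K) := by
    rw [hω]
    exact mul_sig D sqrtD hsq γ hγ e he σ hσ a b
  have hP1 : IsIdealOfOrd OD 𝔄 ↔
      b ∣ a ∧ b ∣ n ∧ n * b ∣ a * a + a * b * (D : ℤ) + b * b * e := by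
    rw [h𝔄, hω]
    exact part1 D hDns sqrtD hsq γ hγ e he σ hσ OD hOD n a b hn hb
  have hthird : (n * b ∣ a * a + a * b * (D : ℤ) + b * b * e) ↔
      ∃ m : ℤ, ω * σ ω = ((n * b * m : ℤ) : K) := by
    constructor
    · rintro ⟨m, hm⟩
      exact ⟨m, by rw [hNω]; exact_mod_cast congrArg (Int.cast : ℤ → K) hm⟩
    · rintro ⟨m, hm⟩
      rw [hNω] at hm
      exact ⟨m, by exact_mod_cast hm⟩
  refine ⟨by rw [hP1, hthird], ?_, ?_, ?_, ?_⟩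
  · -- (2) norm
    intro _
    rw [h𝔄, hω]
    exact part2 D hDns sqrtD hsq γ hγ OD hOD n a b hn hb
  · -- (3) primitivity
    intro hid
    obtain ⟨hba, hbn, hdvd⟩ := hP1.1 hid
    constructor
    · intro H
      obtain ⟨a₀, ha₀⟩ := hba
      obtain ⟨n₀, hn₀⟩ := hbn
      have hball : ∀ x ∈ 𝔄, ∃ y ∈ OD, x = (b : K) * y := by
        intro x hx
        rw [h𝔄, mem_span_pair'] at hx
        obtain ⟨s, t, rfl⟩ := hx
        refine ⟨((s * n₀ + t * a₀ : ℤ) : K) + ((t : ℤ) : K) * γ,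
          odMem D sqrtD γ hγ OD hOD _ _, ?_⟩
        rw [hω, ha₀, hn₀]
        push_cast
        ring
      rcases H b hball with h1 | h1
      · exact h1
      · omega
    · intro hb1 m H
      obtain ⟨y', hy', hωy⟩ := H ω (by rw [h𝔄]; exact Submodule.subset_span (by simp))
      obtain ⟨u', v', rfl⟩ := (odMemIff D sqrtD γ hγ OD hOD y').1 hy'
      have h2 : ((a : ℤ) : K) + ((b : ℤ) : K) * γ = ((m * u' : ℤ) : K) + ((m * v' : ℤ) : K) * γ := by
        rw [hω] at hωy
        push_cast
        push_cast at hωy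
        linear_combination hωy
      obtain ⟨hc3, hc4⟩ := coordsZ D hDns sqrtD hsq γ hγ h2
      rw [hb1] at hc4
      exact Int.isUnit_iff.mp (IsUnit.of_mul_eq_one (a := m) v' hc4.symm)
  · -- (4a)
    intro hb1 hid Nn t hNn ht
    subst hb1
    obtain ⟨hba, hbn, hdvd⟩ := hP1.1 hid
    have hNeq : a * a + a * (D : ℤ) + e = n * Nn := by
      have h1 : (a * a + a * 1 * (D : ℤ) + 1 * 1 * e : ℤ) = n * Nn := by
        have := hNω.symm.trans hNn
        exact_mod_cast this
      linarith
    have htr : ω + σ ω = ((2 * a + 1 * (D : ℤ) : ℤ) : K) := by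
      rw [hω]
      exact trace_coord D sqrtD γ hγ σ hσ a 1
    have hteq : t = 2 * a + (D : ℤ) := by
      have h1 : (2 * a + 1 * (D : ℤ) : ℤ) = t := by
        have := htr.symm.trans ht
        exact_mod_cast this
      linarith
    have hQform : 𝔄 = Submodule.span ℤ {((1 * n : ℤ) : K), ((1 : ℤ) : K) * ((a : K) + γ)} := by
      have e1 : ((1 * n : ℤ) : K) = (n : K) := by norm_num
      have e2 : ((1 : ℤ) : K) * ((a : K) + γ) = (a : K) + ((1 : ℤ) : K) * γ := by push_cast; ring
      rw [h𝔄, hω, e1, e2]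
    have hgcd_of_J : (∃ J, 𝔄 * J = OD) → Int.gcd n (Int.gcd Nn t : ℤ) = 1 := by
      intro hJ
      have := core1 D hDns sqrtD hsq γ hγ e he σ hσ OD hOD n a Nn 1 hn one_pos hNeq 𝔄 hQform hJ
      rw [hteq]
      exact this
    have hform_of_gcd : Int.gcd n (Int.gcd Nn t : ℤ) = 1 →
        𝔄 * Submodule.span ℤ ((fun x => ((n : K))⁻¹ * σ x) '' (𝔄 : Set K)) = OD := by
      intro hg
      have hg' : Int.gcd n (Int.gcd Nn (2 * a + (D : ℤ)) : ℤ) = 1 := by rw [← hteq]; exact hg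
      have hcK : ((n : ℤ) : K)⁻¹ = (((1 * 1 * n : ℤ) : ℤ) : K)⁻¹ := by norm_num
      have hcore := core2 D sqrtD hsq γ hγ e he σ hσ OD hOD n a Nn 1 hn one_pos hNeq hg'
        (((1 * 1 * n : ℤ) : K))⁻¹ rfl
      conv_lhs => rw [hQform]
      rw [span_image]
      have hfix : ((n : K))⁻¹ = (((1 * 1 * n : ℤ) : K))⁻¹ := by norm_num
      rw [hfix]
      exact hcore
    exact ⟨⟨hgcd_of_J, fun hg => ⟨_, hform_of_gcd hg⟩⟩, fun hJ => hform_of_gcd (hgcd_of_J hJ)⟩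
  · -- (4b)
    intro α β 𝔅 h𝔅 hid𝔅 hne Na Nb t hNa hNb ht
    obtain ⟨n', a', b', hn', hb', hnf⟩ :=
      normal_form D hDns sqrtD hsq γ hγ e he σ hσ OD hOD 𝔅 hid𝔅 hne
    obtain ⟨hba', hbn', hdvd'⟩ :=
      (part1 D hDns sqrtD hsq γ hγ e he σ hσ OD hOD n' a' b' hn' hb').1 (hnf ▸ hid𝔅)
    obtain ⟨a₀, ha₀⟩ := hba'
    obtain ⟨n₀, hn₀⟩ := hbn'
    obtain ⟨M, hM⟩ := hdvd'
    have hn₀pos : 0 < n₀ := by nlinarith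
    have hb2ne : (b' * b' : ℤ) ≠ 0 := by positivity
    have hN₀ : a₀ * a₀ + a₀ * (D : ℤ) + e = n₀ * M := by
      rw [ha₀, hn₀] at hM
      apply mul_left_cancel₀ hb2ne
      linear_combination hM
    set k : ℤ := b' * b' * n₀ with hkdef
    have hkpos : 0 < k := by positivity
    have hknat : ((k.natAbs : ℕ) : ℤ) = k := Int.natAbs_of_nonneg hkpos.le
    set t₀ : ℤ := 2 * a₀ + (D : ℤ) with ht₀def
    set g₀ : ℕ := Int.gcd n₀ (Int.gcd M t₀ : ℤ) with hg₀def
    -- norm value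
    have hnorm : idealNorm OD 𝔅 = (n' * b').toNat := by
      rw [hnf]
      exact part2 D hDns sqrtD hsq γ hγ OD hOD n' a' b' hn' hb'
    have hn'b'k : n' * b' = k := by rw [hkdef]; linear_combination (b' : ℤ) * hn₀
    have hnormk : idealNorm OD 𝔅 = k.natAbs := by
      rw [hnorm, hn'b'k]
      omega
    -- coordinates
    have hαmem : α ∈ 𝔅 := h𝔅 ▸ Submodule.subset_span (by simp)
    have hβmem : β ∈ 𝔅 := h𝔅 ▸ Submodule.subset_span (by simp)
    rw [hnf, mem_span_pair'] at hαmem hβmem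
    obtain ⟨p, q, hα⟩ := hαmem
    obtain ⟨r, s', hβ⟩ := hβmem
    have hn'mem : ((n' : ℤ) : K) ∈ 𝔅 := hnf ▸ Submodule.subset_span (by simp)
    have hω'mem : (a' : K) + (b' : K) * γ ∈ 𝔅 := hnf ▸ Submodule.subset_span (by simp)
    rw [h𝔅, mem_span_pair'] at hn'mem hω'mem
    obtain ⟨e₁, f₁, hn'e⟩ := hn'mem
    obtain ⟨g₁, h₁, hω'e⟩ := hω'mem
    have hαco : α = ((p * n' + q * a' : ℤ) : K) + ((q * b' : ℤ) : K) * γ := by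
      rw [hα]; push_cast; ring
    have hβco : β = ((r * n' + s' * a' : ℤ) : K) + ((s' * b' : ℤ) : K) * γ := by
      rw [hβ]; push_cast; ring
    -- forward identities
    have hNaZ : Na = (p * n' + q * a') * (p * n' + q * a')
        + (p * n' + q * a') * (q * b') * (D : ℤ) + (q * b') * (q * b') * e := by
      have h1 := mul_sig D sqrtD hsq γ hγ e he σ hσ (p * n' + q * a') (q * b')
      rw [← hαco, hNa] at h1
      exact_mod_cast h1
    have hNbZ : Nb = (r * n' + s' * a') * (r * n' + s' * a')
        + (r * n' + s' * a') * (s' * b') * (D : ℤ) + (s' * b') * (s' * b') * e := by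
      have h1 := mul_sig D sqrtD hsq γ hγ e he σ hσ (r * n' + s' * a') (s' * b')
      rw [← hβco, hNb] at h1
      exact_mod_cast h1
    have htZ : t = 2 * (p * n' + q * a') * (r * n' + s' * a')
        + ((p * n' + q * a') * (s' * b') + (r * n' + s' * a') * (q * b')) * (D : ℤ)
        + 2 * (q * b') * (s' * b') * e := by
      have h1 := bilin D sqrtD hsq γ hγ e he σ hσ (p * n' + q * a') (q * b')
        (r * n' + s' * a') (s' * b')
      rw [← hαco, ← hβco, ht] at h1
      exact_mod_cast h1
    -- reverse identities
    have hσsum : ∀ (c d : ℤ) (x y : K),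
        σ ((c : K) * x + (d : K) * y) = (c : K) * σ x + (d : K) * σ y := by
      intro c d x y
      rw [map_add, map_mul, map_mul, map_intCast, map_intCast]
    have hA2K : ((n' * n' : ℤ) : K) = ((e₁ * e₁ * Na + e₁ * f₁ * t + f₁ * f₁ * Nb : ℤ) : K) := by
      calc ((n' * n' : ℤ) : K) = ((n' : ℤ) : K) * σ ((n' : ℤ) : K) := by
            rw [map_intCast]; push_cast; ring
        _ = ((e₁ : K) * α + (f₁ : K) * β) * ((e₁ : K) * σ α + (f₁ : K) * σ β) := by
            rw [hn'e, hσsum]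
        _ = ((e₁ * e₁ * Na + e₁ * f₁ * t + f₁ * f₁ * Nb : ℤ) : K) := by
            push_cast
            linear_combination ((e₁ : K) * (e₁ : K)) * hNa + ((f₁ : K) * (f₁ : K)) * hNb
              + ((e₁ : K) * (f₁ : K)) * ht
    have hA2Z : n' * n' = e₁ * e₁ * Na + e₁ * f₁ * t + f₁ * f₁ * Nb := by exact_mod_cast hA2K
    have hω'sig := mul_sig D sqrtD hsq γ hγ e he σ hσ a' b'
    have hCK : ((a' * a' + a' * b' * (D : ℤ) + b' * b' * e : ℤ) : K)
        = ((g₁ * g₁ * Na + g₁ * h₁ * t + h₁ * h₁ * Nb : ℤ) : K) := by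
      calc ((a' * a' + a' * b' * (D : ℤ) + b' * b' * e : ℤ) : K)
          = ((a' : K) + (b' : K) * γ) * σ ((a' : K) + (b' : K) * γ) := by
            rw [hω'sig]
        _ = ((g₁ : K) * α + (h₁ : K) * β) * ((g₁ : K) * σ α + (h₁ : K) * σ β) := by
            rw [hω'e, hσsum]
        _ = ((g₁ * g₁ * Na + g₁ * h₁ * t + h₁ * h₁ * Nb : ℤ) : K) := by
            push_cast
            linear_combination ((g₁ : K) * (g₁ : K)) * hNa + ((h₁ : K) * (h₁ : K)) * hNb
              + ((g₁ : K) * (h₁ : K)) * ht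
    have hCZ : a' * a' + a' * b' * (D : ℤ) + b' * b' * e
        = g₁ * g₁ * Na + g₁ * h₁ * t + h₁ * h₁ * Nb := by exact_mod_cast hCK
    have hσn' : σ ((n' : ℤ) : K) = ((n' : ℤ) : K) := map_intCast σ _
    have hσω' : σ ((a' : K) + (b' : K) * γ) = ((a' + b' * (D : ℤ) : ℤ) : K) + ((-b' : ℤ) : K) * γ :=
      sigma_coord D sqrtD γ hγ σ hσ a' b'
    have hBcK : ((n' * (2 * a' + b' * (D : ℤ)) : ℤ) : K)
        = ((2 * e₁ * g₁ * Na + (e₁ * h₁ + f₁ * g₁) * t + 2 * f₁ * h₁ * Nb : ℤ) : K) := by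
      calc ((n' * (2 * a' + b' * (D : ℤ)) : ℤ) : K)
          = σ ((n' : ℤ) : K) * ((a' : K) + (b' : K) * γ)
            + ((n' : ℤ) : K) * σ ((a' : K) + (b' : K) * γ) := by
            rw [hσn', hσω']
            push_cast
            ring
        _ = ((e₁ : K) * σ α + (f₁ : K) * σ β) * ((g₁ : K) * α + (h₁ : K) * β)
            + ((e₁ : K) * α + (f₁ : K) * β) * ((g₁ : K) * σ α + (h₁ : K) * σ β) := by
            rw [hn'e, hω'e, hσsum, hσsum]
        _ = ((2 * e₁ * g₁ * Na + (e₁ * h₁ + f₁ * g₁) * t + 2 * f₁ * h₁ * Nb : ℤ) : K) := by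
            push_cast
            linear_combination (2 * (e₁ : K) * (g₁ : K)) * hNa + (2 * (f₁ : K) * (h₁ : K)) * hNb
              + ((e₁ : K) * (h₁ : K) + (f₁ : K) * (g₁ : K)) * ht
    have hBcZ : n' * (2 * a' + b' * (D : ℤ))
        = 2 * e₁ * g₁ * Na + (e₁ * h₁ + f₁ * g₁) * t + 2 * f₁ * h₁ * Nb := by exact_mod_cast hBcK
    -- gcd equality
    set A2 : ℤ := n' * n' with hA2def
    set Bc : ℤ := n' * (2 * a' + b' * (D : ℤ)) with hBcdef
    set C : ℤ := a' * a' + a' * b' * (D : ℤ) + b' * b' * e with hCdef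
    set d₁ : ℕ := Int.gcd Na (Int.gcd Nb t : ℤ) with hd₁def
    set d₂ : ℕ := Int.gcd A2 (Int.gcd C Bc : ℤ) with hd₂def
    have hd1Na : (d₁ : ℤ) ∣ Na := Int.gcd_dvd_left _ _
    have hd1Nb : (d₁ : ℤ) ∣ Nb := dvd_trans (Int.gcd_dvd_right _ _) (Int.gcd_dvd_left _ _)
    have hd1t : (d₁ : ℤ) ∣ t := dvd_trans (Int.gcd_dvd_right _ _) (Int.gcd_dvd_right _ _)
    have hd2A : (d₂ : ℤ) ∣ A2 := Int.gcd_dvd_left _ _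
    have hd2C : (d₂ : ℤ) ∣ C := dvd_trans (Int.gcd_dvd_right _ _) (Int.gcd_dvd_left _ _)
    have hd2B : (d₂ : ℤ) ∣ Bc := dvd_trans (Int.gcd_dvd_right _ _) (Int.gcd_dvd_right _ _)
    have hd12 : d₁ = d₂ := by
      apply Nat.dvd_antisymm
      · have h1 : (d₁ : ℤ) ∣ A2 := by
          rw [hA2Z]
          exact dvd_add (dvd_add (hd1Na.mul_left _) (hd1t.mul_left _)) (hd1Nb.mul_left _)
        have h2 : (d₁ : ℤ) ∣ C := by
          rw [hCZ]
          exact dvd_add (dvd_add (hd1Na.mul_left _) (hd1t.mul_left _)) (hd1Nb.mul_left _)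
        have h3 : (d₁ : ℤ) ∣ Bc := by
          rw [hBcZ]
          exact dvd_add (dvd_add (hd1Na.mul_left _) (hd1t.mul_left _)) (hd1Nb.mul_left _)
        have : (d₁ : ℤ) ∣ (d₂ : ℤ) := Int.dvd_coe_gcd h1 (Int.dvd_coe_gcd h2 h3)
        exact_mod_cast this
      · have hNaZ' : Na = p * p * A2 + p * q * Bc + q * q * C := by
          rw [hA2def, hBcdef, hCdef]
          linear_combination hNaZ
        have hNbZ' : Nb = r * r * A2 + r * s' * Bc + s' * s' * C := by
          rw [hA2def, hBcdef, hCdef]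
          linear_combination hNbZ
        have htZ' : t = 2 * p * r * A2 + (p * s' + r * q) * Bc + 2 * q * s' * C := by
          rw [hA2def, hBcdef, hCdef]
          linear_combination htZ
        have h1 : (d₂ : ℤ) ∣ Na := by
          rw [hNaZ']
          exact dvd_add (dvd_add (hd2A.mul_left _) (hd2B.mul_left _)) (hd2C.mul_left _)
        have h2 : (d₂ : ℤ) ∣ Nb := by
          rw [hNbZ']
          exact dvd_add (dvd_add (hd2A.mul_left _) (hd2B.mul_left _)) (hd2C.mul_left _)
        have h3 : (d₂ : ℤ) ∣ t := by
          rw [htZ']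
          exact dvd_add (dvd_add (hd2A.mul_left _) (hd2B.mul_left _)) (hd2C.mul_left _)
        have : (d₂ : ℤ) ∣ (d₁ : ℤ) := Int.dvd_coe_gcd h1 (Int.dvd_coe_gcd h2 h3)
        exact_mod_cast this
    have hd2val : d₂ = k.natAbs * g₀ := by
      have hA2k : A2 = k * n₀ := by
        rw [hA2def, hkdef]
        linear_combination (n' + b' * n₀) * hn₀
      have hCk : C = k * M := by
        rw [hCdef, hkdef]
        linear_combination (a' + b' * a₀ + b' * (D : ℤ)) * ha₀ + (b' * b') * hN₀
      have hBck : Bc = k * t₀ := by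
        rw [hBcdef, hkdef, ht₀def]
        linear_combination (2 * a' + b' * (D : ℤ)) * hn₀ + (2 * b' * n₀) * ha₀
      have hcast : ((k.natAbs * Int.gcd M t₀ : ℕ) : ℤ) = k * (Int.gcd M t₀ : ℤ) := by
        rw [Nat.cast_mul, hknat]
      rw [hd₂def, hA2k, hCk, hBck, Int.gcd_mul_left, hcast, Int.gcd_mul_left, hg₀def]
    have hQform𝔅 : 𝔅 = Submodule.span ℤ {((b' * n₀ : ℤ) : K), (b' : K) * ((a₀ : K) + γ)} := by
      have e1 : ((n' : ℤ) : K) = ((b' * n₀ : ℤ) : K) := by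
        exact_mod_cast congrArg (Int.cast : ℤ → K) hn₀
      have e2 : (a' : K) + (b' : K) * γ = (b' : K) * ((a₀ : K) + γ) := by
        have ha₀K : (a' : K) = (b' : K) * (a₀ : K) := by
          exact_mod_cast congrArg (Int.cast : ℤ → K) ha₀
        rw [ha₀K]; ring
      rw [hnf, e1, e2]
    have hinv1 : (∃ J, 𝔅 * J = OD) → g₀ = 1 := by
      intro hJ
      have hres := core1 D hDns sqrtD hsq γ hγ e he σ hσ OD hOD n₀ a₀ M b' hn₀pos hb' hN₀
        𝔅 hQform𝔅 hJ
      rw [hg₀def, ht₀def]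
      exact hres
    have hinv2 : g₀ = 1 → 𝔅 * Submodule.span ℤ
        ((fun x => ((idealNorm OD 𝔅 : ℕ) : K)⁻¹ * σ x) '' (𝔅 : Set K)) = OD := by
      intro hg
      have hg' : Int.gcd n₀ (Int.gcd M (2 * a₀ + (D : ℤ)) : ℤ) = 1 := by
        rw [← ht₀def, ← hg₀def]; exact hg
      have hcK : ((idealNorm OD 𝔅 : ℕ) : K) = (((b' * b' * n₀ : ℤ)) : K) := by
        rw [hnormk, ← hkdef]
        conv_rhs => rw [← hknat]
        exact (Int.cast_natCast _).symm
      have hfun : (fun x : K => ((idealNorm OD 𝔅 : ℕ) : K)⁻¹ * σ x)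
          = (fun x : K => (((b' * b' * n₀ : ℤ)) : K)⁻¹ * σ x) := by
        funext x; rw [hcK]
      rw [hfun, hQform𝔅, span_image]
      exact core2 D sqrtD hsq γ hγ e he σ hσ OD hOD n₀ a₀ M b' hn₀pos hb' hN₀ hg' _ rfl
    constructor
    · constructor
      · intro hJ
        have hg := hinv1 hJ
        rw [hd12, hd2val, hg, mul_one, hnormk]
      · intro hEq
        have h1 : k.natAbs * g₀ = k.natAbs := by
          rw [← hd2val, ← hd12, hEq, hnormk]
        have hg : g₀ = 1 := by
          have h2 : 0 < k.natAbs := by omega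
          exact Nat.eq_of_mul_eq_mul_left h2 (by rw [h1, mul_one])
        exact ⟨_, hinv2 hg⟩
    · intro hJ
      exact hinv2 (hinv1 hJ)
end

section
/- Let I₁, I₂ be fractional ideals of K and let E be a symplectic form on the rank-4 ℤ-module I₁ ⊕ I₂ such that the diagonal multiplication action of O_D is self-adjoint with respect to E. Then the ℚ-bilinear extension of E to K² vanishes identically on (K⊕{0})×(K⊕{0}) and on ({0}⊕K)×({0}⊕K); in particular (I₁⊕{0}, {0}⊕I₂) is a decomposition of (I₁⊕I₂, E) into Lagrangian subgroups. -/
/-- `A` is a fractional ideal of `K` with respect to the order `O`: a finitely generated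
`O`-stable ℤ-submodule of `K` of full rank. -/
def IsFracIdealOf {K : Type} [Field K] [CharZero K] (O A : Submodule ℤ K) : Prop :=
  A.FG ∧ Submodule.span ℚ (A : Set K) = ⊤ ∧ ∀ x ∈ O, ∀ y ∈ A, x * y ∈ A

section Aux

variable {K : Type} [Field K] [CharZero K]

/-- multiplication by `x` diagonally, as a ℚ-linear map on `K × K`. -/
def mulDiag (x : K) : (K × K) →ₗ[ℚ] (K × K) where
  toFun v := (x * v.1, x * v.2)
  map_add' v w := by simp [mul_add]
  map_smul' q v := by simp [Prod.smul_mk, mul_smul_comm]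

@[simp] lemma mulDiag_apply (x : K) (v : K × K) : mulDiag x v = (x * v.1, x * v.2) := rfl

lemma aux_basis (hfr : Module.finrank ℚ K = 2)
    (I : Submodule ℤ K) (hfg : I.FG) (hspan : Submodule.span ℚ (I : Set K) = ⊤) :
    Nonempty (Module.Basis (Fin 2) ℤ ↥I) := by
  haveI : Module.Finite ℤ ↥I := Module.Finite.iff_fg.2 hfg
  haveI : Module.Free ℤ ↥I := Module.free_of_finite_type_torsion_free'
  let b := Module.Free.chooseBasis ℤ ↥I
  set ι := Module.Free.ChooseBasisIndex ℤ ↥I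
  let v : ι → K := fun i => (b i : K)
  have hli : LinearIndependent ℚ v := by
    rw [← LinearIndependent.iff_fractionRing ℤ ℚ]
    exact b.linearIndependent.map' I.subtype (Submodule.ker_subtype I)
  have hsp : Submodule.span ℤ (Set.range v) = I := by
    have := congrArg (Submodule.map I.subtype) b.span_eq
    rwa [Submodule.map_span, Submodule.map_top, Submodule.range_subtype,
      ← Set.range_comp] at this
  have hspQ : Submodule.span ℚ (Set.range v) = ⊤ := by
    rw [eq_top_iff, ← hspan, Submodule.span_le]
    intro x hx
    have : x ∈ Submodule.span ℤ (Set.range v) := hsp ▸ hx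
    exact Submodule.span_subset_span ℤ ℚ _ this
  let bQ : Module.Basis ι ℚ K := Module.Basis.mk hli (le_of_eq hspQ.symm)
  have hcard : Fintype.card ι = 2 := by
    rw [← hfr, Module.finrank_eq_card_basis bQ]
  exact ⟨b.reindex (Fintype.equivFinOfCardEq hcard)⟩

lemma aux_finrank (D : ℕ) (hDns : ¬ IsSquare D)
    (sqrtD : K) (hsq : sqrtD ^ 2 = (D : K))
    (hgen : ∀ x : K, ∃ a b : ℚ, x = (a : K) + (b : K) * sqrtD) :
    Module.finrank ℚ K = 2 := by
  have hli : LinearIndependent ℚ ![(1 : K), sqrtD] := by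
    rw [LinearIndependent.pair_iff' one_ne_zero]
    intro a ha
    apply hDns
    rw [← Rat.isSquare_natCast_iff]
    refine ⟨a, ?_⟩
    have : (a : K) = sqrtD := by simpa using ha
    have h2 : ((a * a : ℚ) : K) = ((D : ℚ) : K) := by
      push_cast
      rw [← sq, this, hsq]
    exact_mod_cast (Rat.cast_injective h2).symm
  have hsp : Submodule.span ℚ (Set.range ![(1 : K), sqrtD]) = ⊤ := by
    rw [eq_top_iff]
    rintro x -
    obtain ⟨a, b, rfl⟩ := hgen x
    have h1 : (1 : K) ∈ Set.range ![(1 : K), sqrtD] := ⟨0, rfl⟩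
    have h2 : sqrtD ∈ Set.range ![(1 : K), sqrtD] := ⟨1, rfl⟩
    have : (a : K) + (b : K) * sqrtD = a • (1 : K) + b • sqrtD := by
      simp [Algebra.smul_def]
    rw [this]
    exact Submodule.add_mem _
      (Submodule.smul_mem _ _ (Submodule.subset_span h1))
      (Submodule.smul_mem _ _ (Submodule.subset_span h2))
  let bK : Module.Basis (Fin 2) ℚ K := Module.Basis.mk hli (le_of_eq hsp.symm)
  rw [Module.finrank_eq_card_basis bK, Fintype.card_fin]

end Aux

/-- a symplectic form on `I₁ ⊕ I₂` for which the diagonal `O_D`-action is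
self-adjoint vanishes (after ℚ-bilinear extension to `K²`) on `K⊕0` and on `0⊕K`; in
particular `(I₁⊕0, 0⊕I₂)` is a decomposition into Lagrangian subgroups. -/
theorem stmt_9 (D : ℕ) (hD0 : 0 < D) (hDns : ¬ IsSquare D)
    (hDmod : D % 4 = 0 ∨ D % 4 = 1)
    (K : Type) [Field K] [CharZero K]
    (sqrtD : K) (hsq : sqrtD ^ 2 = (D : K))
    (hgen : ∀ x : K, ∃ a b : ℚ, x = (a : K) + (b : K) * sqrtD)
    (σ : K →+* K) (hσ : σ sqrtD = -sqrtD)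
    (OD : Submodule ℤ K)
    (hOD : ∀ x : K, x ∈ OD ↔ ∃ m l : ℤ, x = (m : K) + (l : K) * (((D : K) + sqrtD) / 2))
    (I₁ I₂ : Submodule ℤ K) (hI₁ : IsFracIdealOf OD I₁) (hI₂ : IsFracIdealOf OD I₂)
    (E : (K × K) →ₗ[ℚ] (K × K) →ₗ[ℚ] ℚ)
    (halt : ∀ v : K × K, E v v = 0)
    (hint : ∀ v ∈ I₁.prod I₂, ∀ w ∈ I₁.prod I₂, ∃ m : ℤ, E v w = (m : ℚ))
    (hnd : ∀ v ∈ I₁.prod I₂, (∀ w ∈ I₁.prod I₂, E v w = 0) → v = 0)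
    (hsa : ∀ x ∈ OD, ∀ v ∈ I₁.prod I₂, ∀ w ∈ I₁.prod I₂,
      E (x * Prod.fst v, x * Prod.snd v) w = E v (x * Prod.fst w, x * Prod.snd w)) :
    (∀ x y : K, E (x, 0) (y, 0) = 0) ∧
    (∀ x y : K, E (0, x) (0, y) = 0) ∧
    (I₁.prod (⊥ : Submodule ℤ K)) ⊔ ((⊥ : Submodule ℤ K).prod I₂) = I₁.prod I₂ ∧
    (I₁.prod (⊥ : Submodule ℤ K)) ⊓ ((⊥ : Submodule ℤ K).prod I₂) = ⊥ ∧
    Nonempty (Module.Basis (Fin 2) ℤ ↥(I₁.prod (⊥ : Submodule ℤ K))) ∧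
    Nonempty (Module.Basis (Fin 2) ℤ ↥((⊥ : Submodule ℤ K).prod I₂)) ∧
    NoZeroSMulDivisors ℤ
      (↥(I₁.prod I₂) ⧸ Submodule.comap (I₁.prod I₂).subtype
        (I₁.prod (⊥ : Submodule ℤ K))) ∧
    NoZeroSMulDivisors ℤ
      (↥(I₁.prod I₂) ⧸ Submodule.comap (I₁.prod I₂).subtype
        ((⊥ : Submodule ℤ K).prod I₂)) := by
  obtain ⟨hI₁fg, hI₁span, -⟩ := hI₁
  obtain ⟨hI₂fg, hI₂span, -⟩ := hI₂
  have hfr : Module.finrank ℚ K = 2 := aux_finrank D hDns sqrtD hsq hgen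
  -- span of the product lattice is everything
  have hspanP : Submodule.span ℚ ((I₁.prod I₂ : Submodule ℤ (K × K)) : Set (K × K)) = ⊤ := by
    rw [eq_top_iff, ← LinearMap.sup_range_inl_inr (R := ℚ) (M := K) (M₂ := K), sup_le_iff]
    constructor
    · rw [← Submodule.map_top, ← hI₁span, Submodule.map_span]
      apply Submodule.span_mono
      rintro - ⟨a, ha, rfl⟩
      exact ⟨ha, I₂.zero_mem⟩
    · rw [← Submodule.map_top, ← hI₂span, Submodule.map_span]
      apply Submodule.span_mono
      rintro - ⟨a, ha, rfl⟩
      exact ⟨I₁.zero_mem, ha⟩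
  -- step 1: self-adjointness of the action of `OD` extends to all vectors
  have step1 : ∀ x ∈ OD, ∀ v w : K × K, E (mulDiag x v) w = E v (mulDiag x w) := by
    intro x hx
    have : (E ∘ₗ mulDiag x) = E.compl₂ (mulDiag x) := by
      apply LinearMap.ext_on hspanP
      intro v hv
      apply LinearMap.ext_on hspanP
      intro w hw
      simpa using hsa x hx v hv w hw
    intro v w
    simpa using LinearMap.congr_fun (LinearMap.congr_fun this v) w
  -- step 2: the ℚ-span of OD is all of K
  have hODspan : Submodule.span ℚ (OD : Set K) = ⊤ := by
    rw [eq_top_iff]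
    rintro x -
    obtain ⟨a, b, rfl⟩ := hgen x
    have h1 : (1 : K) ∈ OD := (hOD 1).2 ⟨1, 0, by simp⟩
    have h2 : ((D : K) + sqrtD) / 2 ∈ OD := (hOD _).2 ⟨0, 1, by simp⟩
    have key : (a : K) + (b : K) * sqrtD
        = (a - b * D) • (1 : K) + (2 * b) • (((D : K) + sqrtD) / 2) := by
      simp only [Algebra.smul_def]
      push_cast
      field_simp
      simp only [Algebra.cast, map_ofNat, eq_ratCast]
      ring
    rw [key]
    exact Submodule.add_mem _
      (Submodule.smul_mem _ _ (Submodule.subset_span h1))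
      (Submodule.smul_mem _ _ (Submodule.subset_span h2))
  -- step 3: self-adjointness for all of K by ℚ-linearity in x
  have SA : ∀ x : K, ∀ v w : K × K, E (mulDiag x v) w = E v (mulDiag x w) := by
    intro x v w
    let G : K →ₗ[ℚ] ℚ :=
      { toFun := fun x => E (mulDiag x v) w - E v (mulDiag x w)
        map_add' := by
          intro a b
          have h1 : mulDiag (a + b) v = mulDiag a v + mulDiag b v := by
            simp [Prod.ext_iff, add_mul]
          have h2 : mulDiag (a + b) w = mulDiag a w + mulDiag b w := by
            simp [Prod.ext_iff, add_mul]
          simp only [h1, h2, map_add, LinearMap.add_apply]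
          ring
        map_smul' := by
          intro q a
          have h1 : mulDiag (q • a) v = q • mulDiag a v := by
            simp [Prod.ext_iff, smul_mul_assoc]
          have h2 : mulDiag (q • a) w = q • mulDiag a w := by
            simp [Prod.ext_iff, smul_mul_assoc]
          simp only [h1, h2, map_smul, LinearMap.smul_apply, RingHom.id_apply,
            smul_eq_mul]
          ring }
    have hG : G = 0 := by
      apply LinearMap.ext_on hODspan
      intro y hy
      have := step1 y hy v w
      simp only [G, LinearMap.coe_mk, AddHom.coe_mk, LinearMap.zero_apply]
      rw [this]; ring
    have := LinearMap.congr_fun hG x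
    simp only [G, LinearMap.coe_mk, AddHom.coe_mk, LinearMap.zero_apply] at this
    linarith
  -- skew-symmetry
  have skew : ∀ v w : K × K, E v w = - E w v := by
    intro v w
    have h := halt (v + w)
    simp only [map_add, LinearMap.add_apply, halt v, halt w] at h
    linarith
  -- the two vanishing claims
  have claim1 : ∀ x y : K, E (x, 0) (y, 0) = 0 := by
    have base : ∀ z : K, E (1, 0) (z, 0) = 0 := by
      intro z
      have h := SA z (1, 0) (1, 0)
      simp only [mulDiag_apply, mul_one, mul_zero] at h
      have h2 := skew (z, 0) (1, 0)
      -- h : E (z,0) (1,0) = E (1,0) (z,0); h2 : E (z,0)(1,0) = -E (1,0)(z,0)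
      linarith
    intro x y
    have h := SA x (1, 0) (y, 0)
    simp only [mulDiag_apply, mul_one, mul_zero] at h
    rw [h, base]
  have claim2 : ∀ x y : K, E (0, x) (0, y) = 0 := by
    have base : ∀ z : K, E (0, 1) (0, z) = 0 := by
      intro z
      have h := SA z (0, 1) (0, 1)
      simp only [mulDiag_apply, mul_one, mul_zero] at h
      have h2 := skew (0, z) (0, 1)
      linarith
    intro x y
    have h := SA x (0, 1) (0, y)
    simp only [mulDiag_apply, mul_one, mul_zero] at h
    rw [h, base]
  refine ⟨claim1, claim2, ?_, ?_, ?_, ?_, ?_, ?_⟩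
  · rw [Submodule.prod_sup_prod]; simp
  · rw [Submodule.prod_inf_prod]; simp
  · obtain ⟨b⟩ := aux_basis hfr I₁ hI₁fg hI₁span
    have hmap : Submodule.map (LinearMap.inl ℤ K K) I₁ = I₁.prod ⊥ := Submodule.map_inl I₁
    exact ⟨b.map ((I₁.equivMapOfInjective _ LinearMap.inl_injective).trans
      (LinearEquiv.ofEq _ _ hmap))⟩
  · obtain ⟨b⟩ := aux_basis hfr I₂ hI₂fg hI₂span
    have hmap : Submodule.map (LinearMap.inr ℤ K K) I₂ = Submodule.prod ⊥ I₂ :=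
      Submodule.map_inr I₂
    exact ⟨b.map ((I₂.equivMapOfInjective _ LinearMap.inr_injective).trans
      (LinearEquiv.ofEq _ _ hmap))⟩
  · refine ⟨fun {c x} h => ?_⟩
    by_cases hc : c = 0
    · exact Or.inl hc
    refine Or.inr ?_
    obtain ⟨v, rfl⟩ := Submodule.Quotient.mk_surjective _ x
    rw [← Submodule.Quotient.mk_smul, Submodule.Quotient.mk_eq_zero] at h
    rw [Submodule.Quotient.mk_eq_zero]
    rw [Submodule.mem_comap] at h ⊢
    have h2 : (c • (v : K × K)).2 = 0 := h.2
    have hv2 : (v : K × K).2 = 0 := by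
      have : c • (v : K × K).2 = 0 := h2
      rcases smul_eq_zero.1 this with h' | h'
      · exact absurd h' hc
      · exact h'
    exact ⟨(Submodule.coe_mem v : (v : K × K) ∈ I₁.prod I₂).1, by simpa using hv2⟩
  · refine ⟨fun {c x} h => ?_⟩
    by_cases hc : c = 0
    · exact Or.inl hc
    refine Or.inr ?_
    obtain ⟨v, rfl⟩ := Submodule.Quotient.mk_surjective _ x
    rw [← Submodule.Quotient.mk_smul, Submodule.Quotient.mk_eq_zero] at h
    rw [Submodule.Quotient.mk_eq_zero]
    rw [Submodule.mem_comap] at h ⊢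
    have h1 : (c • (v : K × K)).1 = 0 := h.1
    have hv1 : (v : K × K).1 = 0 := by
      have : c • (v : K × K).1 = 0 := h1
      rcases smul_eq_zero.1 this with h' | h'
      · exact absurd h' hc
      · exact h'
    exact ⟨by simpa using hv1, (Submodule.coe_mem v : (v : K × K) ∈ I₁.prod I₂).2⟩
end

section
/- Let I₁, I₂ be fractional ideals of K and let E be a symplectic form on I₁ ⊕ I₂ such that the diagonal multiplication action of O_D is self-adjoint with respect to E. Then there exists a fractional ideal I of K with I₁ ⊆ I such that the ℚ-bilinear extension of E to K² restricts to a symplectic form of type (1,1) on I ⊕ I₂; likewise there exists a fractional ideal I with I₂ ⊆ I such that E is symplectic of type (1,1) on I₁ ⊕ I. -/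
/-- The (ℚ-bilinearly extended) form `E` restricted to the lattice `Λ` is symplectic of
type `(d 0, …, d (k-1))`. -/
def SympQTypeOn {V : Type} [AddCommGroup V] [Module ℚ V]
    (E : V →ₗ[ℚ] V →ₗ[ℚ] ℚ) (Λ : Submodule ℤ V) (k : ℕ) (d : Fin k → ℕ) : Prop :=
  ∃ b : Module.Basis (Fin k ⊕ Fin k) ℤ ↥Λ,
    (∀ i j, E (b (Sum.inl i) : V) (b (Sum.inl j) : V) = 0) ∧
    (∀ i j, E (b (Sum.inr i) : V) (b (Sum.inr j) : V) = 0) ∧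
    (∀ i j, E (b (Sum.inl i) : V) (b (Sum.inr j) : V) = if i = j then (d i : ℚ) else 0) ∧
    (∀ i, 0 < d i) ∧ ∀ i j : Fin k, i ≤ j → d i ∣ d j

open Module

/-- linear equivalence between a product of submodules and the submodule product -/
def auxSubProd {R M N : Type*} [Semiring R] [AddCommMonoid M] [AddCommMonoid N]
    [Module R M] [Module R N] (p : Submodule R M) (q : Submodule R N) :
    ↥(p.prod q) ≃ₗ[R] ↥p × ↥q where
  toFun x := (⟨x.1.1, (Submodule.mem_prod.1 x.2).1⟩, ⟨x.1.2, (Submodule.mem_prod.1 x.2).2⟩)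
  map_add' _ _ := rfl
  map_smul' _ _ := rfl
  invFun y := ⟨(y.1.1, y.2.1), Submodule.mem_prod.2 ⟨y.1.2, y.2.2⟩⟩
  left_inv _ := rfl
  right_inv _ := rfl

lemma auxSubProd_symm_coe {R M N : Type*} [Semiring R] [AddCommMonoid M] [AddCommMonoid N]
    [Module R M] [Module R N] (p : Submodule R M) (q : Submodule R N) (y : ↥p × ↥q) :
    (((auxSubProd p q).symm y : ↥(p.prod q)) : M × N) = ((y.1 : M), (y.2 : N)) := rfl


lemma aux_rat_sq {D : ℕ} (hDns : ¬ IsSquare D) (q : ℚ) : q ^ 2 ≠ (D : ℚ) := by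
  intro h
  apply hDns
  have hden : ((q.den : ℚ)) ≠ 0 := by exact_mod_cast q.den_nz
  have h1 : (q.num : ℚ) = q * q.den := by
    rw [Rat.mul_den_eq_num]
  have h2 : (q.num : ℚ) ^ 2 = (D : ℚ) * (q.den : ℚ) ^ 2 := by
    rw [h1, mul_pow, h]
  have h3 : q.num ^ 2 = (D : ℤ) * (q.den : ℤ) ^ 2 := by exact_mod_cast h2
  have h4 : q.num.natAbs ^ 2 = D * q.den ^ 2 := by
    have := congrArg Int.natAbs h3
    simpa [Int.natAbs_mul, Int.natAbs_pow] using this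
  have hcop : Nat.Coprime (q.num.natAbs ^ 2) (q.den ^ 2) := q.reduced.pow 2 2
  have hdvd : q.den ^ 2 ∣ q.num.natAbs ^ 2 := ⟨D, by rw [h4]; ring⟩
  have hone : q.den ^ 2 = 1 := (hcop.symm).eq_one_of_dvd hdvd
  refine ⟨q.num.natAbs, ?_⟩
  have : q.num.natAbs ^ 2 = D := by rw [h4, hone, mul_one]
  rw [← this, sq]

lemma aux_sqrt_irr {K : Type} [Field K] [CharZero K] {D : ℕ} (hDns : ¬ IsSquare D)
    (sqrtD : K) (hsq : sqrtD ^ 2 = (D : K)) (q : ℚ) : (q : K) ≠ sqrtD := by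
  intro hq
  apply aux_rat_sq hDns q
  have : ((q ^ 2 : ℚ) : K) = ((D : ℚ) : K) := by push_cast; rw [hq, hsq]
  exact_mod_cast this

lemma aux_basisK {K : Type} [Field K] [CharZero K] {D : ℕ} (hDns : ¬ IsSquare D)
    (sqrtD : K) (hsq : sqrtD ^ 2 = (D : K))
    (hgen : ∀ x : K, ∃ a b : ℚ, x = (a : K) + (b : K) * sqrtD) :
    ∃ _ : Basis (Fin 2) ℚ K, finrank ℚ K = 2 := by
  have hind : LinearIndependent ℚ ![(1 : K), sqrtD] := by
    rw [LinearIndependent.pair_iff]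
    intro s t hst
    rw [Rat.smul_def, Rat.smul_def, mul_one] at hst
    by_cases ht : t = 0
    · subst ht; constructor
      · simpa using hst
      · rfl
    · exfalso
      apply aux_sqrt_irr hDns sqrtD hsq (-s / t)
      have htK : (t : K) ≠ 0 := by exact_mod_cast ht
      push_cast
      field_simp
      linear_combination -hst
  have hspan : ⊤ ≤ Submodule.span ℚ (Set.range ![(1 : K), sqrtD]) := by
    intro x _
    obtain ⟨a, b, hab⟩ := hgen x
    have h1 : (1 : K) ∈ Set.range ![(1 : K), sqrtD] := ⟨0, rfl⟩
    have h2 : sqrtD ∈ Set.range ![(1 : K), sqrtD] := ⟨1, rfl⟩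
    have : x = a • (1 : K) + b • sqrtD := by
      rw [Rat.smul_def, Rat.smul_def, mul_one, hab]
    rw [this]
    exact Submodule.add_mem _
      (Submodule.smul_mem _ _ (Submodule.subset_span h1))
      (Submodule.smul_mem _ _ (Submodule.subset_span h2))
  exact ⟨Basis.mk hind hspan, by rw [finrank_eq_card_basis (Basis.mk hind hspan)]; simp⟩

/-- dual lattice construction -/
lemma aux_master {K : Type} [Field K] [CharZero K] [FiniteDimensional ℚ K]
    (hdim : finrank ℚ K = 2)
    (OD L : Submodule ℤ K)
    (T : K →ₗ[ℚ] ℚ) (hT : ∃ z, T z ≠ 0)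
    (hLfg : L.FG) (hLspan : Submodule.span ℚ (L : Set K) = ⊤)
    (hLmul : ∀ x ∈ OD, ∀ y ∈ L, x * y ∈ L) :
    ∃ (I : Submodule ℤ K) (bL : Basis (Fin 2) ℤ ↥L) (bI : Basis (Fin 2) ℤ ↥I),
      IsFracIdealOf OD I ∧
      (∀ x : K, x ∈ I ↔ ∀ y ∈ L, ∃ m : ℤ, T (x * y) = (m : ℚ)) ∧
      (∀ i j, T ((bI i : K) * (bL j : K)) = if i = j then 1 else 0) := by
  classical
  haveI : Module.Finite ℤ ↥L := Module.Finite.iff_fg.2 hLfg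
  set ι := Module.Free.ChooseBasisIndex ℤ ↥L with hι
  let b0 : Basis ι ℤ ↥L := Module.Free.chooseBasis ℤ ↥L
  let vL : ι → K := fun i => (b0 i : K)
  have hvLint : LinearIndependent ℤ vL :=
    b0.linearIndependent.map' L.subtype L.ker_subtype
  have hvLQ : LinearIndependent ℚ vL := (LinearIndependent.iff_fractionRing ℤ ℚ).1 hvLint
  have hLle : (L : Set K) ⊆ (Submodule.span ℚ (Set.range vL) : Set K) := by
    intro y hy
    have hrep := b0.sum_repr ⟨y, hy⟩
    have : ∑ i, (b0.repr ⟨y, hy⟩ i) • vL i = y := by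
      have := congrArg (Submodule.subtype L) hrep
      rw [map_sum] at this
      simpa [vL] using this
    rw [← this]
    exact Submodule.sum_mem _ fun i _ =>
      Submodule.smul_of_tower_mem _ _ (Submodule.subset_span ⟨i, rfl⟩)
  have hvLspan : ⊤ ≤ Submodule.span ℚ (Set.range vL) := by
    rw [← hLspan]
    exact Submodule.span_le.2 hLle
  let cL : Basis ι ℚ K := Basis.mk hvLQ hvLspan
  haveI : Fintype ι := Module.Free.ChooseBasisIndex.fintype ℤ ↥L
  have hcard : Fintype.card ι = 2 := by
    rw [← finrank_eq_card_basis cL, hdim]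
  let eqv : ι ≃ Fin 2 := Fintype.equivFinOfCardEq hcard
  let bL : Basis (Fin 2) ℤ ↥L := b0.reindex eqv
  let c : Basis (Fin 2) ℚ K := cL.reindex eqv
  have hce : ∀ i, c i = (bL i : K) := by
    intro i
    simp [c, bL, cL, Basis.reindex_apply, Basis.mk_apply, vL]
  -- the map x ↦ T (x * ·)
  let φ : K →ₗ[ℚ] Module.Dual ℚ K :=
    { toFun := fun x => T.comp (LinearMap.mulLeft ℚ x)
      map_add' := by intro x y; ext z; simp [add_mul]
      map_smul' := by intro q x; ext z; simp [smul_mul_assoc] }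
  have hφ : ∀ x y, φ x y = T (x * y) := fun x y => rfl
  have hφinj : Function.Injective φ := by
    rw [← LinearMap.ker_eq_bot, LinearMap.ker_eq_bot']
    intro x hx
    by_contra hx0
    obtain ⟨z, hz⟩ := hT
    have : φ x (x⁻¹ * z) = 0 := by rw [hx]; rfl
    rw [hφ, ← mul_assoc, mul_inv_cancel₀ hx0, one_mul] at this
    exact hz this
  let ψ : K ≃ₗ[ℚ] Module.Dual ℚ K :=
    φ.linearEquivOfInjective hφinj (Subspace.dual_finrank_eq).symm
  let fb : Basis (Fin 2) ℚ K := c.dualBasis.map ψ.symm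
  have hfb : ∀ i, ψ (fb i) = c.dualBasis i := by
    intro i; simp [fb]
  have hTf : ∀ i j, T (fb i * (bL j : K)) = if i = j then 1 else 0 := by
    intro i j
    have h1 : T (fb i * (bL j : K)) = φ (fb i) (c j) := by rw [hφ, hce]
    rw [h1]
    have h2 : φ (fb i) = ψ (fb i) := (φ.linearEquivOfInjective_apply hφinj _ (fb i)).symm
    rw [h2, hfb, Basis.dualBasis_apply_self]
    simp [eq_comm]

  -- the dual lattice
  let I : Submodule ℤ K :=
    { carrier := {x | ∀ y ∈ L, ∃ m : ℤ, T (x * y) = (m : ℚ)}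
      add_mem' := by
        intro a b ha hb y hy
        obtain ⟨m, hm⟩ := ha y hy
        obtain ⟨m', hm'⟩ := hb y hy
        exact ⟨m + m', by rw [add_mul, map_add, hm, hm']; push_cast; ring⟩
      zero_mem' := by intro y hy; exact ⟨0, by simp⟩
      smul_mem' := by
        intro n x hx y hy
        obtain ⟨m, hm⟩ := hx y hy
        refine ⟨n * m, ?_⟩
        rw [smul_mul_assoc, map_zsmul, hm, zsmul_eq_mul]
        push_cast; ring }
  have hImem : ∀ x : K, x ∈ I ↔ ∀ y ∈ L, ∃ m : ℤ, T (x * y) = (m : ℚ) := fun x => Iff.rfl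
  have hbLmem : ∀ j, (bL j : K) ∈ L := fun j => (bL j).2
  -- fb i belongs to I
  have hfmem : ∀ i, fb i ∈ I := by
    intro i y hy
    obtain ⟨n, hyrep⟩ : ∃ n : Fin 2 → ℤ, ∑ j, n j • (bL j : K) = y := by
      refine ⟨fun j => bL.repr ⟨y, hy⟩ j, ?_⟩
      have := congrArg (Submodule.subtype L) (bL.sum_repr ⟨y, hy⟩)
      rw [map_sum] at this
      simpa using this
    refine ⟨n i, ?_⟩
    rw [← hyrep, Finset.mul_sum, map_sum]
    simp_rw [mul_smul_comm, map_zsmul, hTf, zsmul_eq_mul]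
    simp
  -- I is the span of fb
  have hIspan : I = Submodule.span ℤ (Set.range fun i => fb i) := by
    apply le_antisymm
    · intro x hx
      have hxrep := fb.sum_repr x
      have hcoord : ∀ j, fb.repr x j = T (x * (bL j : K)) := by
        intro j
        have h5 : T (x * (bL j : K)) = fb.repr x j := by
          conv_lhs => rw [← hxrep]
          rw [Finset.sum_mul, map_sum]
          simp_rw [smul_mul_assoc, map_smul, hTf, smul_eq_mul]
          simp
        exact h5.symm
      choose m hm using fun j => hx (bL j : K) (hbLmem j)
      have hxval : x = ∑ j, (m j) • fb j := by
        calc x = ∑ j, fb.repr x j • fb j := hxrep.symm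
        _ = ∑ j, (m j) • fb j := by
            congr 1; funext j
            rw [hcoord j, hm j, Int.cast_smul_eq_zsmul]
      rw [hxval]
      exact Submodule.sum_mem _ fun j _ =>
        Submodule.smul_mem _ _ (Submodule.subset_span ⟨j, rfl⟩)
    · rw [Submodule.span_le]
      rintro - ⟨i, rfl⟩
      exact hfmem i
  -- basis of I
  have hfbint : LinearIndependent ℤ (fun i => fb i) :=
    (LinearIndependent.iff_fractionRing ℤ ℚ).2 fb.linearIndependent
  let bI : Basis (Fin 2) ℤ ↥I :=
    (Basis.span hfbint).map (LinearEquiv.ofEq _ _ hIspan.symm)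
  have hbI : ∀ i, (bI i : K) = fb i := by
    intro i
    simp only [bI, Basis.map_apply]
    have : ((LinearEquiv.ofEq _ _ hIspan.symm) ((Basis.span hfbint) i) : K)
        = ((Basis.span hfbint) i : K) := rfl
    rw [this, Basis.span_apply]
  refine ⟨I, bL, bI, ⟨?_, ?_, ?_⟩, hImem, ?_⟩
  · rw [hIspan]
    exact Submodule.fg_span (Set.finite_range _)
  · apply eq_top_iff.2
    rw [← fb.span_eq]
    apply Submodule.span_le.2
    rintro - ⟨i, rfl⟩
    exact Submodule.subset_span (hfmem i)
  · intro x hx z hz y hy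
    obtain ⟨m, hm⟩ := hz (x * y) (hLmul x hx y hy)
    exact ⟨m, by rw [show x * z * y = z * (x * y) by ring]; exact hm⟩
  · intro i j
    rw [hbI]
    exact hTf i j


/-- for a symplectic form `E` on `I₁ ⊕ I₂` with self-adjoint `O_D`-action
there are fractional ideals `I ⊇ I₁` (resp. `I ⊇ I₂`) such that `E` is symplectic of type
`(1,1)` on `I ⊕ I₂` (resp. on `I₁ ⊕ I`). -/
theorem stmt_10 (D : ℕ) (hD0 : 0 < D) (hDns : ¬ IsSquare D)
    (hDmod : D % 4 = 0 ∨ D % 4 = 1)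
    (K : Type) [Field K] [CharZero K]
    (sqrtD : K) (hsq : sqrtD ^ 2 = (D : K))
    (hgen : ∀ x : K, ∃ a b : ℚ, x = (a : K) + (b : K) * sqrtD)
    (σ : K →+* K) (hσ : σ sqrtD = -sqrtD)
    (OD : Submodule ℤ K)
    (hOD : ∀ x : K, x ∈ OD ↔ ∃ m l : ℤ, x = (m : K) + (l : K) * (((D : K) + sqrtD) / 2))
    (I₁ I₂ : Submodule ℤ K) (hI₁ : IsFracIdealOf OD I₁) (hI₂ : IsFracIdealOf OD I₂)
    (E : (K × K) →ₗ[ℚ] (K × K) →ₗ[ℚ] ℚ)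
    (halt : ∀ v : K × K, E v v = 0)
    (hint : ∀ v ∈ I₁.prod I₂, ∀ w ∈ I₁.prod I₂, ∃ m : ℤ, E v w = (m : ℚ))
    (hnd : ∀ v ∈ I₁.prod I₂, (∀ w ∈ I₁.prod I₂, E v w = 0) → v = 0)
    (hsa : ∀ x ∈ OD, ∀ v ∈ I₁.prod I₂, ∀ w ∈ I₁.prod I₂,
      E (x * Prod.fst v, x * Prod.snd v) w = E v (x * Prod.fst w, x * Prod.snd w)) :
    (∃ I : Submodule ℤ K, IsFracIdealOf OD I ∧ I₁ ≤ I ∧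
      SympQTypeOn E (I.prod I₂) 2 ![1, 1]) ∧
    (∃ I : Submodule ℤ K, IsFracIdealOf OD I ∧ I₂ ≤ I ∧
      SympQTypeOn E (I₁.prod I) 2 ![1, 1]) := by
  classical
  obtain ⟨bK, hdim⟩ := aux_basisK hDns sqrtD hsq hgen
  haveI : FiniteDimensional ℚ K := Module.Finite.of_basis bK
  -- span facts
  have hspOD : Submodule.span ℚ (OD : Set K) = ⊤ := by
    rw [eq_top_iff]
    rintro x -
    obtain ⟨a, b, hab⟩ := hgen x
    have h1 : (1 : K) ∈ OD := (hOD 1).2 ⟨1, 0, by push_cast; ring⟩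
    have hγ : ((D : K) + sqrtD) / 2 ∈ OD := (hOD _).2 ⟨0, 1, by push_cast; ring⟩
    have hx : x = (a - b * D) • (1 : K) + (2 * b) • (((D : K) + sqrtD) / 2) := by
      rw [Rat.smul_def, Rat.smul_def, hab]; push_cast; ring
    rw [hx]
    exact Submodule.add_mem _
      (Submodule.smul_mem _ _ (Submodule.subset_span h1))
      (Submodule.smul_mem _ _ (Submodule.subset_span hγ))
  have hsp : Submodule.span ℚ ((I₁.prod I₂ : Submodule ℤ (K × K)) : Set (K × K)) = ⊤ := by
    rw [eq_top_iff]
    rintro ⟨a, b⟩ -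
    have ha : a ∈ Submodule.span ℚ (I₁ : Set K) := by rw [hI₁.2.1]; trivial
    have hb : b ∈ Submodule.span ℚ (I₂ : Set K) := by rw [hI₂.2.1]; trivial
    have h1 : ((a, (0 : K)) : K × K) ∈ Submodule.span ℚ ((I₁.prod I₂ : Submodule ℤ (K × K)) : Set (K × K)) := by
      have hmem : ((a, (0 : K)) : K × K) ∈
          Submodule.map (LinearMap.inl ℚ K K) (Submodule.span ℚ (I₁ : Set K)) := ⟨a, ha, rfl⟩
      rw [Submodule.map_span] at hmem
      refine Submodule.span_mono ?_ hmem
      rintro - ⟨x, hx, rfl⟩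
      exact Submodule.mem_prod.2 ⟨hx, Submodule.zero_mem _⟩
    have h2 : (((0 : K), b) : K × K) ∈ Submodule.span ℚ ((I₁.prod I₂ : Submodule ℤ (K × K)) : Set (K × K)) := by
      have hmem : (((0 : K), b) : K × K) ∈
          Submodule.map (LinearMap.inr ℚ K K) (Submodule.span ℚ (I₂ : Set K)) := ⟨b, hb, rfl⟩
      rw [Submodule.map_span] at hmem
      refine Submodule.span_mono ?_ hmem
      rintro - ⟨x, hx, rfl⟩
      exact Submodule.mem_prod.2 ⟨Submodule.zero_mem _, hx⟩
    have : ((a, b) : K × K) = (a, 0) + (0, b) := by simp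
    rw [this]
    exact Submodule.add_mem _ h1 h2
  -- self-adjointness extended
  have hsaOD : ∀ x ∈ OD, ∀ v w : K × K, E (x * v.1, x * v.2) w = E v (x * w.1, x * w.2) := by
    intro x hx
    let mx : (K × K) →ₗ[ℚ] (K × K) := (LinearMap.mulLeft ℚ x).prodMap (LinearMap.mulLeft ℚ x)
    have key : E.compl₁₂ mx LinearMap.id = E.compl₁₂ LinearMap.id mx := by
      apply LinearMap.ext_on hsp
      intro v hv
      apply LinearMap.ext_on hsp
      intro w hw
      have := hsa x hx v hv w hw
      simpa [mx, LinearMap.compl₁₂_apply] using this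
    intro v w
    have := LinearMap.congr_fun (LinearMap.congr_fun key v) w
    simpa [mx, LinearMap.compl₁₂_apply] using this
  have hsaK : ∀ x : K, ∀ v w : K × K, E (x * v.1, x * v.2) w = E v (x * w.1, x * w.2) := by
    intro x v w
    let L1 : K →ₗ[ℚ] ℚ :=
      (E.flip w).comp ((LinearMap.mulRight ℚ v.1).prod (LinearMap.mulRight ℚ v.2))
    let L2 : K →ₗ[ℚ] ℚ :=
      (E v).comp ((LinearMap.mulRight ℚ w.1).prod (LinearMap.mulRight ℚ w.2))
    have hLL : L1 = L2 := by
      apply LinearMap.ext_on hspOD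
      intro y hy
      have := hsaOD y hy v w
      simpa [L1, L2, mul_comm] using this
    have := LinearMap.congr_fun hLL x
    simpa [L1, L2, mul_comm] using this
  -- skew-symmetry
  have hskew : ∀ v w : K × K, E v w = - E w v := by
    intro v w
    have h := halt (v + w)
    rw [map_add] at h
    simp only [LinearMap.add_apply, map_add, halt v, halt w] at h
    linarith
  -- structure lemmas
  set T : K →ₗ[ℚ] ℚ := (E ((1 : K), (0 : K))).comp (LinearMap.inr ℚ K K) with hT
  have hTdef : ∀ z : K, T z = E ((1 : K), (0 : K)) ((0 : K), z) := fun z => rfl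
  have hElr : ∀ x y : K, E ((x, (0 : K)) : K × K) (((0 : K), y) : K × K) = T (x * y) := by
    intro x y
    have h := hsaK x ((1 : K), (0 : K)) ((0 : K), y)
    simp only [mul_one, mul_zero] at h
    rw [hTdef]
    exact h
  have hEll : ∀ x y : K, E ((x, (0 : K)) : K × K) ((y, (0 : K)) : K × K) = 0 := by
    intro x y
    have h1 := hsaK x ((1 : K), (0 : K)) ((y, (0 : K)) : K × K)
    simp only [mul_one, mul_zero] at h1
    have h2 := hsaK y ((1 : K), (0 : K)) ((x, (0 : K)) : K × K)
    simp only [mul_one, mul_zero] at h2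
    have h3 := hskew ((x, (0 : K)) : K × K) ((y, (0 : K)) : K × K)
    have hc : E ((1 : K), (0 : K)) ((y * x, (0 : K)) : K × K)
        = E ((1 : K), (0 : K)) ((x * y, (0 : K)) : K × K) := by rw [mul_comm]
    linarith
  have hErr : ∀ x y : K, E (((0 : K), x) : K × K) (((0 : K), y) : K × K) = 0 := by
    intro x y
    have h1 := hsaK x (((0 : K), (1 : K)) : K × K) (((0 : K), y) : K × K)
    simp only [mul_one, mul_zero] at h1
    have h2 := hsaK y (((0 : K), (1 : K)) : K × K) (((0 : K), x) : K × K)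
    simp only [mul_one, mul_zero] at h2
    have h3 := hskew (((0 : K), x) : K × K) (((0 : K), y) : K × K)
    have hc : E (((0 : K), (1 : K)) : K × K) (((0 : K), y * x) : K × K)
        = E (((0 : K), (1 : K)) : K × K) (((0 : K), x * y) : K × K) := by rw [mul_comm]
    linarith
  -- T is nonzero
  have hTne : ∃ z, T z ≠ 0 := by
    by_contra h
    push_neg at h
    obtain ⟨x₀, hx₀I, hx₀⟩ : ∃ x ∈ I₁, x ≠ 0 := by
      by_contra h'
      push_neg at h'
      have hsub : (I₁ : Set K) ⊆ {0} := fun x hx => h' x hx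
      have hb : Submodule.span ℚ (I₁ : Set K) ≤ Submodule.span ℚ ({0} : Set K) :=
        Submodule.span_mono hsub
      rw [hI₁.2.1, Submodule.span_zero_singleton] at hb
      have h1 : (1 : K) ∈ (⊥ : Submodule ℚ K) := hb Submodule.mem_top
      exact one_ne_zero (Submodule.mem_bot ℚ |>.1 h1)
    have hv0 : ((x₀, (0 : K)) : K × K) = 0 := by
      apply hnd _ (Submodule.mem_prod.2 ⟨hx₀I, Submodule.zero_mem _⟩)
      intro w hw
      have hw' : w = ((w.1, (0 : K)) : K × K) + (((0 : K), w.2) : K × K) := by simp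
      rw [hw', map_add, hEll, hElr, h]
      simp
    exact hx₀ (congrArg Prod.fst hv0)
  constructor
  · -- first part: enlarge I₁
    obtain ⟨I, bL, bI, hIfrac, hImem, hTf⟩ :=
      aux_master hdim OD I₂ T hTne hI₂.1 hI₂.2.1 hI₂.2.2
    refine ⟨I, hIfrac, ?_, ?_⟩
    · intro x hx
      refine (hImem x).2 (fun y hy => ?_)
      obtain ⟨m, hm⟩ := hint ((x, (0 : K)) : K × K) (Submodule.mem_prod.2 ⟨hx, Submodule.zero_mem _⟩)
        (((0 : K), y) : K × K) (Submodule.mem_prod.2 ⟨Submodule.zero_mem _, hy⟩)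
      exact ⟨m, by rw [← hElr]; exact hm⟩
    · refine ⟨(bI.prod bL).map (auxSubProd I I₂).symm, ?_, ?_, ?_, ?_, ?_⟩
      · intro i j
        rw [Basis.map_apply, Basis.map_apply, auxSubProd_symm_coe, auxSubProd_symm_coe]
        simp only [Basis.prod_apply_inl_fst, Basis.prod_apply_inl_snd]
        simpa using hEll (bI i : K) (bI j : K)
      · intro i j
        rw [Basis.map_apply, Basis.map_apply, auxSubProd_symm_coe, auxSubProd_symm_coe]
        simp only [Basis.prod_apply_inr_fst, Basis.prod_apply_inr_snd]
        simpa using hErr (bL i : K) (bL j : K)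
      · intro i j
        rw [Basis.map_apply, Basis.map_apply, auxSubProd_symm_coe, auxSubProd_symm_coe]
        simp only [Basis.prod_apply_inl_fst, Basis.prod_apply_inl_snd,
          Basis.prod_apply_inr_fst, Basis.prod_apply_inr_snd]
        have := hElr (bI i : K) (bL j : K)
        simp only [ZeroMemClass.coe_zero] at this ⊢
        rw [this, hTf i j]
        fin_cases i <;> fin_cases j <;> simp
      · intro i; fin_cases i <;> norm_num
      · intro i j _; fin_cases i <;> fin_cases j <;> simp
  · -- second part: enlarge I₂
    obtain ⟨I, bL, bI, hIfrac, hImem, hTf⟩ :=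
      aux_master hdim OD I₁ T hTne hI₁.1 hI₁.2.1 hI₁.2.2
    refine ⟨I, hIfrac, ?_, ?_⟩
    · intro x hx
      refine (hImem x).2 (fun y hy => ?_)
      obtain ⟨m, hm⟩ := hint ((y, (0 : K)) : K × K) (Submodule.mem_prod.2 ⟨hy, Submodule.zero_mem _⟩)
        (((0 : K), x) : K × K) (Submodule.mem_prod.2 ⟨Submodule.zero_mem _, hx⟩)
      exact ⟨m, by rw [mul_comm, ← hElr]; exact hm⟩
    · refine ⟨(bL.prod bI).map (auxSubProd I₁ I).symm, ?_, ?_, ?_, ?_, ?_⟩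
      · intro i j
        rw [Basis.map_apply, Basis.map_apply, auxSubProd_symm_coe, auxSubProd_symm_coe]
        simp only [Basis.prod_apply_inl_fst, Basis.prod_apply_inl_snd]
        simpa using hEll (bL i : K) (bL j : K)
      · intro i j
        rw [Basis.map_apply, Basis.map_apply, auxSubProd_symm_coe, auxSubProd_symm_coe]
        simp only [Basis.prod_apply_inr_fst, Basis.prod_apply_inr_snd]
        simpa using hErr (bI i : K) (bI j : K)
      · intro i j
        rw [Basis.map_apply, Basis.map_apply, auxSubProd_symm_coe, auxSubProd_symm_coe]
        simp only [Basis.prod_apply_inl_fst, Basis.prod_apply_inl_snd,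
          Basis.prod_apply_inr_fst, Basis.prod_apply_inr_snd]
        have h1 := hElr (bL i : K) (bI j : K)
        simp only [ZeroMemClass.coe_zero] at h1 ⊢
        rw [h1, mul_comm, hTf j i]
        fin_cases i <;> fin_cases j <;> simp
      · intro i; fin_cases i <;> norm_num
      · intro i j _; fin_cases i <;> fin_cases j <;> simp
end

section
/- Let 𝔞 be a nonzero ideal of O_D, let I be a fractional ideal of K, and let E be a symplectic form of type (1,1) on 𝔞 ⊕ I such that the diagonal multiplication action of O_D is self-adjoint with respect to E. Then there exists an isomorphism of symplectic O_D-modules θ : (𝔞 ⊕ I, E) → (𝔞 ⊕ 𝔞^∨, ⟨·,·⟩) with θ((λ,0)) = (λ,0) for all λ ∈ 𝔞 and θ({0} ⊕ I) = {0} ⊕ 𝔞^∨, where ⟨·,·⟩ is the trace pairing. -/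
/-- The trace pairing `⟨(x,y),(x̃,ỹ)⟩ = tr(x̃y − xỹ)` on `K²`. -/
def traceFormK {K : Type} [Field K] (σ : K →+* K) (v w : K × K) : K :=
  (w.1 * v.2 - v.1 * w.2) + σ (w.1 * v.2 - v.1 * w.2)

/-- The inverse different `A^∨ = {x ∈ K : tr(xA) ⊆ ℤ}` of a lattice `A ⊆ K`. -/
def dualLat {K : Type} [Field K] (σ : K →+* K) (A : Submodule ℤ K) : Submodule ℤ K where
  carrier := {x | ∀ y ∈ A, ∃ m : ℤ, x * y + σ (x * y) = (m : K)}
  add_mem' := by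
    intro a b ha hb y hy
    obtain ⟨m, hm⟩ := ha y hy
    obtain ⟨l, hl⟩ := hb y hy
    refine ⟨m + l, ?_⟩
    have h1 : (a + b) * y + σ ((a + b) * y) = (a * y + σ (a * y)) + (b * y + σ (b * y)) := by
      rw [add_mul, map_add]; ring
    rw [h1, hm, hl]; push_cast; ring
  zero_mem' := by
    intro y hy
    exact ⟨0, by simp⟩
  smul_mem' := by
    intro c x hx y hy
    obtain ⟨m, hm⟩ := hx y hy
    refine ⟨c * m, ?_⟩
    have h1 : (c • x) * y = c • (x * y) := smul_mul_assoc c x y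
    rw [h1, map_zsmul, ← smul_add, hm, zsmul_eq_mul]
    push_cast; ring

/-- a type `(1,1)` symplectic form on `𝔞 ⊕ I` with self-adjoint `O_D`-action
is isomorphic, as a symplectic `O_D`-module, to `(𝔞 ⊕ 𝔞^∨, ⟨·,·⟩)` by an isomorphism fixing
`𝔞 ⊕ 0` pointwise and carrying `0 ⊕ I` onto `0 ⊕ 𝔞^∨`. -/
theorem stmt_11 (D : ℕ) (hD0 : 0 < D) (hDns : ¬ IsSquare D)
    (hDmod : D % 4 = 0 ∨ D % 4 = 1)
    (K : Type) [Field K] [CharZero K]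
    (sqrtD : K) (hsq : sqrtD ^ 2 = (D : K))
    (hgen : ∀ x : K, ∃ a b : ℚ, x = (a : K) + (b : K) * sqrtD)
    (σ : K →+* K) (hσ : σ sqrtD = -sqrtD)
    (OD : Submodule ℤ K)
    (hOD : ∀ x : K, x ∈ OD ↔ ∃ m l : ℤ, x = (m : K) + (l : K) * (((D : K) + sqrtD) / 2))
    (𝔄 : Submodule ℤ K) (hid : IsIdealOfOrd OD 𝔄) (hne : 𝔄 ≠ ⊥)
    (I : Submodule ℤ K) (hI : IsFracIdealOf OD I)
    (E : (K × K) →ₗ[ℚ] (K × K) →ₗ[ℚ] ℚ)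
    (halt : ∀ v : K × K, E v v = 0)
    (htype : SympQTypeOn E (𝔄.prod I) 2 ![1, 1])
    (hsa : ∀ x ∈ OD, ∀ v ∈ 𝔄.prod I, ∀ w ∈ 𝔄.prod I,
      E (x * Prod.fst v, x * Prod.snd v) w = E v (x * Prod.fst w, x * Prod.snd w)) :
    ∃ θ : (K × K) →ₗ[ℚ] (K × K),
      Set.BijOn θ (𝔄.prod I : Set (K × K)) ((𝔄.prod (dualLat σ 𝔄)) : Set (K × K)) ∧
      (∀ x ∈ OD, ∀ v : K × K, θ (x * v.1, x * v.2) = (x * (θ v).1, x * (θ v).2)) ∧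
      (∀ v ∈ 𝔄.prod I, ∀ w ∈ 𝔄.prod I,
        traceFormK σ (θ v) (θ w) = ((E v w : ℚ) : K)) ∧
      (∀ x ∈ 𝔄, θ (x, 0) = (x, 0)) ∧
      θ '' {p : K × K | p.1 = 0 ∧ p.2 ∈ I}
        = {p : K × K | p.1 = 0 ∧ p.2 ∈ dualLat σ 𝔄} := by
  classical
  obtain ⟨b, hb1, hb2, hb3, -, -⟩ := htype
  -- basic facts
  have hq : ∀ q : ℚ, σ (q : K) = (q : K) := fun q => map_ratCast σ q
  have hDK : (D : K) ≠ 0 := Nat.cast_ne_zero.mpr hD0.ne'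
  have hDQ : (D : ℚ) ≠ 0 := Nat.cast_ne_zero.mpr hD0.ne'
  have hsD : sqrtD ≠ 0 := by
    intro h
    rw [h] at hsq
    simp at hsq
    exact hDK hsq.symm
  have htr0 : ∀ z : K, z + σ z = 0 → z * sqrtD + σ (z * sqrtD) = 0 → z = 0 := by
    intro z h1 h2
    rw [map_mul, hσ] at h2
    have h3 : (z - σ z) * sqrtD = 0 := by linear_combination h2
    have h4 : z = σ z := by
      rcases mul_eq_zero.mp h3 with h | h
      · exact sub_eq_zero.mp h
      · exact absurd h hsD
    have h5 : z + z = 0 := by nth_rewrite 2 [h4]; exact h1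
    exact add_self_eq_zero.mp h5
  have hanti : ∀ v w : K × K, E w v = - E v w := by
    intro v w
    have h := halt (v + w)
    simp only [map_add, LinearMap.add_apply, halt] at h
    linarith
  set γ : K := ((D : K) + sqrtD) / 2 with hγdef
  have hγOD : γ ∈ OD := (hOD γ).mpr ⟨0, 1, by push_cast; ring⟩
  have honeOD : (1 : K) ∈ OD := (hOD 1).mpr ⟨1, 0, by push_cast; ring⟩
  -- 𝔄 spans K over ℚ
  obtain ⟨a0, ha0A, ha0⟩ := Submodule.exists_mem_ne_zero_of_ne_bot hne
  have hspanA : ∀ x : K, x ∈ Submodule.span ℚ (𝔄 : Set K) := by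
    intro x
    obtain ⟨c, d, hcd⟩ := hgen (x / a0)
    have hx0 : x = ((c : K) + (d : K) * sqrtD) * a0 := by
      rw [← hcd]; field_simp
    have hmem1 : a0 ∈ Submodule.span ℚ (𝔄 : Set K) := Submodule.subset_span ha0A
    have hmem2 : γ * a0 ∈ Submodule.span ℚ (𝔄 : Set K) :=
      Submodule.subset_span (hid.2 γ hγOD a0 ha0A)
    have hxe : x = (c - d * D) • a0 + (2 * d) • (γ * a0) := by
      rw [Rat.smul_def, Rat.smul_def, hγdef]
      push_cast
      linear_combination hx0
    rw [hxe]
    exact Submodule.add_mem _ (Submodule.smul_mem _ _ hmem1) (Submodule.smul_mem _ _ hmem2)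
  have hspanΛ : ∀ v : K × K, v ∈ Submodule.span ℚ ((𝔄.prod I : Submodule ℤ (K × K)) : Set (K × K)) := by
    intro v
    have h1 : ((v.1, (0:K)) : K × K) ∈ Submodule.span ℚ ((𝔄.prod I : Submodule ℤ (K × K)) : Set (K × K)) := by
      have hm := Submodule.mem_map_of_mem (f := LinearMap.inl ℚ K K) (hspanA v.1)
      rw [Submodule.map_span] at hm
      have hsub : (LinearMap.inl ℚ K K) '' (𝔄 : Set K) ⊆ ((𝔄.prod I : Submodule ℤ (K × K)) : Set (K × K)) := by
        rintro - ⟨x, hx, rfl⟩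
        exact Submodule.mem_prod.mpr ⟨hx, I.zero_mem⟩
      exact Submodule.span_mono hsub hm
    have h2 : ((0:K), v.2) ∈ Submodule.span ℚ ((𝔄.prod I : Submodule ℤ (K × K)) : Set (K × K)) := by
      have hv2 : v.2 ∈ Submodule.span ℚ (I : Set K) := by
        rw [hI.2.1]; trivial
      have hm := Submodule.mem_map_of_mem (f := LinearMap.inr ℚ K K) hv2
      rw [Submodule.map_span] at hm
      have hsub : (LinearMap.inr ℚ K K) '' (I : Set K) ⊆ ((𝔄.prod I : Submodule ℤ (K × K)) : Set (K × K)) := by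
        rintro - ⟨x, hx, rfl⟩
        exact Submodule.mem_prod.mpr ⟨𝔄.zero_mem, hx⟩
      exact Submodule.span_mono hsub hm
    have : v = ((v.1, (0:K)) : K × K) + ((0:K), v.2) := by
      apply Prod.ext <;> simp
    rw [this]
    exact Submodule.add_mem _ h1 h2
  -- self-adjointness extends to all of K × K, for x ∈ OD
  have hsaO : ∀ x ∈ OD, ∀ v w : K × K, E (x * v.1, x * v.2) w = E v (x * w.1, x * w.2) := by
    intro x hx v w
    have key : ∀ u : K × K, u ∈ Submodule.span ℚ ((𝔄.prod I : Submodule ℤ (K × K)) : Set (K × K)) →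
        ∀ z : K × K, z ∈ Submodule.span ℚ ((𝔄.prod I : Submodule ℤ (K × K)) : Set (K × K)) →
        E (x * u.1, x * u.2) z = E u (x * z.1, x * z.2) := by
      intro u hu
      refine Submodule.span_induction (p := fun u _ => ∀ z ∈ Submodule.span ℚ ((𝔄.prod I : Submodule ℤ (K × K)) : Set (K × K)),
        E (x * u.1, x * u.2) z = E u (x * z.1, x * z.2)) ?_ ?_ ?_ ?_ hu
      · intro y hy z hz
        refine Submodule.span_induction (p := fun z _ =>
          E (x * y.1, x * y.2) z = E y (x * z.1, x * z.2)) ?_ ?_ ?_ ?_ hz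
        · intro z' hz'; exact hsa x hx y hy z' hz'
        · simp [Prod.mk_zero_zero]
        · intro a c _ _ ha hc
          have e : (x * (a + c).1, x * (a + c).2) = ((x * a.1, x * a.2) : K × K) + (x * c.1, x * c.2) := by
            apply Prod.ext <;> simp <;> ring
          rw [e]; simp only [map_add, LinearMap.add_apply]; rw [ha, hc]
        · intro q a _ ha
          have e : (x * (q • a).1, x * (q • a).2) = q • ((x * a.1, x * a.2) : K × K) := by
            apply Prod.ext <;> simp [Rat.smul_def] <;> ring
          rw [e]; simp only [map_smul, LinearMap.smul_apply]; rw [ha]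
      · intro z hz; simp [Prod.mk_zero_zero]
      · intro a c _ _ ha hc z hz
        have e : (x * (a + c).1, x * (a + c).2) = ((x * a.1, x * a.2) : K × K) + (x * c.1, x * c.2) := by
          apply Prod.ext <;> simp <;> ring
        rw [e]
        simp only [map_add, LinearMap.add_apply, ha z hz, hc z hz]
      · intro q a _ ha z hz
        have e : (x * (q • a).1, x * (q • a).2) = q • ((x * a.1, x * a.2) : K × K) := by
          apply Prod.ext <;> simp [Rat.smul_def] <;> ring
        rw [e]
        simp only [map_smul, LinearMap.smul_apply, ha z hz]
    exact key v (hspanΛ v) w (hspanΛ w)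
  -- self-adjointness for arbitrary x : K
  have hsaK : ∀ (x : K) (v w : K × K), E (x * v.1, x * v.2) w = E v (x * w.1, x * w.2) := by
    intro x v w
    obtain ⟨c, d, hcd⟩ := hgen x
    have hx : x = ((c - d * D : ℚ) : K) * 1 + ((2 * d : ℚ) : K) * γ := by
      rw [hcd, hγdef]; push_cast; ring
    have e : ∀ u : K × K, (x * u.1, x * u.2)
        = (c - d * D) • (((1:K) * u.1, (1:K) * u.2) : K × K) + (2 * d) • ((γ * u.1, γ * u.2) : K × K) := by
      intro u
      apply Prod.ext <;> simp only [Prod.fst_add, Prod.snd_add, Prod.smul_fst, Prod.smul_snd,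
        Rat.smul_def] <;> rw [hx] <;> push_cast <;> ring
    rw [e v, e w]
    simp only [map_add, LinearMap.add_apply, map_smul, LinearMap.smul_apply,
      hsaO 1 honeOD v w, hsaO γ hγOD v w]
  -- the representing element β
  set p : ℚ := E ((1:K), (0:K)) ((0:K), (1:K)) with hpdef
  set qq : ℚ := E ((1:K), (0:K)) ((0:K), sqrtD) with hqqdef
  obtain ⟨β, hβdef⟩ : ∃ β : K, β = ((p / 2 : ℚ) : K) + ((qq / (2 * D) : ℚ) : K) * sqrtD :=
    ⟨_, rfl⟩
  have hσβ : σ β = ((p / 2 : ℚ) : K) - ((qq / (2 * D) : ℚ) : K) * sqrtD := by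
    rw [hβdef, map_add, map_mul, hq, hq, hσ]; ring
  have htrβ : β + σ β = ((p : ℚ) : K) := by
    rw [hσβ, hβdef]; push_cast; ring
  have htrβD : β * sqrtD - σ β * sqrtD = ((qq : ℚ) : K) := by
    have hv : (2 * (qq / (2 * D)) * D : ℚ) = qq := by field_simp
    calc β * sqrtD - σ β * sqrtD = 2 * ((qq / (2 * D) : ℚ) : K) * sqrtD ^ 2 := by
          rw [hσβ, hβdef]; ring
      _ = ((2 * (qq / (2 * D)) * D : ℚ) : K) := by rw [hsq]; push_cast; ring
      _ = ((qq : ℚ) : K) := by rw [hv]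
  have hL : ∀ x : K, ((E ((1:K), (0:K)) ((0:K), x) : ℚ) : K) = β * x + σ (β * x) := by
    intro x
    obtain ⟨c, d, hcd⟩ := hgen x
    have hlin : E ((1:K), (0:K)) ((0:K), x) = c * p + d * qq := by
      rw [hcd]
      have e : (((0:K), (c:K) + (d:K) * sqrtD) : K × K) = c • (((0:K), (1:K)) : K × K) + d • (((0:K), sqrtD) : K × K) := by
        apply Prod.ext <;> simp [Rat.smul_def]
      rw [e, map_add, map_smul, map_smul, smul_eq_mul, smul_eq_mul, hpdef, hqqdef]
    rw [hlin, hcd]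
    have hσx : σ (β * ((c:K) + (d:K) * sqrtD)) = σ β * ((c:K) - (d:K) * sqrtD) := by
      rw [map_mul, map_add, map_mul, hq, hq, hσ]; ring
    rw [hσx]
    push_cast
    linear_combination (-(c : K)) * htrβ - (d : K) * htrβD
  -- the explicit formula for E
  have hE : ∀ x1 x2 y1 y2 : K, ((E (x1, x2) (y1, y2) : ℚ) : K)
      = (β * (x1 * y2) + σ (β * (x1 * y2))) - (β * (x2 * y1) + σ (β * (x2 * y1))) := by
    have hE11 : ∀ x y : K, E (x, (0:K)) (y, (0:K)) = 0 := by
      intro x y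
      have h1 : E (x, (0:K)) (y, (0:K)) = E ((1:K), (0:K)) (x * y, (0:K)) := by
        have := hsaK x ((1:K), (0:K)) ((y:K), (0:K)); simpa using this
      have h2 : E (y, (0:K)) (x, (0:K)) = E ((1:K), (0:K)) (y * x, (0:K)) := by
        have := hsaK y ((1:K), (0:K)) ((x:K), (0:K)); simpa using this
      have h3 := hanti ((x:K), (0:K)) ((y:K), (0:K))
      rw [h1, h2, mul_comm y x, ← h1] at h3
      linarith
    have hE22 : ∀ x y : K, E ((0:K), x) ((0:K), y) = 0 := by
      intro x y
      have h1 : E ((0:K), x) ((0:K), y) = E ((0:K), (1:K)) ((0:K), x * y) := by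
        have := hsaK x ((0:K), (1:K)) ((0:K), (y:K)); simpa using this
      have h2 : E ((0:K), y) ((0:K), x) = E ((0:K), (1:K)) ((0:K), y * x) := by
        have := hsaK y ((0:K), (1:K)) ((0:K), (x:K)); simpa using this
      have h3 := hanti (((0:K), x) : K × K) (((0:K), y) : K × K)
      rw [h1, h2, mul_comm y x, ← h1] at h3
      linarith
    have hE12 : ∀ x y : K, E (x, (0:K)) ((0:K), y) = E ((1:K), (0:K)) ((0:K), x * y) := by
      intro x y
      have := hsaK x ((1:K), (0:K)) (((0:K), y) : K × K); simpa using this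
    intro x1 x2 y1 y2
    have hd : E (x1, x2) (y1, y2)
        = E (x1, (0:K)) (y1, (0:K)) + E (x1, (0:K)) ((0:K), y2)
          + E ((0:K), x2) (y1, (0:K)) + E ((0:K), x2) ((0:K), y2) := by
      have e1 : ((x1, x2) : K × K) = (x1, (0:K)) + ((0:K), x2) := by
        apply Prod.ext <;> simp
      have e2 : ((y1, y2) : K × K) = (y1, (0:K)) + ((0:K), y2) := by
        apply Prod.ext <;> simp
      rw [e1, e2]
      simp only [map_add, LinearMap.add_apply]
      ring
    have h21 : E ((0:K), x2) (y1, (0:K)) = - E ((1:K), (0:K)) ((0:K), x2 * y1) := by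
      rw [hanti ((y1, (0:K)) : K × K) (((0:K), x2) : K × K), hE12 y1 x2, mul_comm y1 x2]
    rw [hd, hE11, hE22]
    push_cast
    rw [hE12 x1 y2, h21]
    push_cast
    rw [hL (x1 * y2), hL (x2 * y1)]
    ring
  -- the symplectic basis values
  have hd1 : ∀ i : Fin 2, (![1, 1] i : ℕ) = 1 := by decide
  have hEb' : ∀ i j : Fin 2, E (b (Sum.inl i) : K × K) (b (Sum.inr j) : K × K)
      = if i = j then 1 else 0 := by
    intro i j
    rw [hb3 i j, hd1 i]
    norm_num
  have hEb : ∀ i j : Fin 2, E (b (Sum.inr i) : K × K) (b (Sum.inl j) : K × K)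
      = if j = i then -1 else 0 := by
    intro i j
    rw [hanti (b (Sum.inl j) : K × K) (b (Sum.inr i) : K × K), hEb' j i]
    split_ifs <;> norm_num
  -- β is nonzero
  have hβ : β ≠ 0 := by
    intro h0
    have h1 : E (b (Sum.inl 0) : K × K) (b (Sum.inr 0) : K × K) = 1 := by
      rw [hEb' 0 0]; norm_num
    have h2 := hE (b (Sum.inl 0) : K × K).1 (b (Sum.inl 0) : K × K).2
      (b (Sum.inr 0) : K × K).1 (b (Sum.inr 0) : K × K).2
    rw [h0] at h2
    simp only [zero_mul, map_zero, add_zero, sub_zero, sub_self] at h2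
    rw [h1] at h2
    norm_num at h2
  -- membership in the ℤ-span of the basis vectors
  have hspanZ : ∀ v ∈ 𝔄.prod I, v ∈ Submodule.span ℤ (Set.range (fun i => (b i : K × K))) := by
    intro v hv
    have h1 : (⟨v, hv⟩ : 𝔄.prod I) ∈ Submodule.span ℤ (Set.range b) := Module.Basis.mem_span b _
    have h2 := Submodule.mem_map_of_mem (f := (𝔄.prod I).subtype) h1
    rw [Submodule.map_span, ← Set.range_comp] at h2
    exact h2
  -- E takes integer values on Λ
  have hint : ∀ v ∈ 𝔄.prod I, ∀ w ∈ 𝔄.prod I, ∃ m : ℤ, E v w = (m : ℚ) := by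
    have base : ∀ i j : Fin 2 ⊕ Fin 2, ∃ m : ℤ, E (b i : K × K) (b j : K × K) = (m : ℚ) := by
      intro i j
      rcases i with i | i <;> rcases j with j | j
      · exact ⟨0, by rw [hb1 i j]; norm_num⟩
      · exact ⟨if i = j then 1 else 0, by rw [hEb' i j]; split_ifs <;> norm_num⟩
      · exact ⟨if j = i then -1 else 0, by rw [hEb i j]; split_ifs <;> norm_num⟩
      · exact ⟨0, by rw [hb2 i j]; norm_num⟩
    intro v hv w hw
    have hv' := hspanZ v hv
    have hw' := hspanZ w hw
    revert w
    refine Submodule.span_induction (p := fun v _ => ∀ w ∈ 𝔄.prod I,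
      w ∈ Submodule.span ℤ (Set.range fun i => (b i : K × K)) → ∃ m : ℤ, E v w = (m : ℚ)) ?_ ?_ ?_ ?_ hv'
    · rintro - ⟨i, rfl⟩ w hw hw'
      refine Submodule.span_induction (p := fun w _ => ∃ m : ℤ, E (b i : K × K) w = (m : ℚ))
        ?_ ?_ ?_ ?_ hw'
      · rintro - ⟨j, rfl⟩; exact base i j
      · exact ⟨0, by norm_num⟩
      · rintro x y _ _ ⟨m1, hm1⟩ ⟨m2, hm2⟩
        exact ⟨m1 + m2, by rw [map_add, hm1, hm2]; push_cast; ring⟩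
      · rintro n x _ ⟨m, hm⟩
        refine ⟨n * m, ?_⟩
        rw [map_zsmul (E (b i : K × K)) n x, hm, zsmul_eq_mul]
        push_cast; ring
    · intro w hw hw'; exact ⟨0, by norm_num⟩
    · rintro x y _ _ hx hy w hw hw'
      obtain ⟨m1, hm1⟩ := hx w hw hw'
      obtain ⟨m2, hm2⟩ := hy w hw hw'
      refine ⟨m1 + m2, ?_⟩
      rw [map_add, LinearMap.add_apply, hm1, hm2]; push_cast; ring
    · rintro n x _ hx w hw hw'
      obtain ⟨m, hm⟩ := hx w hw hw'
      refine ⟨n * m, ?_⟩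
      rw [map_zsmul E n x, LinearMap.smul_apply, hm, zsmul_eq_mul]
      push_cast; ring
  obtain ⟨c, hcdef⟩ : ∃ c : K, c = -β := ⟨_, rfl⟩
  have hc : c ≠ 0 := by rw [hcdef]; exact neg_ne_zero.mpr hβ
  have hdualmem : ∀ x : K, x ∈ dualLat σ 𝔄 ↔ ∀ y ∈ 𝔄, ∃ m : ℤ, x * y + σ (x * y) = (m : K) :=
    fun x => Iff.rfl
  -- c • I ⊆ 𝔄∨
  have hsub : ∀ y ∈ I, c * y ∈ dualLat σ 𝔄 := by
    intro y hy
    rw [hdualmem]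
    intro a ha
    obtain ⟨m, hm⟩ := hint ((0:K), y) (Submodule.mem_prod.mpr ⟨𝔄.zero_mem, hy⟩)
      ((a, (0:K)) : K × K) (Submodule.mem_prod.mpr ⟨ha, I.zero_mem⟩)
    refine ⟨m, ?_⟩
    have h := hE 0 y a 0
    rw [hm] at h
    have harg : β * (y * a) = -(c * y * a) := by rw [hcdef]; ring
    rw [harg, map_neg] at h
    simp only [zero_mul, mul_zero, map_zero, add_zero, zero_add, zero_sub, neg_neg,
      neg_add_rev, sub_neg_eq_add] at h
    push_cast at h
    linear_combination -h
  -- 𝔄∨ ⊆ c • I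
  have hsup : ∀ z ∈ dualLat σ 𝔄, ∃ y ∈ I, z = c * y := by
    intro z hz
    rw [hdualmem] at hz
    -- the vector u = (0, z/c) pairs integrally with Λ
    have huint : ∀ w ∈ 𝔄.prod I, ∃ m : ℤ, E ((0:K), z / c) w = (m : ℚ) := by
      intro w hw
      obtain ⟨m, hm⟩ := hz w.1 (Submodule.mem_prod.mp hw).1
      refine ⟨m, ?_⟩
      have h := hE 0 (z / c) w.1 w.2
      have harg : β * (z / c * w.1) = -(z * w.1) := by
        rw [hcdef]; field_simp [hβ]
      rw [harg, map_neg] at h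
      simp only [zero_mul, mul_zero, map_zero, add_zero, zero_add, zero_sub] at h
      have : ((E ((0:K), z / c) (w.1, w.2) : ℚ) : K) = ((m : ℤ) : K) := by
        rw [h, ← hm]; ring
      exact_mod_cast this
    choose Ml hMl using fun i => huint (b (Sum.inl i) : K × K) (b (Sum.inl i)).2
    choose Mr hMr using fun i => huint (b (Sum.inr i) : K × K) (b (Sum.inr i)).2
    obtain ⟨wl, hwl⟩ : ∃ wl : 𝔄.prod I,
        wl = (∑ i : Fin 2, Mr i • b (Sum.inl i)) - (∑ i : Fin 2, Ml i • b (Sum.inr i)) := ⟨_, rfl⟩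
    have hv1 : ∀ (n : ℤ) (x v : K × K), E (n • x) v = n * E x v := by
      intro n x v
      rw [map_zsmul E n x, LinearMap.smul_apply, zsmul_eq_mul]
    have hv2 : ∀ (x y v : K × K), E (x + y) v = E x v + E y v := by
      intro x y v; rw [map_add, LinearMap.add_apply]
    have hv3 : ∀ (x y v : K × K), E (x - y) v = E x v - E y v := by
      intro x y v; rw [map_sub, LinearMap.sub_apply]
    have hcoe : ((wl : K × K))
        = (Mr 0) • (b (Sum.inl 0) : K × K) + (Mr 1) • (b (Sum.inl 1) : K × K)
          - ((Ml 0) • (b (Sum.inr 0) : K × K) + (Ml 1) • (b (Sum.inr 1) : K × K)) := by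
      rw [hwl, Fin.sum_univ_two, Fin.sum_univ_two]
      push_cast
      rfl
    have hbasis : ∀ j, E ((wl : K × K)) ((b j : K × K)) = E ((0:K), z / c) ((b j : K × K)) := by
      intro j
      rw [hcoe]
      rw [hv3, hv2, hv2, hv1, hv1, hv1, hv1]
      rcases j with j | j
      · rw [hb1, hb1, hEb 0 j, hEb 1 j, hMl j]
        fin_cases j <;> norm_num
      · rw [hb2, hb2, hEb' 0 j, hEb' 1 j, hMr j]
        fin_cases j <;> norm_num
    have hv0 : ∀ v ∈ 𝔄.prod I, E ((wl : K × K)) v = E ((0:K), z / c) v := by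
      intro v hv
      have hsp := hspanZ v hv
      refine Submodule.span_induction (p := fun v _ => E ((wl : K × K)) v = E ((0:K), z / c) v)
        ?_ ?_ ?_ ?_ hsp
      · rintro - ⟨j, rfl⟩; exact hbasis j
      · simp
      · intro x y _ _ hx hy; rw [map_add, map_add, hx, hy]
      · intro n x _ hx
        rw [map_zsmul (E ((wl : K × K))) n x, map_zsmul (E ((0:K), z / c)) n x, hx]
    have hall : ∀ v : K × K, E ((wl : K × K)) v = E ((0:K), z / c) v := by
      intro v
      refine Submodule.span_induction (p := fun v _ => E ((wl : K × K)) v = E ((0:K), z / c) v)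
        ?_ ?_ ?_ ?_ (hspanΛ v)
      · intro y hy; exact hv0 y hy
      · simp
      · intro x y _ _ hx hy; rw [map_add, map_add, hx, hy]
      · intro q x _ hx; rw [map_smul, map_smul, hx]
    obtain ⟨s, t, hst⟩ : ∃ s t : K, ((wl : K × K)) = (s, t) := ⟨_, _, rfl⟩
    have key : ∀ y1 y2 : K, (β * (s * y2) + σ (β * (s * y2))) - (β * (t * y1) + σ (β * (t * y1)))
        = (β * (0 * y2) + σ (β * (0 * y2))) - (β * ((z / c) * y1) + σ (β * ((z / c) * y1))) := by
      intro y1 y2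
      rw [← hE, ← hE]
      have h := hall ((y1, y2) : K × K)
      rw [hst] at h
      exact congrArg (fun r : ℚ => (r : K)) h
    have e1 := key 0 1
    simp only [mul_zero, zero_mul, mul_one, map_zero, add_zero, sub_zero, zero_add, zero_sub] at e1
    have e2 := key 0 sqrtD
    simp only [mul_zero, zero_mul, map_zero, add_zero, sub_zero, zero_add, zero_sub] at e2
    have e2' : (β * s) * sqrtD + σ ((β * s) * sqrtD) = 0 := by
      rw [mul_assoc]; exact e2
    have hs0 : s = 0 := by
      have h := htr0 (β * s) e1 e2'
      exact (mul_eq_zero.mp h).resolve_left hβ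
    have e3 := key 1 0
    simp only [mul_zero, zero_mul, mul_one, map_zero, add_zero, sub_zero, zero_add, zero_sub] at e3
    have e4 := key sqrtD 0
    simp only [mul_zero, zero_mul, map_zero, add_zero, sub_zero, zero_add, zero_sub] at e4
    have f1 : β * (t - z / c) + σ (β * (t - z / c)) = 0 := by
      rw [mul_sub, map_sub]
      linear_combination -e3
    have f2 : (β * (t - z / c)) * sqrtD + σ ((β * (t - z / c)) * sqrtD) = 0 := by
      rw [show (β * (t - z / c)) * sqrtD = β * (t * sqrtD) - β * ((z / c) * sqrtD) from by ring,
        map_sub]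
      linear_combination -e4
    have ht : t = z / c := by
      have h := htr0 (β * (t - z / c)) f1 f2
      have h2 := (mul_eq_zero.mp h).resolve_left hβ
      exact sub_eq_zero.mp h2
    have humem : (((0:K), z / c) : K × K) ∈ 𝔄.prod I := by
      have heq : ((wl : K × K)) = (((0:K), z / c) : K × K) := by
        rw [hst, hs0, ht]
      rw [← heq]
      exact SetLike.coe_mem wl
    refine ⟨z / c, (Submodule.mem_prod.mp humem).2, ?_⟩
    field_simp
  -- the isomorphism
  refine ⟨LinearMap.prodMap LinearMap.id (LinearMap.mulLeft ℚ c), ?_, ?_, ?_, ?_, ?_⟩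
  · -- BijOn
    refine ⟨?_, ?_, ?_⟩
    · intro v hv
      have hv' : v ∈ 𝔄.prod I := hv
      rw [SetLike.mem_coe]
      show LinearMap.prodMap LinearMap.id (LinearMap.mulLeft ℚ c) v ∈ 𝔄.prod (dualLat σ 𝔄)
      exact Submodule.mem_prod.mpr ⟨(Submodule.mem_prod.mp hv').1,
        hsub v.2 (Submodule.mem_prod.mp hv').2⟩
    · intro v _ w _ h
      have h' : ((v.1, c * v.2) : K × K) = ((w.1, c * w.2) : K × K) := h
      rw [Prod.mk.injEq] at h'
      exact Prod.ext h'.1 (mul_left_cancel₀ hc h'.2)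
    · intro w hw
      have hw' : w ∈ 𝔄.prod (dualLat σ 𝔄) := hw
      obtain ⟨y, hyI, hy⟩ := hsup w.2 (Submodule.mem_prod.mp hw').2
      refine ⟨((w.1, y) : K × K), ?_, ?_⟩
      · show ((w.1, y) : K × K) ∈ 𝔄.prod I
        exact Submodule.mem_prod.mpr ⟨(Submodule.mem_prod.mp hw').1, hyI⟩
      · show ((w.1, c * y) : K × K) = w
        rw [← hy]
  · -- O_D-equivariance
    intro x _ v
    show ((x * v.1, c * (x * v.2)) : K × K) = (x * v.1, x * (c * v.2))
    rw [Prod.mk.injEq]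
    exact ⟨rfl, by ring⟩
  · -- compatibility with the trace pairing
    intro v _ w _
    show traceFormK σ (v.1, c * v.2) (w.1, c * w.2) = ((E v w : ℚ) : K)
    rw [traceFormK]
    have harg : w.1 * (c * v.2) - v.1 * (c * w.2)
        = β * (v.1 * w.2) - β * (v.2 * w.1) := by rw [hcdef]; ring
    rw [harg, map_sub]
    have h := hE v.1 v.2 w.1 w.2
    rw [show ((v.1, v.2) : K × K) = v from rfl, show ((w.1, w.2) : K × K) = w from rfl] at h
    rw [h]
    ring
  · -- fixes 𝔄 ⊕ 0 pointwise
    intro x _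
    show ((x, c * 0) : K × K) = (x, 0)
    rw [mul_zero]
  · -- carries 0 ⊕ I onto 0 ⊕ 𝔄∨
    ext w
    constructor
    · rintro ⟨v, ⟨hv1, hv2⟩, rfl⟩
      exact ⟨hv1, hsub v.2 hv2⟩
    · rintro ⟨hw1, hw2⟩
      obtain ⟨y, hyI, hy⟩ := hsup w.2 hw2
      refine ⟨((0, y) : K × K), ⟨rfl, hyI⟩, ?_⟩
      show ((0, c * y) : K × K) = w
      rw [← hy, ← hw1]
end
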